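/- arXiv:2210.04389 — 5 statements merged into one kernel-verified Lean document; each statement's English description precedes it below -/
import Mathlib

section
/- In the observed-data mediation model with binary treatment and binary mediator, for any nuisance estimates (ã, f̃, μ̃) as specified and any d, d' ∈ {0,1}, the bias of the one-step estimator admits the exact three-term second-order decomposition: E[ψ̃_{d,d'}(O)] − φ(d,d') = E[ Σ_{m∈{0,1}} (1 − a(d'|X)/ã(d'|X))·(f̃(m|X,d')/f(m|X,d') − 1)·μ̃(X,d,m)·f(m|X,d') ] + E[ Σ_{m∈{0,1}} (1 − (f(m|X,d)/f̃(m|X,d))·(f̃(m|X,d')/f(m|X,d')))·(μ̃(X,d,m) − μ(X,d,m))·f(m|X,d') ] + E[ Σ_{m∈{0,1}} (1 − a(d|X)/ã(d|X))·(f̃(m|X,d')/f̃(m|X,d))·(μ̃(X,d,m) − μ(X,d,m))·f(m|X,d) ]. -/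
open MeasureTheory ProbabilityTheory
open scoped ENNReal

/-- Observed-data mediation model with binary treatment `D` and binary mediator `M`.
`a d x` is `P(D = d | X = x)`, `f m x d` is `P(M = m | X = x, D = d)` and
`u x d m` is `E[Y | X = x, D = d, M = m]`. -/
structure MediationModel (Ω 𝓧 : Type*) [MeasurableSpace Ω] [MeasurableSpace 𝓧]
    (c Cbar ρlo ρhi R : ℝ) where
  P : Measure Ω
  isProb : IsProbabilityMeasure P
  X : Ω → 𝓧
  D : Ω → Fin 2
  M : Ω → Fin 2
  Y : Ω → ℝ
  hX : Measurable X
  hD : Measurable D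
  hM : Measurable M
  hY : Integrable Y P
  hc : 0 < c
  hcC : c ≤ Cbar
  hC : Cbar < 1
  hρ1 : 0 < ρlo
  hρ2 : ρlo ≤ ρhi
  hρ3 : ρhi < 1
  hR : 0 < R
  a : Fin 2 → 𝓧 → ℝ
  f : Fin 2 → 𝓧 → Fin 2 → ℝ
  u : 𝓧 → Fin 2 → Fin 2 → ℝ
  ha_meas : ∀ d, Measurable (a d)
  hf_meas : ∀ m d, Measurable fun x => f m x d
  hu_meas : ∀ d m, Measurable fun x => u x d m
  ha_eq : ∀ d, (fun ω => a d (X ω)) =ᵐ[P]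
    P[(fun ω => if D ω = d then (1 : ℝ) else 0) | MeasurableSpace.comap X inferInstance]
  hf_eq : ∀ m, (fun ω => f m (X ω) (D ω)) =ᵐ[P]
    P[(fun ω => if M ω = m then (1 : ℝ) else 0) |
      MeasurableSpace.comap (fun ω => (X ω, D ω)) inferInstance]
  hu_eq : (fun ω => u (X ω) (D ω) (M ω)) =ᵐ[P]
    P[Y | MeasurableSpace.comap (fun ω => (X ω, D ω, M ω)) inferInstance]
  ha_bdd : ∀ d, ∀ᵐ ω ∂P, a d (X ω) ∈ Set.Ioo c Cbar
  hf_bdd : ∀ m d, ∀ᵐ ω ∂P, f m (X ω) d ∈ Set.Icc ρlo ρhi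
  hu_bdd : ∀ d m, ∀ᵐ ω ∂P, |u (X ω) d m| ≤ R

/-- A triple of nuisance estimates `(ã, f̃, μ̃)` satisfying the stated bounds
(almost everywhere under the law `μX` of the covariates) and the normalizations
`ã(0|x) = 1 - ã(1|x)`, `f̃(0|x,d) = 1 - f̃(1|x,d)`. -/
structure Nuisance (𝓧 : Type*) [MeasurableSpace 𝓧] (μX : Measure 𝓧)
    (c Cbar ρlo ρhi R : ℝ) where
  a : Fin 2 → 𝓧 → ℝ
  f : Fin 2 → 𝓧 → Fin 2 → ℝ
  u : 𝓧 → Fin 2 → Fin 2 → ℝ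
  ha_meas : ∀ d, Measurable (a d)
  hf_meas : ∀ m d, Measurable fun x => f m x d
  hu_meas : ∀ d m, Measurable fun x => u x d m
  ha_bdd : ∀ d, ∀ᵐ x ∂μX, a d x ∈ Set.Ioo c Cbar
  hf_bdd : ∀ m d, ∀ᵐ x ∂μX, f m x d ∈ Set.Icc ρlo ρhi
  hu_bdd : ∀ d m, ∀ᵐ x ∂μX, |u x d m| ≤ R
  ha_norm : ∀ x, a 0 x = 1 - a 1 x
  hf_norm : ∀ x d, f 0 x d = 1 - f 1 x d

variable {Ω 𝓧 : Type*} [MeasurableSpace Ω] [MeasurableSpace 𝓧]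
  {c Cbar ρlo ρhi R : ℝ}

/-- The mediation functional `φ(d,d') = E[Σ_m μ(X,d,m) f(m|X,d')]`. -/
noncomputable def MediationModel.phi (Mdl : MediationModel Ω 𝓧 c Cbar ρlo ρhi R)
    (d d' : Fin 2) : ℝ :=
  ∫ ω, (∑ m : Fin 2, Mdl.u (Mdl.X ω) d m * Mdl.f m (Mdl.X ω) d') ∂Mdl.P

/-- The uncentered efficient influence function value `ψ_{d,d'}` built from generic
nuisance functions `(aF, fF, uF)`. -/
noncomputable def psiFun (X : Ω → 𝓧) (D M : Ω → Fin 2) (Y : Ω → ℝ)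
    (aF : Fin 2 → 𝓧 → ℝ) (fF : Fin 2 → 𝓧 → Fin 2 → ℝ) (uF : 𝓧 → Fin 2 → Fin 2 → ℝ)
    (d d' : Fin 2) (ω : Ω) : ℝ :=
  (if D ω = d then (1 : ℝ) else 0) * fF (M ω) (X ω) d' / (aF d (X ω) * fF (M ω) (X ω) d)
      * (Y ω - uF (X ω) d (M ω))
    + (1 - (if D ω = d' then (1 : ℝ) else 0) / aF d' (X ω))
      * (∑ m : Fin 2, uF (X ω) d m * fF m (X ω) d')
    + (if D ω = d' then (1 : ℝ) else 0) / aF d' (X ω) * uF (X ω) d (M ω)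

/-- `ψ̃_{d,d'}` : the estimated influence function. -/
noncomputable def MediationModel.psiT (Mdl : MediationModel Ω 𝓧 c Cbar ρlo ρhi R)
    (nu : Nuisance 𝓧 (Measure.map Mdl.X Mdl.P) c Cbar ρlo ρhi R) (d d' : Fin 2) : Ω → ℝ :=
  psiFun Mdl.X Mdl.D Mdl.M Mdl.Y nu.a nu.f nu.u d d'

/-- `ψ_{d,d'}` : influence function with the true nuisances. -/
noncomputable def MediationModel.psi (Mdl : MediationModel Ω 𝓧 c Cbar ρlo ρhi R)
    (d d' : Fin 2) : Ω → ℝ :=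
  psiFun Mdl.X Mdl.D Mdl.M Mdl.Y Mdl.a Mdl.f Mdl.u d d'

/-- L2 error of the propensity estimate. -/
noncomputable def MediationModel.rA (Mdl : MediationModel Ω 𝓧 c Cbar ρlo ρhi R)
    (nu : Nuisance 𝓧 (Measure.map Mdl.X Mdl.P) c Cbar ρlo ρhi R) (d : Fin 2) : ℝ :=
  Real.sqrt (∫ ω, (nu.a d (Mdl.X ω) - Mdl.a d (Mdl.X ω)) ^ 2 ∂Mdl.P)

/-- L2 error of the mediator-density estimate, under the conditional law given `D = 0`. -/
noncomputable def MediationModel.rF (Mdl : MediationModel Ω 𝓧 c Cbar ρlo ρhi R)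
    (nu : Nuisance 𝓧 (Measure.map Mdl.X Mdl.P) c Cbar ρlo ρhi R) (d : Fin 2) : ℝ :=
  Real.sqrt (∫ ω, (nu.f (Mdl.M ω) (Mdl.X ω) d - Mdl.f (Mdl.M ω) (Mdl.X ω) d) ^ 2
    ∂(Mdl.P[|{ω | Mdl.D ω = 0}]))

/-- L2 error of the outcome-regression estimate, under the conditional law given `D = 0`. -/
noncomputable def MediationModel.rU (Mdl : MediationModel Ω 𝓧 c Cbar ρlo ρhi R)
    (nu : Nuisance 𝓧 (Measure.map Mdl.X Mdl.P) c Cbar ρlo ρhi R) (d : Fin 2) : ℝ :=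
  Real.sqrt (∫ ω, (nu.u (Mdl.X ω) d (Mdl.M ω) - Mdl.u (Mdl.X ω) d (Mdl.M ω)) ^ 2
    ∂(Mdl.P[|{ω | Mdl.D ω = 0}]))
section AuxLemmas

open MeasureTheory

private lemma abs_ite_le {p : Prop} [Decidable p] : |if p then (1:ℝ) else 0| ≤ 1 := by
  split <;> norm_num

private lemma abs_mul_le' {x y X Y : ℝ} (hx : |x| ≤ X) (hy : |y| ≤ Y) : |x * y| ≤ X * Y := by
  rw [abs_mul]
  exact mul_le_mul hx hy (abs_nonneg _) ((abs_nonneg x).trans hx)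

private lemma abs_div_le' {num den lo hi : ℝ} (h1 : 0 < lo) (h2 : lo ≤ den) (h3 : |num| ≤ hi) :
    |num / den| ≤ hi / lo := by
  rw [abs_div, abs_of_pos (h1.trans_le h2)]
  exact div_le_div₀ ((abs_nonneg _).trans h3) h3 h1 h2

private lemma abs_sub_le' {x y X Y : ℝ} (hx : |x| ≤ X) (hy : |y| ≤ Y) : |x - y| ≤ X + Y := by
  have h1 := abs_le.mp hx; have h2 := abs_le.mp hy
  exact abs_le.mpr ⟨by linarith [h1.1, h2.2], by linarith [h1.2, h2.1]⟩

private lemma abs_one_sub_le' {t T : ℝ} (ht : |t| ≤ T) : |1 - t| ≤ 1 + T := by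
  have := abs_le.mp ht; exact abs_le.mpr ⟨by linarith, by linarith⟩

private lemma abs_sum2_le {g : Fin 2 → ℝ} {T : ℝ} (h : ∀ m, |g m| ≤ T) :
    |∑ m : Fin 2, g m| ≤ T + T := by
  rw [Fin.sum_univ_two]
  exact (abs_add_le _ _).trans (add_le_add (h 0) (h 1))

private lemma pull_condexp {Ω : Type*} [m0 : MeasurableSpace Ω] {P : Measure Ω}
    [IsProbabilityMeasure P] {m : MeasurableSpace Ω} (hm : m ≤ m0)
    {w g v : Ω → ℝ} (hw : StronglyMeasurable[m] w) {C : ℝ}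
    (hwb : ∀ᵐ ω ∂P, |w ω| ≤ C) (hg : Integrable g P)
    (hv : v =ᵐ[P] P[g|m]) :
    ∫ ω, w ω * g ω ∂P = ∫ ω, w ω * v ω ∂P := by
  have hwm : @AEStronglyMeasurable Ω ℝ _ m0 m0 w P := (hw.mono hm).aestronglyMeasurable
  have hfg : Integrable (w * g) P :=
    hg.bdd_mul hwm (hwb.mono fun ω h => by simpa only [Real.norm_eq_abs] using h)
  calc ∫ ω, w ω * g ω ∂P = ∫ ω, (P[w * g|m]) ω ∂P := (integral_condExp hm).symm
    _ = ∫ ω, w ω * v ω ∂P := by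
        refine integral_congr_ae ?_
        refine (condExp_mul_of_stronglyMeasurable_left hw hfg hg).trans ?_
        filter_upwards [hv] with ω h; simp [h]

set_option maxHeartbeats 1000000 in
private lemma keyAlg (d d' : Fin 2) (a at' : Fin 2 → ℝ) (f ft : Fin 2 → Fin 2 → ℝ)
    (u : Fin 2 → Fin 2 → ℝ) (ut : Fin 2 → ℝ)
    (hat : ∀ δ, at' δ ≠ 0) (hf : ∀ m δ, f m δ ≠ 0) (hft : ∀ m δ, ft m δ ≠ 0)
    (ha1 : a 0 + a 1 = 1) :
    (∑ δ : Fin 2, (∑ m : Fin 2,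
        (if δ = d then (1:ℝ) else 0) * ft m d' / (at' d * ft m d) * (u δ m - ut m) * f m δ) * a δ)
    + (∑ δ : Fin 2, (1 - (if δ = d' then (1:ℝ) else 0) / at' d') * (∑ m : Fin 2, ut m * ft m d') * a δ)
    + (∑ δ : Fin 2, (∑ m : Fin 2, (if δ = d' then (1:ℝ) else 0) / at' d' * ut m * f m δ) * a δ)
    - (∑ m : Fin 2, u d m * f m d')
    = (∑ m : Fin 2, (1 - a d' / at' d') * (ft m d' / f m d' - 1) * ut m * f m d')
    + (∑ m : Fin 2, (1 - f m d / ft m d * (ft m d' / f m d')) * (ut m - u d m) * f m d')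
    + (∑ m : Fin 2, (1 - a d / at' d) * (ft m d' / ft m d) * (ut m - u d m) * f m d) := by
  have h1 : a 1 = 1 - a 0 := by linarith
  have e0 := hat 0; have e1 := hat 1
  have p00 := hf 0 0; have p01 := hf 0 1; have p10 := hf 1 0; have p11 := hf 1 1
  have q00 := hft 0 0; have q01 := hft 0 1; have q10 := hft 1 0; have q11 := hft 1 1
  fin_cases d <;> fin_cases d' <;>
    · simp only [Fin.sum_univ_two, Fin.isValue, Fin.zero_eta, Fin.mk_one, h1]
      norm_num
      field_simp
      ring

end AuxLemmas
/-- exact three-term second-order bias decomposition, Proposition A.1: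
for any nuisance estimates and any `d, d' ∈ {0,1}`,
`E[ψ̃_{d,d'}(O)] − φ(d,d')` equals the sum of the three second-order terms. -/
theorem bias_three_term_decomposition
    (Mdl : MediationModel Ω 𝓧 c Cbar ρlo ρhi R)
    (nu : Nuisance 𝓧 (Measure.map Mdl.X Mdl.P) c Cbar ρlo ρhi R)
    (d d' : Fin 2) :
    (∫ ω, Mdl.psiT nu d d' ω ∂Mdl.P) - Mdl.phi d d' =
      (∫ ω, (∑ m : Fin 2,
          (1 - Mdl.a d' (Mdl.X ω) / nu.a d' (Mdl.X ω))
            * (nu.f m (Mdl.X ω) d' / Mdl.f m (Mdl.X ω) d' - 1)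
            * nu.u (Mdl.X ω) d m * Mdl.f m (Mdl.X ω) d') ∂Mdl.P)
      + (∫ ω, (∑ m : Fin 2,
          (1 - Mdl.f m (Mdl.X ω) d / nu.f m (Mdl.X ω) d
              * (nu.f m (Mdl.X ω) d' / Mdl.f m (Mdl.X ω) d'))
            * (nu.u (Mdl.X ω) d m - Mdl.u (Mdl.X ω) d m) * Mdl.f m (Mdl.X ω) d') ∂Mdl.P)
      + (∫ ω, (∑ m : Fin 2,
          (1 - Mdl.a d (Mdl.X ω) / nu.a d (Mdl.X ω))
            * (nu.f m (Mdl.X ω) d' / nu.f m (Mdl.X ω) d)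
            * (nu.u (Mdl.X ω) d m - Mdl.u (Mdl.X ω) d m) * Mdl.f m (Mdl.X ω) d) ∂Mdl.P) := by
  classical
  obtain ⟨P, hPr, X, D, M, Y, hX, hD, hM, hY, hc0, hcC, hC1, hr0, hr12, hr1, hR0,
    a, f, u, ha_m, hf_m, hu_m, ha_eq, hf_eq, hu_eq, ha_bdd, hf_bdd, hu_bdd⟩ := Mdl
  obtain ⟨na, nf, nU, hna_m, hnf_m, hnU_m, hna_b, hnf_b, hnU_b, -, -⟩ := nu
  haveI : IsProbabilityMeasure P := hPr
  simp only [MediationModel.psiT, psiFun, MediationModel.phi]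
  have fin2 : ∀ m : Fin 2, m = 0 ∨ m = 1 := by decide
  have hXD : Measurable fun ω => (X ω, D ω) := hX.prodMk hD
  have hXM : Measurable fun ω => (X ω, M ω) := hX.prodMk hM
  have hXDM : Measurable fun ω => (X ω, D ω, M ω) := hX.prodMk (hD.prodMk hM)
  have hXmX : @Measurable Ω 𝓧 (MeasurableSpace.comap X inferInstance) _ X :=
    measurable_iff_comap_le.mpr le_rfl
  have hXDm : @Measurable Ω (𝓧 × Fin 2)
      (MeasurableSpace.comap (fun ω => (X ω, D ω)) inferInstance) _ (fun ω => (X ω, D ω)) :=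
    measurable_iff_comap_le.mpr le_rfl
  have hXDMm : @Measurable Ω (𝓧 × Fin 2 × Fin 2)
      (MeasurableSpace.comap (fun ω => (X ω, D ω, M ω)) inferInstance) _
      (fun ω => (X ω, D ω, M ω)) := measurable_iff_comap_le.mpr le_rfl
  have unc2 : ∀ (k : 𝓧 → Fin 2 → ℝ), (∀ δ, Measurable fun x => k x δ) →
      Measurable fun p : 𝓧 × Fin 2 => k p.1 p.2 := by
    intro k hk
    have hrw : (fun p : 𝓧 × Fin 2 => k p.1 p.2)
        = fun p => ∑ δ : Fin 2, (if p.2 = δ then (1:ℝ) else 0) * k p.1 δ := by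
      funext p
      rcases fin2 p.2 with h | h <;> simp [h, Fin.sum_univ_two]
    rw [hrw]
    exact Finset.measurable_sum _ fun δ _ =>
      (Measurable.ite (measurable_snd (measurableSet_singleton δ)) measurable_const
        measurable_const).mul ((hk δ).comp measurable_fst)
  have unc3 : ∀ (k : 𝓧 → Fin 2 → Fin 2 → ℝ), (∀ δ m, Measurable fun x => k x δ m) →
      Measurable fun p : 𝓧 × Fin 2 × Fin 2 => k p.1 p.2.1 p.2.2 := by
    intro k hk
    have hrw : (fun p : 𝓧 × Fin 2 × Fin 2 => k p.1 p.2.1 p.2.2)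
        = fun p => ∑ δ : Fin 2, ∑ m : Fin 2,
            ((if p.2.1 = δ then (1:ℝ) else 0) * (if p.2.2 = m then (1:ℝ) else 0)) * k p.1 δ m := by
      funext p
      rcases fin2 p.2.1 with h1 | h1 <;> rcases fin2 p.2.2 with h2 | h2 <;>
        simp [h1, h2, Fin.sum_univ_two]
    rw [hrw]
    refine Finset.measurable_sum _ fun δ _ => Finset.measurable_sum _ fun m _ => ?_
    exact ((Measurable.ite ((measurable_fst.comp measurable_snd) (measurableSet_singleton δ))
        measurable_const measurable_const).mul
      (Measurable.ite ((measurable_snd.comp measurable_snd) (measurableSet_singleton m))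
        measurable_const measurable_const)).mul ((hk δ m).comp measurable_fst)
  have intbdd : ∀ (h : Ω → ℝ) (C : ℝ), AEStronglyMeasurable h P →
      (∀ᵐ ω ∂P, |h ω| ≤ C) → Integrable h P := fun h C hm hb =>
    Integrable.mono' (integrable_const C) hm (hb.mono fun ω h => by simpa only [Real.norm_eq_abs] using h)
  have indInt : ∀ (T : Ω → Fin 2), Measurable T → ∀ δ : Fin 2,
      Integrable (fun ω => if T ω = δ then (1:ℝ) else 0) P := fun T hT δ =>
    intbdd _ 1 (Measurable.aestronglyMeasurable
        (Measurable.ite (hT (measurableSet_singleton δ)) measurable_const measurable_const))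
      (Filter.Eventually.of_forall fun ω => abs_ite_le)
  -- L1 : integrate out D
  have L1 : ∀ (g : 𝓧 → Fin 2 → ℝ) (C : ℝ), (∀ δ, Measurable fun x => g x δ) →
      (∀ᵐ ω ∂P, ∀ δ, |g (X ω) δ| ≤ C) →
      ∫ ω, g (X ω) (D ω) ∂P = ∫ ω, (∑ δ : Fin 2, g (X ω) δ * a δ (X ω)) ∂P := by
    intro g C hgm hgb
    have hgae : ∀ δ : Fin 2, ∀ᵐ ω ∂P, |g (X ω) δ| ≤ C := fun δ => hgb.mono fun ω h => h δ
    have habd : ∀ δ : Fin 2, ∀ᵐ ω ∂P, |a δ (X ω)| ≤ 1 := fun δ =>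
      (ha_bdd δ).mono fun ω h => abs_le.mpr ⟨by linarith [h.1, hc0], by linarith [h.2, hC1]⟩
    calc ∫ ω, g (X ω) (D ω) ∂P
        = ∫ ω, ∑ δ : Fin 2, g (X ω) δ * (if D ω = δ then (1:ℝ) else 0) ∂P := by
          refine integral_congr_ae (Filter.Eventually.of_forall fun ω => ?_)
          rcases fin2 (D ω) with h | h <;> simp [h, Fin.sum_univ_two]
      _ = ∑ δ : Fin 2, ∫ ω, g (X ω) δ * (if D ω = δ then (1:ℝ) else 0) ∂P :=
          integral_finset_sum _ fun δ _ =>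
            (indInt D hD δ).bdd_mul ((hgm δ).comp hX).aestronglyMeasurable
              ((hgae δ).mono fun ω h => by simpa only [Real.norm_eq_abs] using h)
      _ = ∑ δ : Fin 2, ∫ ω, g (X ω) δ * a δ (X ω) ∂P := Finset.sum_congr rfl fun δ _ =>
          pull_condexp hX.comap_le ((hgm δ).comp hXmX).stronglyMeasurable (hgae δ)
            (indInt D hD δ) (ha_eq δ)
      _ = _ := (integral_finset_sum _ fun δ _ => intbdd _ (C * 1)
            (((hgm δ).comp hX).mul ((ha_m δ).comp hX)).aestronglyMeasurable
            (by filter_upwards [hgae δ, habd δ] with ω h1 h2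
                exact abs_mul_le' h1 h2)).symm
  -- L2 : integrate out M
  have L2 : ∀ (g : 𝓧 → Fin 2 → Fin 2 → ℝ) (C : ℝ), (∀ δ m, Measurable fun x => g x δ m) →
      (∀ᵐ ω ∂P, ∀ δ m, |g (X ω) δ m| ≤ C) →
      ∫ ω, g (X ω) (D ω) (M ω) ∂P
        = ∫ ω, (∑ m : Fin 2, g (X ω) (D ω) m * f m (X ω) (D ω)) ∂P := by
    intro g C hgm hgb
    have hgae : ∀ m : Fin 2, ∀ᵐ ω ∂P, |g (X ω) (D ω) m| ≤ C := fun m =>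
      hgb.mono fun ω h => h _ m
    have hWm : ∀ m : Fin 2, Measurable fun ω => g (X ω) (D ω) m := fun m =>
      (unc2 (fun x δ => g x δ m) fun δ => hgm δ m).comp hXD
    have hfbd : ∀ m : Fin 2, ∀ᵐ ω ∂P, |f m (X ω) (D ω)| ≤ 1 := by
      intro m
      filter_upwards [ae_all_iff.mpr (hf_bdd m)] with ω h
      have h2 := h (D ω)
      exact abs_le.mpr ⟨by linarith [h2.1, hr0], by linarith [h2.2, hr1]⟩
    have hfWm : ∀ m : Fin 2, Measurable fun ω => f m (X ω) (D ω) := fun m =>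
      (unc2 (fun x δ => f m x δ) fun δ => hf_m m δ).comp hXD
    calc ∫ ω, g (X ω) (D ω) (M ω) ∂P
        = ∫ ω, ∑ m : Fin 2, g (X ω) (D ω) m * (if M ω = m then (1:ℝ) else 0) ∂P := by
          refine integral_congr_ae (Filter.Eventually.of_forall fun ω => ?_)
          rcases fin2 (M ω) with h | h <;> simp [h, Fin.sum_univ_two]
      _ = ∑ m : Fin 2, ∫ ω, g (X ω) (D ω) m * (if M ω = m then (1:ℝ) else 0) ∂P :=
          integral_finset_sum _ fun m _ =>
            (indInt M hM m).bdd_mul (hWm m).aestronglyMeasurable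
              ((hgae m).mono fun ω h => by simpa only [Real.norm_eq_abs] using h)
      _ = ∑ m : Fin 2, ∫ ω, g (X ω) (D ω) m * f m (X ω) (D ω) ∂P := Finset.sum_congr rfl
          fun m _ => pull_condexp hXD.comap_le
            ((unc2 (fun x δ => g x δ m) fun δ => hgm δ m).comp hXDm).stronglyMeasurable
            (hgae m) (indInt M hM m) (hf_eq m)
      _ = _ := (integral_finset_sum _ fun m _ => intbdd _ (C * 1)
            ((hWm m).mul (hfWm m)).aestronglyMeasurable
            (by filter_upwards [hgae m, hfbd m] with ω h1 h2
                exact abs_mul_le' h1 h2)).symm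
  -- L3 : replace Y by the outcome regression
  have L3 : ∀ (g : 𝓧 → Fin 2 → Fin 2 → ℝ) (C : ℝ), (∀ δ m, Measurable fun x => g x δ m) →
      (∀ᵐ ω ∂P, ∀ δ m, |g (X ω) δ m| ≤ C) →
      ∫ ω, g (X ω) (D ω) (M ω) * Y ω ∂P
        = ∫ ω, g (X ω) (D ω) (M ω) * u (X ω) (D ω) (M ω) ∂P := fun g C hgm hgb =>
    pull_condexp hXDM.comap_le ((unc3 g hgm).comp hXDMm).stronglyMeasurable
      (hgb.mono fun ω h => h _ _) hY hu_eq
  -- the propensities sum to one a.e.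
  have hsum : ∀ᵐ ω ∂P, a 0 (X ω) + a 1 (X ω) = 1 := by
    have hadd := condExp_add (μ := P) (m := MeasurableSpace.comap X inferInstance)
      (indInt D hD 0) (indInt D hD 1)
    have hone : ((fun ω => if D ω = 0 then (1:ℝ) else 0)
        + fun ω => if D ω = 1 then (1:ℝ) else 0) = fun _ => (1:ℝ) := by
      funext ω
      rcases fin2 (D ω) with h | h <;> simp [Pi.add_apply, h]
    rw [hone, condExp_const hX.comap_le] at hadd
    filter_upwards [ha_eq 0, ha_eq 1, hadd] with ω e0 e1 ea
    rw [e0, e1]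
    simpa [Pi.add_apply] using ea.symm
  -- the good event
  have hGood : ∀ᵐ ω ∂P, ((∀ δ, a δ (X ω) ∈ Set.Ioo c Cbar) ∧ (∀ δ, na δ (X ω) ∈ Set.Ioo c Cbar) ∧
      (∀ m δ, f m (X ω) δ ∈ Set.Icc ρlo ρhi) ∧ (∀ m δ, nf m (X ω) δ ∈ Set.Icc ρlo ρhi) ∧
      (∀ δ m, |u (X ω) δ m| ≤ R) ∧ (∀ δ m, |nU (X ω) δ m| ≤ R)
      ∧ (a 0 (X ω) + a 1 (X ω) = 1)) := by
    have t1 : ∀ᵐ ω ∂P, ∀ δ, a δ (X ω) ∈ Set.Ioo c Cbar := ae_all_iff.mpr ha_bdd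
    have t2 : ∀ᵐ ω ∂P, ∀ δ, na δ (X ω) ∈ Set.Ioo c Cbar := ae_all_iff.mpr fun δ =>
      (ae_map_iff hX.aemeasurable ((hna_m δ) measurableSet_Ioo)).mp (hna_b δ)
    have t3 : ∀ᵐ ω ∂P, ∀ m δ, f m (X ω) δ ∈ Set.Icc ρlo ρhi :=
      ae_all_iff.mpr fun m => ae_all_iff.mpr fun δ => hf_bdd m δ
    have t4 : ∀ᵐ ω ∂P, ∀ m δ, nf m (X ω) δ ∈ Set.Icc ρlo ρhi :=
      ae_all_iff.mpr fun m => ae_all_iff.mpr fun δ =>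
        (ae_map_iff hX.aemeasurable ((hnf_m m δ) measurableSet_Icc)).mp (hnf_b m δ)
    have t5 : ∀ᵐ ω ∂P, ∀ δ m, |u (X ω) δ m| ≤ R :=
      ae_all_iff.mpr fun δ => ae_all_iff.mpr fun m => hu_bdd δ m
    have t6 : ∀ᵐ ω ∂P, ∀ δ m, |nU (X ω) δ m| ≤ R :=
      ae_all_iff.mpr fun δ => ae_all_iff.mpr fun m =>
        (ae_map_iff hX.aemeasurable (measurableSet_le (hnU_m δ m).abs measurable_const)).mp
          (hnU_b δ m)
    filter_upwards [t1, t2, t3, t4, t5, t6, hsum] with ω h1 h2 h3 h4 h5 h6 h7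
    exact ⟨h1, h2, h3, h4, h5, h6, h7⟩
  -- derived pointwise bounds
  have tools : ∀ ω, ((∀ δ, a δ (X ω) ∈ Set.Ioo c Cbar) ∧ (∀ δ, na δ (X ω) ∈ Set.Ioo c Cbar) ∧
      (∀ m δ, f m (X ω) δ ∈ Set.Icc ρlo ρhi) ∧ (∀ m δ, nf m (X ω) δ ∈ Set.Icc ρlo ρhi) ∧
      (∀ δ m, |u (X ω) δ m| ≤ R) ∧ (∀ δ m, |nU (X ω) δ m| ≤ R)
      ∧ (a 0 (X ω) + a 1 (X ω) = 1)) →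
      ((∀ δ, |a δ (X ω)| ≤ 1) ∧ (∀ δ, c ≤ na δ (X ω)) ∧ (∀ m δ, |f m (X ω) δ| ≤ 1) ∧
        (∀ m δ, |nf m (X ω) δ| ≤ ρhi) ∧ (∀ m δ, ρlo ≤ f m (X ω) δ) ∧
        (∀ m δ, ρlo ≤ nf m (X ω) δ) ∧ (∀ m δ, |nf m (X ω) δ| ≤ 1) ∧
        (∀ m δ, |f m (X ω) δ| ≤ ρhi)) := by
    intro ω h
    obtain ⟨h1, h2, h3, h4, h5, h6, h7⟩ := h
    refine ⟨fun δ => abs_le.mpr ⟨by linarith [(h1 δ).1, hc0], by linarith [(h1 δ).2, hC1]⟩,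
      fun δ => (h2 δ).1.le,
      fun m δ => abs_le.mpr ⟨by linarith [(h3 m δ).1, hr0], by linarith [(h3 m δ).2, hr1]⟩,
      fun m δ => abs_le.mpr ⟨by linarith [(h4 m δ).1, hr0, hr12], (h4 m δ).2⟩,
      fun m δ => (h3 m δ).1, fun m δ => (h4 m δ).1,
      fun m δ => abs_le.mpr ⟨by linarith [(h4 m δ).1, hr0], by linarith [(h4 m δ).2, hr1]⟩,
      fun m δ => abs_le.mpr ⟨by linarith [(h3 m δ).1, hr0, hr12], (h3 m δ).2⟩⟩
  -- bound for the gA weight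
  have gA_bd : ∀ᵐ ω ∂P, ∀ δ m : Fin 2,
      |(if δ = d then (1:ℝ) else 0) * nf m (X ω) d' / (na d (X ω) * nf m (X ω) d)|
        ≤ 1 * ρhi / (c * ρlo) := by
    filter_upwards [hGood] with ω h
    intro δ m
    obtain ⟨-, hnac, -, hnfρ, -, hnflo, -, -⟩ := tools ω h
    exact abs_div_le' (mul_pos hc0 hr0)
      (mul_le_mul (hnac d) (hnflo m d) hr0.le (hc0.le.trans (hnac d)))
      (abs_mul_le' abs_ite_le (hnfρ m d'))
  have gC_bd : ∀ᵐ ω ∂P, ∀ δ m : Fin 2,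
      |(if δ = d' then (1:ℝ) else 0) / na d' (X ω) * nU (X ω) d m| ≤ 1 / c * R := by
    filter_upwards [hGood] with ω h
    intro δ m
    obtain ⟨-, hnac, -, -, -, -, -, -⟩ := tools ω h
    exact abs_mul_le' (abs_div_le' hc0 (hnac d') abs_ite_le) (h.2.2.2.2.2.1 d m)
  have gB_bd : ∀ᵐ ω ∂P, ∀ δ : Fin 2,
      |(1 - (if δ = d' then (1:ℝ) else 0) / na d' (X ω))
        * ∑ m : Fin 2, nU (X ω) d m * nf m (X ω) d'| ≤ (1 + 1 / c) * (R * 1 + R * 1) := by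
    filter_upwards [hGood] with ω h
    intro δ
    obtain ⟨-, hnac, -, -, -, -, hnf1, -⟩ := tools ω h
    exact abs_mul_le' (abs_one_sub_le' (abs_div_le' hc0 (hnac d') abs_ite_le))
      (abs_sum2_le fun m => abs_mul_le' (h.2.2.2.2.2.1 d m) (hnf1 m d'))
  have g2_bd : ∀ᵐ ω ∂P, ∀ δ m : Fin 2,
      |(if δ = d then (1:ℝ) else 0) * nf m (X ω) d' / (na d (X ω) * nf m (X ω) d)
        * (u (X ω) δ m - nU (X ω) d m)| ≤ 1 * ρhi / (c * ρlo) * (R + R) := by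
    filter_upwards [hGood, gA_bd] with ω h hg
    intro δ m
    exact abs_mul_le' (hg δ m) (abs_sub_le' (h.2.2.2.2.1 δ m) (h.2.2.2.2.2.1 d m))
  have g3_bd : ∀ᵐ ω ∂P, ∀ δ : Fin 2,
      |∑ m : Fin 2, (if δ = d then (1:ℝ) else 0) * nf m (X ω) d' / (na d (X ω) * nf m (X ω) d)
        * (u (X ω) δ m - nU (X ω) d m) * f m (X ω) δ|
        ≤ 1 * ρhi / (c * ρlo) * (R + R) * 1 + 1 * ρhi / (c * ρlo) * (R + R) * 1 := by
    filter_upwards [hGood, g2_bd] with ω h hg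
    intro δ
    obtain ⟨-, -, hf1, -, -, -, -, -⟩ := tools ω h
    exact abs_sum2_le fun m => abs_mul_le' (hg δ m) (hf1 m δ)
  have gC2_bd : ∀ᵐ ω ∂P, ∀ δ : Fin 2,
      |∑ m : Fin 2, (if δ = d' then (1:ℝ) else 0) / na d' (X ω) * nU (X ω) d m * f m (X ω) δ|
        ≤ 1 / c * R * 1 + 1 / c * R * 1 := by
    filter_upwards [hGood, gC_bd] with ω h hg
    intro δ
    obtain ⟨-, -, hf1, -, -, -, -, -⟩ := tools ω h
    exact abs_sum2_le fun m => abs_mul_le' (hg δ m) (hf1 m δ)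
  -- measurability of composed maps
  have m_nfM : ∀ δ0 : Fin 2, Measurable fun ω => nf (M ω) (X ω) δ0 := fun δ0 =>
    (unc2 (fun x m => nf m x δ0) fun m => hnf_m m δ0).comp hXM
  have m_nUM : Measurable fun ω => nU (X ω) d (M ω) :=
    (unc2 (fun x m => nU x d m) fun m => hnU_m d m).comp hXM
  have m_uDM : Measurable fun ω => u (X ω) (D ω) (M ω) := (unc3 u hu_m).comp hXDM
  have m_w1 : Measurable fun ω =>
      (if D ω = d then (1:ℝ) else 0) * nf (M ω) (X ω) d' / (na d (X ω) * nf (M ω) (X ω) d) :=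
    ((Measurable.ite (hD (measurableSet_singleton d)) measurable_const measurable_const).mul
      (m_nfM d')).div (((hna_m d).comp hX).mul (m_nfM d))
  have hw1b : ∀ᵐ ω ∂P,
      |(if D ω = d then (1:ℝ) else 0) * nf (M ω) (X ω) d' / (na d (X ω) * nf (M ω) (X ω) d)|
        ≤ 1 * ρhi / (c * ρlo) := gA_bd.mono fun ω h => h (D ω) (M ω)
  -- integrabilities around the first term
  have int_nU : Integrable (fun ω => nU (X ω) d (M ω)) P :=
    intbdd _ R m_nUM.aestronglyMeasurable
      (by filter_upwards [hGood] with ω h; exact h.2.2.2.2.2.1 d (M ω))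
  have int_u : Integrable (fun ω => u (X ω) (D ω) (M ω)) P :=
    intbdd _ R m_uDM.aestronglyMeasurable
      (by filter_upwards [hGood] with ω h; exact h.2.2.2.2.1 (D ω) (M ω))
  have int_w1Y : Integrable (fun ω =>
      (if D ω = d then (1:ℝ) else 0) * nf (M ω) (X ω) d' / (na d (X ω) * nf (M ω) (X ω) d)
        * Y ω) P :=
    hY.bdd_mul m_w1.aestronglyMeasurable (hw1b.mono fun ω h => by simpa only [Real.norm_eq_abs] using h)
  have int_w1u : Integrable (fun ω =>
      (if D ω = d then (1:ℝ) else 0) * nf (M ω) (X ω) d' / (na d (X ω) * nf (M ω) (X ω) d)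
        * nU (X ω) d (M ω)) P :=
    int_nU.bdd_mul m_w1.aestronglyMeasurable (hw1b.mono fun ω h => by simpa only [Real.norm_eq_abs] using h)
  have int_w1uDM : Integrable (fun ω =>
      (if D ω = d then (1:ℝ) else 0) * nf (M ω) (X ω) d' / (na d (X ω) * nf (M ω) (X ω) d)
        * u (X ω) (D ω) (M ω)) P :=
    int_u.bdd_mul m_w1.aestronglyMeasurable (hw1b.mono fun ω h => by simpa only [Real.norm_eq_abs] using h)
  have int_Ysub : Integrable (fun ω => Y ω - nU (X ω) d (M ω)) P := hY.sub int_nU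
  have int_TA : Integrable (fun ω =>
      (if D ω = d then (1:ℝ) else 0) * nf (M ω) (X ω) d' / (na d (X ω) * nf (M ω) (X ω) d)
        * (Y ω - nU (X ω) d (M ω))) P :=
    int_Ysub.bdd_mul m_w1.aestronglyMeasurable (hw1b.mono fun ω h => by simpa only [Real.norm_eq_abs] using h)
  have int_TB : Integrable (fun ω =>
      (1 - (if D ω = d' then (1:ℝ) else 0) / na d' (X ω))
        * ∑ m : Fin 2, nU (X ω) d m * nf m (X ω) d') P :=
    intbdd _ ((1 + 1 / c) * (R * 1 + R * 1))
      ((measurable_const.sub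
        ((Measurable.ite (hD (measurableSet_singleton d')) measurable_const
          measurable_const).div ((hna_m d').comp hX))).mul
        (Finset.measurable_sum _ fun m _ =>
          ((hnU_m d m).comp hX).mul ((hnf_m m d').comp hX))).aestronglyMeasurable
      (gB_bd.mono fun ω h => h (D ω))
  have int_TC : Integrable (fun ω =>
      (if D ω = d' then (1:ℝ) else 0) / na d' (X ω) * nU (X ω) d (M ω)) P :=
    intbdd _ (1 / c * R)
      (((Measurable.ite (hD (measurableSet_singleton d')) measurable_const
        measurable_const).div ((hna_m d').comp hX)).mul m_nUM).aestronglyMeasurable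
      (gC_bd.mono fun ω h => h (D ω) (M ω))
  -- reduction for the first term
  have hA : ∫ ω, (if D ω = d then (1:ℝ) else 0) * nf (M ω) (X ω) d'
        / (na d (X ω) * nf (M ω) (X ω) d) * (Y ω - nU (X ω) d (M ω)) ∂P
      = ∫ ω, (∑ δ : Fin 2, (∑ m : Fin 2, (if δ = d then (1:ℝ) else 0) * nf m (X ω) d'
          / (na d (X ω) * nf m (X ω) d) * (u (X ω) δ m - nU (X ω) d m) * f m (X ω) δ)
            * a δ (X ω)) ∂P := by
    have e1 : ∫ ω, (if D ω = d then (1:ℝ) else 0) * nf (M ω) (X ω) d'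
          / (na d (X ω) * nf (M ω) (X ω) d) * (Y ω - nU (X ω) d (M ω)) ∂P
        = (∫ ω, (if D ω = d then (1:ℝ) else 0) * nf (M ω) (X ω) d'
            / (na d (X ω) * nf (M ω) (X ω) d) * Y ω ∂P)
          - ∫ ω, (if D ω = d then (1:ℝ) else 0) * nf (M ω) (X ω) d'
            / (na d (X ω) * nf (M ω) (X ω) d) * nU (X ω) d (M ω) ∂P := by
      rw [← integral_sub int_w1Y int_w1u]
      exact integral_congr_ae (Filter.Eventually.of_forall fun ω => by ring)
    have e2 : ∫ ω, (if D ω = d then (1:ℝ) else 0) * nf (M ω) (X ω) d'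
          / (na d (X ω) * nf (M ω) (X ω) d) * Y ω ∂P
        = ∫ ω, (if D ω = d then (1:ℝ) else 0) * nf (M ω) (X ω) d'
          / (na d (X ω) * nf (M ω) (X ω) d) * u (X ω) (D ω) (M ω) ∂P :=
      L3 (fun x δ m => (if δ = d then (1:ℝ) else 0) * nf m x d' / (na d x * nf m x d))
        (1 * ρhi / (c * ρlo))
        (fun δ m => (measurable_const.mul (hnf_m m d')).div ((hna_m d).mul (hnf_m m d)))
        gA_bd
    have e3 : (∫ ω, (if D ω = d then (1:ℝ) else 0) * nf (M ω) (X ω) d'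
            / (na d (X ω) * nf (M ω) (X ω) d) * u (X ω) (D ω) (M ω) ∂P)
          - (∫ ω, (if D ω = d then (1:ℝ) else 0) * nf (M ω) (X ω) d'
            / (na d (X ω) * nf (M ω) (X ω) d) * nU (X ω) d (M ω) ∂P)
        = ∫ ω, (if D ω = d then (1:ℝ) else 0) * nf (M ω) (X ω) d'
            / (na d (X ω) * nf (M ω) (X ω) d)
              * (u (X ω) (D ω) (M ω) - nU (X ω) d (M ω)) ∂P := by
      rw [← integral_sub int_w1uDM int_w1u]
      exact integral_congr_ae (Filter.Eventually.of_forall fun ω => by ring)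
    have e4 : ∫ ω, (if D ω = d then (1:ℝ) else 0) * nf (M ω) (X ω) d'
          / (na d (X ω) * nf (M ω) (X ω) d)
            * (u (X ω) (D ω) (M ω) - nU (X ω) d (M ω)) ∂P
        = ∫ ω, (∑ m : Fin 2, (if D ω = d then (1:ℝ) else 0) * nf m (X ω) d'
            / (na d (X ω) * nf m (X ω) d) * (u (X ω) (D ω) m - nU (X ω) d m)
              * f m (X ω) (D ω)) ∂P :=
      L2 (fun x δ m => (if δ = d then (1:ℝ) else 0) * nf m x d' / (na d x * nf m x d)
          * (u x δ m - nU x d m)) (1 * ρhi / (c * ρlo) * (R + R))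
        (fun δ m => ((measurable_const.mul (hnf_m m d')).div
          ((hna_m d).mul (hnf_m m d))).mul ((hu_m δ m).sub (hnU_m d m)))
        g2_bd
    have e5 : ∫ ω, (∑ m : Fin 2, (if D ω = d then (1:ℝ) else 0) * nf m (X ω) d'
          / (na d (X ω) * nf m (X ω) d) * (u (X ω) (D ω) m - nU (X ω) d m)
            * f m (X ω) (D ω)) ∂P
        = ∫ ω, (∑ δ : Fin 2, (∑ m : Fin 2, (if δ = d then (1:ℝ) else 0) * nf m (X ω) d'
            / (na d (X ω) * nf m (X ω) d) * (u (X ω) δ m - nU (X ω) d m) * f m (X ω) δ)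
              * a δ (X ω)) ∂P :=
      L1 (fun x δ => ∑ m : Fin 2, (if δ = d then (1:ℝ) else 0) * nf m x d'
          / (na d x * nf m x d) * (u x δ m - nU x d m) * f m x δ)
        (1 * ρhi / (c * ρlo) * (R + R) * 1 + 1 * ρhi / (c * ρlo) * (R + R) * 1)
        (fun δ => Finset.measurable_sum _ fun m _ =>
          (((measurable_const.mul (hnf_m m d')).div ((hna_m d).mul (hnf_m m d))).mul
            ((hu_m δ m).sub (hnU_m d m))).mul (hf_m m δ))
        g3_bd
    rw [e1, e2, e3, e4, e5]
  -- reduction for the second term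
  have hB : ∫ ω, (1 - (if D ω = d' then (1:ℝ) else 0) / na d' (X ω))
        * (∑ m : Fin 2, nU (X ω) d m * nf m (X ω) d') ∂P
      = ∫ ω, (∑ δ : Fin 2, (1 - (if δ = d' then (1:ℝ) else 0) / na d' (X ω))
          * (∑ m : Fin 2, nU (X ω) d m * nf m (X ω) d') * a δ (X ω)) ∂P :=
    L1 (fun x δ => (1 - (if δ = d' then (1:ℝ) else 0) / na d' x)
        * ∑ m : Fin 2, nU x d m * nf m x d') ((1 + 1 / c) * (R * 1 + R * 1))
      (fun δ => (measurable_const.sub (measurable_const.div (hna_m d'))).mul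
        (Finset.measurable_sum _ fun m _ => (hnU_m d m).mul (hnf_m m d')))
      gB_bd
  -- reduction for the third term
  have hC : ∫ ω, (if D ω = d' then (1:ℝ) else 0) / na d' (X ω) * nU (X ω) d (M ω) ∂P
      = ∫ ω, (∑ δ : Fin 2, (∑ m : Fin 2, (if δ = d' then (1:ℝ) else 0) / na d' (X ω)
          * nU (X ω) d m * f m (X ω) δ) * a δ (X ω)) ∂P := by
    have e1 : ∫ ω, (if D ω = d' then (1:ℝ) else 0) / na d' (X ω) * nU (X ω) d (M ω) ∂P
        = ∫ ω, (∑ m : Fin 2, (if D ω = d' then (1:ℝ) else 0) / na d' (X ω) * nU (X ω) d m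
            * f m (X ω) (D ω)) ∂P :=
      L2 (fun x δ m => (if δ = d' then (1:ℝ) else 0) / na d' x * nU x d m) (1 / c * R)
        (fun δ m => (measurable_const.div (hna_m d')).mul (hnU_m d m))
        gC_bd
    have e2 : ∫ ω, (∑ m : Fin 2, (if D ω = d' then (1:ℝ) else 0) / na d' (X ω) * nU (X ω) d m
          * f m (X ω) (D ω)) ∂P
        = ∫ ω, (∑ δ : Fin 2, (∑ m : Fin 2, (if δ = d' then (1:ℝ) else 0) / na d' (X ω)
            * nU (X ω) d m * f m (X ω) δ) * a δ (X ω)) ∂P :=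
      L1 (fun x δ => ∑ m : Fin 2, (if δ = d' then (1:ℝ) else 0) / na d' x * nU x d m
          * f m x δ) (1 / c * R * 1 + 1 / c * R * 1)
        (fun δ => Finset.measurable_sum _ fun m _ =>
          ((measurable_const.div (hna_m d')).mul (hnU_m d m)).mul (hf_m m δ))
        gC2_bd
    rw [e1, e2]
  -- split the ψ̃ integral
  have int_TAB : Integrable (fun ω =>
      (if D ω = d then (1:ℝ) else 0) * nf (M ω) (X ω) d' / (na d (X ω) * nf (M ω) (X ω) d)
        * (Y ω - nU (X ω) d (M ω))
      + (1 - (if D ω = d' then (1:ℝ) else 0) / na d' (X ω))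
        * ∑ m : Fin 2, nU (X ω) d m * nf m (X ω) d') P := int_TA.add int_TB
  have split : ∫ ω, ((if D ω = d then (1:ℝ) else 0) * nf (M ω) (X ω) d'
        / (na d (X ω) * nf (M ω) (X ω) d) * (Y ω - nU (X ω) d (M ω))
      + (1 - (if D ω = d' then (1:ℝ) else 0) / na d' (X ω))
        * (∑ m : Fin 2, nU (X ω) d m * nf m (X ω) d')
      + (if D ω = d' then (1:ℝ) else 0) / na d' (X ω) * nU (X ω) d (M ω)) ∂P
      = (∫ ω, (if D ω = d then (1:ℝ) else 0) * nf (M ω) (X ω) d'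
          / (na d (X ω) * nf (M ω) (X ω) d) * (Y ω - nU (X ω) d (M ω)) ∂P)
        + (∫ ω, (1 - (if D ω = d' then (1:ℝ) else 0) / na d' (X ω))
          * (∑ m : Fin 2, nU (X ω) d m * nf m (X ω) d') ∂P)
        + ∫ ω, (if D ω = d' then (1:ℝ) else 0) / na d' (X ω) * nU (X ω) d (M ω) ∂P := by
    rw [integral_add int_TAB int_TC, integral_add int_TA int_TB]
  -- integrability of the reduced integrands
  have intA' : Integrable (fun ω => ∑ δ : Fin 2, (∑ m : Fin 2,
      (if δ = d then (1:ℝ) else 0) * nf m (X ω) d' / (na d (X ω) * nf m (X ω) d)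
        * (u (X ω) δ m - nU (X ω) d m) * f m (X ω) δ) * a δ (X ω)) P := by
    refine intbdd _ ((1 * ρhi / (c * ρlo) * (R + R) * 1 + 1 * ρhi / (c * ρlo) * (R + R) * 1) * 1
        + (1 * ρhi / (c * ρlo) * (R + R) * 1 + 1 * ρhi / (c * ρlo) * (R + R) * 1) * 1)
      (Finset.measurable_sum _ fun δ _ => Measurable.mul (Finset.measurable_sum _ fun m _ =>
        (((measurable_const.mul ((hnf_m m d').comp hX)).div
          (((hna_m d).comp hX).mul ((hnf_m m d).comp hX))).mul
          (((hu_m δ m).comp hX).sub ((hnU_m d m).comp hX))).mul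
          ((hf_m m δ).comp hX)) ((ha_m δ).comp hX)).aestronglyMeasurable ?_
    filter_upwards [hGood, g3_bd] with ω h hg
    obtain ⟨ha1, -, -, -, -, -, -, -⟩ := tools ω h
    exact abs_sum2_le fun δ => abs_mul_le' (hg δ) (ha1 δ)
  have intB' : Integrable (fun ω => ∑ δ : Fin 2,
      (1 - (if δ = d' then (1:ℝ) else 0) / na d' (X ω))
        * (∑ m : Fin 2, nU (X ω) d m * nf m (X ω) d') * a δ (X ω)) P := by
    refine intbdd _ ((1 + 1 / c) * (R * 1 + R * 1) * 1 + (1 + 1 / c) * (R * 1 + R * 1) * 1)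
      (Finset.measurable_sum _ fun δ _ => Measurable.mul (Measurable.mul
        (measurable_const.sub (measurable_const.div ((hna_m d').comp hX)))
        (Finset.measurable_sum _ fun m _ =>
          ((hnU_m d m).comp hX).mul ((hnf_m m d').comp hX)))
        ((ha_m δ).comp hX)).aestronglyMeasurable ?_
    filter_upwards [hGood, gB_bd] with ω h hg
    obtain ⟨ha1, -, -, -, -, -, -, -⟩ := tools ω h
    exact abs_sum2_le fun δ => abs_mul_le' (hg δ) (ha1 δ)
  have intC' : Integrable (fun ω => ∑ δ : Fin 2, (∑ m : Fin 2,
      (if δ = d' then (1:ℝ) else 0) / na d' (X ω) * nU (X ω) d m * f m (X ω) δ)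
        * a δ (X ω)) P := by
    refine intbdd _ ((1 / c * R * 1 + 1 / c * R * 1) * 1 + (1 / c * R * 1 + 1 / c * R * 1) * 1)
      (Finset.measurable_sum _ fun δ _ => Measurable.mul (Finset.measurable_sum _ fun m _ =>
        ((measurable_const.div ((hna_m d').comp hX)).mul ((hnU_m d m).comp hX)).mul
          ((hf_m m δ).comp hX)) ((ha_m δ).comp hX)).aestronglyMeasurable ?_
    filter_upwards [hGood, gC2_bd] with ω h hg
    obtain ⟨ha1, -, -, -, -, -, -, -⟩ := tools ω h
    exact abs_sum2_le fun δ => abs_mul_le' (hg δ) (ha1 δ)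
  have intphi : Integrable (fun ω => ∑ m : Fin 2, u (X ω) d m * f m (X ω) d') P := by
    refine intbdd _ (R * 1 + R * 1)
      (Finset.measurable_sum _ fun m _ =>
        ((hu_m d m).comp hX).mul ((hf_m m d').comp hX)).aestronglyMeasurable ?_
    filter_upwards [hGood] with ω h
    obtain ⟨-, -, hf1, -, -, -, -, -⟩ := tools ω h
    exact abs_sum2_le fun m => abs_mul_le' (h.2.2.2.2.1 d m) (hf1 m d')
  have intR1 : Integrable (fun ω => ∑ m : Fin 2,
      (1 - a d' (X ω) / na d' (X ω)) * (nf m (X ω) d' / f m (X ω) d' - 1)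
        * nU (X ω) d m * f m (X ω) d') P := by
    refine intbdd _ ((1 + 1 / c) * (ρhi / ρlo + 1) * R * 1
        + (1 + 1 / c) * (ρhi / ρlo + 1) * R * 1)
      (Finset.measurable_sum _ fun m _ =>
        (((measurable_const.sub (((ha_m d').comp hX).div ((hna_m d').comp hX))).mul
          ((((hnf_m m d').comp hX).div ((hf_m m d').comp hX)).sub measurable_const)).mul
          ((hnU_m d m).comp hX)).mul ((hf_m m d').comp hX)).aestronglyMeasurable ?_
    filter_upwards [hGood] with ω h
    obtain ⟨ha1, hnac, hf1, hnfρ, hflo, -, -, -⟩ := tools ω h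
    refine abs_sum2_le fun m => abs_mul_le' (abs_mul_le' (abs_mul_le'
      (abs_one_sub_le' (abs_div_le' hc0 (hnac d') (ha1 d')))
      (abs_sub_le' (abs_div_le' hr0 (hflo m d') (hnfρ m d')) (by norm_num)))
      (h.2.2.2.2.2.1 d m)) (hf1 m d')
  have intR2 : Integrable (fun ω => ∑ m : Fin 2,
      (1 - f m (X ω) d / nf m (X ω) d * (nf m (X ω) d' / f m (X ω) d'))
        * (nU (X ω) d m - u (X ω) d m) * f m (X ω) d') P := by
    refine intbdd _ ((1 + ρhi / ρlo * (ρhi / ρlo)) * (R + R) * 1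
        + (1 + ρhi / ρlo * (ρhi / ρlo)) * (R + R) * 1)
      (Finset.measurable_sum _ fun m _ =>
        ((measurable_const.sub ((((hf_m m d).comp hX).div ((hnf_m m d).comp hX)).mul
          (((hnf_m m d').comp hX).div ((hf_m m d').comp hX)))).mul
          (((hnU_m d m).comp hX).sub ((hu_m d m).comp hX))).mul
          ((hf_m m d').comp hX)).aestronglyMeasurable ?_
    filter_upwards [hGood] with ω h
    obtain ⟨-, -, hf1, hnfρ, hflo, hnflo, -, hfρ⟩ := tools ω h
    refine abs_sum2_le fun m => abs_mul_le' (abs_mul_le'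
      (abs_one_sub_le' (abs_mul_le' (abs_div_le' hr0 (hnflo m d) (hfρ m d))
        (abs_div_le' hr0 (hflo m d') (hnfρ m d'))))
      (abs_sub_le' (h.2.2.2.2.2.1 d m) (h.2.2.2.2.1 d m))) (hf1 m d')
  have intR3 : Integrable (fun ω => ∑ m : Fin 2,
      (1 - a d (X ω) / na d (X ω)) * (nf m (X ω) d' / nf m (X ω) d)
        * (nU (X ω) d m - u (X ω) d m) * f m (X ω) d) P := by
    refine intbdd _ ((1 + 1 / c) * (ρhi / ρlo) * (R + R) * 1
        + (1 + 1 / c) * (ρhi / ρlo) * (R + R) * 1)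
      (Finset.measurable_sum _ fun m _ =>
        (((measurable_const.sub (((ha_m d).comp hX).div ((hna_m d).comp hX))).mul
          (((hnf_m m d').comp hX).div ((hnf_m m d).comp hX))).mul
          (((hnU_m d m).comp hX).sub ((hu_m d m).comp hX))).mul
          ((hf_m m d).comp hX)).aestronglyMeasurable ?_
    filter_upwards [hGood] with ω h
    obtain ⟨ha1, hnac, hf1, hnfρ, -, hnflo, -, -⟩ := tools ω h
    refine abs_sum2_le fun m => abs_mul_le' (abs_mul_le' (abs_mul_le'
      (abs_one_sub_le' (abs_div_le' hc0 (hnac d) (ha1 d)))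
      (abs_div_le' hr0 (hnflo m d) (hnfρ m d')))
      (abs_sub_le' (h.2.2.2.2.2.1 d m) (h.2.2.2.2.1 d m))) (hf1 m d)
  -- combine
  rw [split, hA, hB, hC]
  have intAB' : Integrable (fun ω =>
      (∑ δ : Fin 2, (∑ m : Fin 2,
        (if δ = d then (1:ℝ) else 0) * nf m (X ω) d' / (na d (X ω) * nf m (X ω) d)
          * (u (X ω) δ m - nU (X ω) d m) * f m (X ω) δ) * a δ (X ω))
      + ∑ δ : Fin 2, (1 - (if δ = d' then (1:ℝ) else 0) / na d' (X ω))
          * (∑ m : Fin 2, nU (X ω) d m * nf m (X ω) d') * a δ (X ω)) P := intA'.add intB'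
  have intABC' : Integrable (fun ω =>
      ((∑ δ : Fin 2, (∑ m : Fin 2,
        (if δ = d then (1:ℝ) else 0) * nf m (X ω) d' / (na d (X ω) * nf m (X ω) d)
          * (u (X ω) δ m - nU (X ω) d m) * f m (X ω) δ) * a δ (X ω))
      + ∑ δ : Fin 2, (1 - (if δ = d' then (1:ℝ) else 0) / na d' (X ω))
          * (∑ m : Fin 2, nU (X ω) d m * nf m (X ω) d') * a δ (X ω))
      + ∑ δ : Fin 2, (∑ m : Fin 2, (if δ = d' then (1:ℝ) else 0) / na d' (X ω)
          * nU (X ω) d m * f m (X ω) δ) * a δ (X ω)) P := intAB'.add intC'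
  have intR12 : Integrable (fun ω =>
      (∑ m : Fin 2, (1 - a d' (X ω) / na d' (X ω)) * (nf m (X ω) d' / f m (X ω) d' - 1)
        * nU (X ω) d m * f m (X ω) d')
      + ∑ m : Fin 2, (1 - f m (X ω) d / nf m (X ω) d * (nf m (X ω) d' / f m (X ω) d'))
        * (nU (X ω) d m - u (X ω) d m) * f m (X ω) d') P := intR1.add intR2
  have comb : ∫ ω, ((((∑ δ : Fin 2, (∑ m : Fin 2,
        (if δ = d then (1:ℝ) else 0) * nf m (X ω) d' / (na d (X ω) * nf m (X ω) d)
          * (u (X ω) δ m - nU (X ω) d m) * f m (X ω) δ) * a δ (X ω))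
      + ∑ δ : Fin 2, (1 - (if δ = d' then (1:ℝ) else 0) / na d' (X ω))
          * (∑ m : Fin 2, nU (X ω) d m * nf m (X ω) d') * a δ (X ω))
      + ∑ δ : Fin 2, (∑ m : Fin 2, (if δ = d' then (1:ℝ) else 0) / na d' (X ω)
          * nU (X ω) d m * f m (X ω) δ) * a δ (X ω))
      - ∑ m : Fin 2, u (X ω) d m * f m (X ω) d') ∂P
      = (∫ ω, (∑ δ : Fin 2, (∑ m : Fin 2,
          (if δ = d then (1:ℝ) else 0) * nf m (X ω) d' / (na d (X ω) * nf m (X ω) d)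
            * (u (X ω) δ m - nU (X ω) d m) * f m (X ω) δ) * a δ (X ω)) ∂P
        + ∫ ω, (∑ δ : Fin 2, (1 - (if δ = d' then (1:ℝ) else 0) / na d' (X ω))
            * (∑ m : Fin 2, nU (X ω) d m * nf m (X ω) d') * a δ (X ω)) ∂P
        + ∫ ω, (∑ δ : Fin 2, (∑ m : Fin 2, (if δ = d' then (1:ℝ) else 0) / na d' (X ω)
            * nU (X ω) d m * f m (X ω) δ) * a δ (X ω)) ∂P)
        - ∫ ω, (∑ m : Fin 2, u (X ω) d m * f m (X ω) d') ∂P := by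
    rw [integral_sub intABC' intphi, integral_add intAB' intC', integral_add intA' intB']
  have combR : ∫ ω, ((∑ m : Fin 2, (1 - a d' (X ω) / na d' (X ω))
        * (nf m (X ω) d' / f m (X ω) d' - 1) * nU (X ω) d m * f m (X ω) d')
      + (∑ m : Fin 2, (1 - f m (X ω) d / nf m (X ω) d * (nf m (X ω) d' / f m (X ω) d'))
        * (nU (X ω) d m - u (X ω) d m) * f m (X ω) d')
      + ∑ m : Fin 2, (1 - a d (X ω) / na d (X ω)) * (nf m (X ω) d' / nf m (X ω) d)
        * (nU (X ω) d m - u (X ω) d m) * f m (X ω) d) ∂P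
      = (∫ ω, (∑ m : Fin 2, (1 - a d' (X ω) / na d' (X ω))
          * (nf m (X ω) d' / f m (X ω) d' - 1) * nU (X ω) d m * f m (X ω) d') ∂P)
        + (∫ ω, (∑ m : Fin 2, (1 - f m (X ω) d / nf m (X ω) d
            * (nf m (X ω) d' / f m (X ω) d'))
          * (nU (X ω) d m - u (X ω) d m) * f m (X ω) d') ∂P)
        + ∫ ω, (∑ m : Fin 2, (1 - a d (X ω) / na d (X ω)) * (nf m (X ω) d' / nf m (X ω) d)
          * (nU (X ω) d m - u (X ω) d m) * f m (X ω) d) ∂P := by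
    rw [integral_add intR12 intR3, integral_add intR1 intR2]
  rw [← comb, ← combR]
  refine integral_congr_ae ?_
  filter_upwards [hGood] with ω h
  exact keyAlg d d' (fun δ => a δ (X ω)) (fun δ => na δ (X ω)) (fun m δ => f m (X ω) δ)
    (fun m δ => nf m (X ω) δ) (fun δ m => u (X ω) δ m) (fun m => nU (X ω) d m)
    (fun δ => (hc0.trans (h.2.1 δ).1).ne')
    (fun m δ => (hr0.trans_le (h.2.2.1 m δ).1).ne')
    (fun m δ => (hr0.trans_le (h.2.2.2.1 m δ).1).ne')
    h.2.2.2.2.2.2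
end

section
/- Multiple robustness: in the observed-data mediation model with binary treatment and binary mediator, if at least two of the three equalities ã = a, f̃ = f, μ̃ = μ hold (each meaning equality for all d, m ∈ {0,1} and almost every x), then E[ψ̃_{d,d'}(O)] = φ(d,d') for all d, d' ∈ {0,1}; in particular, with the true nuisance functions, E[ψ_{d,d'}(O)] = φ(d,d'). -/
open MeasureTheory ProbabilityTheory
open scoped ENNReal

variable {Ω 𝓧 : Type*} [MeasurableSpace Ω] [MeasurableSpace 𝓧]
  {c Cbar ρlo ρhi R : ℝ}

section Aux
variable {Ω : Type*} {mΩ : MeasurableSpace Ω} {P : Measure Ω}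

/-- a.e. bounded -/
def AEBdd (P : Measure Ω) (f : Ω → ℝ) : Prop := ∃ K, ∀ᵐ ω ∂P, |f ω| ≤ K

lemma AEBdd.of_bound {f : Ω → ℝ} {K : ℝ} (h : ∀ᵐ ω ∂P, |f ω| ≤ K) : AEBdd P f := ⟨K, h⟩

lemma AEBdd.const (r : ℝ) : AEBdd P (fun _ => r) := ⟨|r|, Filter.Eventually.of_forall fun _ => le_rfl⟩

lemma AEBdd.mul {f g : Ω → ℝ} (hf : AEBdd P f) (hg : AEBdd P g) : AEBdd P (fun ω => f ω * g ω) := by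
  obtain ⟨K1, h1⟩ := hf; obtain ⟨K2, h2⟩ := hg
  refine ⟨|K1| * |K2|, ?_⟩
  filter_upwards [h1, h2] with ω h1 h2
  rw [abs_mul]
  exact mul_le_mul (h1.trans (le_abs_self _)) (h2.trans (le_abs_self _)) (abs_nonneg _) (abs_nonneg _)

lemma AEBdd.add {f g : Ω → ℝ} (hf : AEBdd P f) (hg : AEBdd P g) : AEBdd P (fun ω => f ω + g ω) := by
  obtain ⟨K1, h1⟩ := hf; obtain ⟨K2, h2⟩ := hg
  exact ⟨K1 + K2, by filter_upwards [h1, h2] with ω h1 h2; exact (abs_add_le _ _).trans (by linarith)⟩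

lemma AEBdd.sub {f g : Ω → ℝ} (hf : AEBdd P f) (hg : AEBdd P g) : AEBdd P (fun ω => f ω - g ω) := by
  simpa [sub_eq_add_neg] using hf.add (⟨hg.choose, by filter_upwards [hg.choose_spec] with ω h; simpa using h⟩ : AEBdd P (fun ω => - g ω))

lemma AEBdd.div {f g : Ω → ℝ} {δ : ℝ} (hf : AEBdd P f) (hδ : 0 < δ)
    (hg : ∀ᵐ ω ∂P, δ ≤ |g ω|) : AEBdd P (fun ω => f ω / g ω) := by
  obtain ⟨K, h1⟩ := hf
  refine ⟨|K| / δ, ?_⟩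
  filter_upwards [h1, hg] with ω h1 h2
  rw [abs_div]
  exact div_le_div₀ (abs_nonneg _) (h1.trans (le_abs_self _)) hδ h2

lemma AEBdd.integrable [IsFiniteMeasure P] {f : Ω → ℝ} (hm : AEStronglyMeasurable f P) (hb : AEBdd P f) :
    Integrable f P := by
  obtain ⟨K, h⟩ := hb
  exact (integrable_const K).mono' hm (by simpa using h)

/-- Pull-out lemma. -/
lemma pull_out [IsProbabilityMeasure P]
    {m : MeasurableSpace Ω} (hm : m ≤ mΩ) {g Z r : Ω → ℝ}
    (hg : StronglyMeasurable[m] g) (hbd : AEBdd P g)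
    (hZ : Integrable Z P) (hr : (P[Z|m]) =ᵐ[P] r) :
    ∫ ω, g ω * Z ω ∂P = ∫ ω, g ω * r ω ∂P := by
  obtain ⟨K, hK⟩ := hbd
  have hgae : AEStronglyMeasurable[mΩ] g P :=
    (StronglyMeasurable.mono hg hm).aestronglyMeasurable
  have hint : Integrable (fun ω => g ω * Z ω) P := hZ.bdd_mul hgae (by simpa using hK)
  have h1 : P[(fun ω => g ω * Z ω)|m] =ᵐ[P] fun ω => g ω * (P[Z|m]) ω := by
    have := condExp_mul_of_stronglyMeasurable_left hg (by simpa [Pi.mul_def] using hint) hZ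
    simpa [Pi.mul_def] using this
  calc ∫ ω, g ω * Z ω ∂P = ∫ ω, (P[(fun ω => g ω * Z ω)|m]) ω ∂P :=
        (integral_condExp hm (f := fun ω => g ω * Z ω)).symm
    _ = ∫ ω, g ω * r ω ∂P := integral_congr_ae (h1.trans (by filter_upwards [hr] with ω h; rw [h]))

lemma sm_comp {β : Type*} [MeasurableSpace β] (π : Ω → β) {q : β → ℝ} (hq : Measurable q) :
    StronglyMeasurable[MeasurableSpace.comap π inferInstance] (fun ω => q (π ω)) := by
  have hπ : Measurable[MeasurableSpace.comap π inferInstance] π := Measurable.of_comap_le le_rfl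
  exact (hq.comp hπ).stronglyMeasurable

lemma meas_fin2 {𝓧 β : Type*} [MeasurableSpace 𝓧] [MeasurableSpace β] [Fintype β]
    [MeasurableSingletonClass β] {F : 𝓧 → β → ℝ}
    (hF : ∀ k, Measurable fun x => F x k) : Measurable fun p : 𝓧 × β => F p.1 p.2 := by
  classical
  have : (fun p : 𝓧 × β => F p.1 p.2)
      = fun p => ∑ k : β, if p.2 = k then F p.1 k else 0 := by
    funext p; simp [Finset.sum_ite_eq]
  rw [this]
  refine Finset.measurable_sum _ fun k _ => Measurable.ite ?_ ((hF k).comp measurable_fst) measurable_const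
  exact measurable_snd (measurableSet_singleton k)

lemma AEBdd.finsum {Ω ι : Type*} {mΩ : MeasurableSpace Ω} {P : Measure Ω} (s : Finset ι)
    (f : ι → Ω → ℝ) (h : ∀ i ∈ s, AEBdd P (f i)) : AEBdd P fun ω => ∑ i ∈ s, f i ω := by
  classical
  induction s using Finset.induction with
  | empty => exact ⟨0, Filter.Eventually.of_forall (by simp)⟩
  | @insert x s hx ih =>
    have h1 : AEBdd P fun ω => f x ω + ∑ i ∈ s, f i ω :=
      (h x (Finset.mem_insert_self x s)).add (ih fun i hi => h i (Finset.mem_insert_of_mem hi))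
    obtain ⟨K, hK⟩ := h1
    exact ⟨K, by filter_upwards [hK] with ω hω; rwa [Finset.sum_insert hx]⟩

lemma abs_le_add_of_mem {x lo hi : ℝ} (h1 : lo ≤ x) (h2 : x ≤ hi) : |x| ≤ |lo| + |hi| :=
  abs_le.mpr ⟨by linarith [neg_abs_le lo, abs_nonneg hi], by linarith [le_abs_self hi, abs_nonneg lo]⟩

end Aux


section Key
variable {Ω 𝓧 : Type*} {mΩ : MeasurableSpace Ω} [m𝓧 : MeasurableSpace 𝓧]

set_option maxHeartbeats 1600000 in
lemma key {P : Measure Ω} [IsProbabilityMeasure P] {c Cbar ρlo ρhi R : ℝ}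
    (hc : 0 < c) (hρ : 0 < ρlo)
    {X : Ω → 𝓧} {D M : Ω → Fin 2} {Y : Ω → ℝ}
    (hX : Measurable X) (hD : Measurable D) (hM : Measurable M) (hY : Integrable Y P)
    (a : Fin 2 → 𝓧 → ℝ) (f : Fin 2 → 𝓧 → Fin 2 → ℝ) (u : 𝓧 → Fin 2 → Fin 2 → ℝ)
    (aF : Fin 2 → 𝓧 → ℝ) (fF : Fin 2 → 𝓧 → Fin 2 → ℝ) (uF : 𝓧 → Fin 2 → Fin 2 → ℝ)
    (ha_meas : ∀ dd, Measurable (a dd)) (hf_meas : ∀ m dd, Measurable fun x => f m x dd)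
    (hu_meas : ∀ dd m, Measurable fun x => u x dd m)
    (haF_meas : ∀ dd, Measurable (aF dd)) (hfF_meas : ∀ m dd, Measurable fun x => fF m x dd)
    (huF_meas : ∀ dd m, Measurable fun x => uF x dd m)
    (ha_eq : ∀ dd, (fun ω => a dd (X ω)) =ᵐ[P]
      P[(fun ω => if D ω = dd then (1:ℝ) else 0)|MeasurableSpace.comap X inferInstance])
    (hf_eq : ∀ m, (fun ω => f m (X ω) (D ω)) =ᵐ[P]
      P[(fun ω => if M ω = m then (1:ℝ) else 0)|
        MeasurableSpace.comap (fun ω => (X ω, D ω)) inferInstance])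
    (hu_eq : (fun ω => u (X ω) (D ω) (M ω)) =ᵐ[P]
      P[Y|MeasurableSpace.comap (fun ω => (X ω, D ω, M ω)) inferInstance])
    (ha_bdd : ∀ dd, ∀ᵐ ω ∂P, a dd (X ω) ∈ Set.Ioo c Cbar)
    (hf_bdd : ∀ m dd, ∀ᵐ ω ∂P, f m (X ω) dd ∈ Set.Icc ρlo ρhi)
    (hu_bdd : ∀ dd m, ∀ᵐ ω ∂P, |u (X ω) dd m| ≤ R)
    (haF_bdd : ∀ dd, ∀ᵐ ω ∂P, aF dd (X ω) ∈ Set.Ioo c Cbar)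
    (hfF_bdd : ∀ m dd, ∀ᵐ ω ∂P, fF m (X ω) dd ∈ Set.Icc ρlo ρhi)
    (huF_bdd : ∀ dd m, ∀ᵐ ω ∂P, |uF (X ω) dd m| ≤ R)
    (d d' : Fin 2) :
    ∫ ω, psiFun X D M Y aF fF uF d d' ω ∂P
      = ∫ ω, (a d (X ω) * ((∑ m : Fin 2, f m (X ω) d * (fF m (X ω) d' / fF m (X ω) d)
            * (u (X ω) d m - uF (X ω) d m)) / aF d (X ω))
          + a d' (X ω) * ((∑ m : Fin 2, uF (X ω) d m * (f m (X ω) d' - fF m (X ω) d'))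
            / aF d' (X ω))
          + ∑ m : Fin 2, uF (X ω) d m * fF m (X ω) d') ∂P := by
  classical
  have fin2 : ∀ k : Fin 2, k = 0 ∨ k = 1 := by decide
  have hcρ : 0 < c * ρlo := mul_pos hc hρ
  have hm1 : MeasurableSpace.comap X inferInstance ≤ mΩ := hX.comap_le
  have hm2 : MeasurableSpace.comap (fun ω => (X ω, D ω)) inferInstance ≤ mΩ :=
    (hX.prodMk hD).comap_le
  have hm3 : MeasurableSpace.comap (fun ω => (X ω, D ω, M ω)) inferInstance ≤ mΩ :=
    (hX.prodMk (hD.prodMk hM)).comap_le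
  have mind : ∀ (V : Ω → Fin 2), Measurable V → ∀ k : Fin 2,
      Measurable fun ω => (if V ω = k then (1:ℝ) else 0) := fun V hV k =>
    Measurable.ite (hV (measurableSet_singleton k)) measurable_const measurable_const
  have bddI : ∀ (V : Ω → Fin 2) (k : Fin 2),
      AEBdd P fun ω => (if V ω = k then (1:ℝ) else 0) :=
    fun V k => ⟨1, Filter.Eventually.of_forall fun ω => by by_cases h : V ω = k <;> simp [h]⟩
  have int_ind : ∀ (V : Ω → Fin 2), Measurable V → ∀ k : Fin 2,
      Integrable (fun ω => if V ω = k then (1:ℝ) else 0) P := fun V hV k =>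
    AEBdd.integrable (mind V hV k).aestronglyMeasurable (bddI V k)
  -- mediator probabilities sum to one
  have hsum : ∀ᵐ ω ∂P, f 0 (X ω) (D ω) + f 1 (X ω) (D ω) = 1 := by
    have hadd := condExp_add (μ := P)
      (m := MeasurableSpace.comap (fun ω => (X ω, D ω)) inferInstance)
      (int_ind M hM 0) (int_ind M hM 1)
    have hone : ((fun ω => if M ω = 0 then (1:ℝ) else 0)
        + fun ω => if M ω = 1 then (1:ℝ) else 0) = fun _ => (1:ℝ) := by
      funext ω
      rcases fin2 (M ω) with h | h <;> rw [Pi.add_apply, h] <;> norm_num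
    have hc1 := condExp_const hm2 (1:ℝ) (μ := P)
    filter_upwards [hf_eq 0, hf_eq 1, hadd] with ω e0 e1 ea
    have h2 : (P[((fun ω => if M ω = 0 then (1:ℝ) else 0)
        + fun ω => if M ω = 1 then (1:ℝ) else 0)|
        MeasurableSpace.comap (fun ω => (X ω, D ω)) inferInstance]) ω = 1 := by
      rw [hone, hc1]
    rw [e0, e1, ← Pi.add_apply (P[_|_]) (P[_|_]), ← ea, h2]
  -- measurability of composites
  have mfM : ∀ (ff : Fin 2 → 𝓧 → Fin 2 → ℝ), (∀ m dd, Measurable fun x => ff m x dd) →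
      ∀ dd, Measurable fun ω => ff (M ω) (X ω) dd := fun ff h dd =>
    (meas_fin2 (F := fun x k => ff k x dd) (fun k => h k dd)).comp (hX.prodMk hM)
  have muD : ∀ m, Measurable fun ω => u (X ω) (D ω) m := fun m =>
    (meas_fin2 (F := fun x k => u x k m) (fun k => hu_meas k m)).comp (hX.prodMk hD)
  have mu3 : Measurable fun ω => u (X ω) (D ω) (M ω) :=
    (meas_fin2 (β := Fin 2 × Fin 2) (F := fun x jk => u x jk.1 jk.2)
      (fun jk => hu_meas jk.1 jk.2)).comp (hX.prodMk (hD.prodMk hM))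
  have muFM : Measurable fun ω => uF (X ω) d (M ω) :=
    (meas_fin2 (F := fun x k => uF x d k) (fun k => huF_meas d k)).comp (hX.prodMk hM)
  have mfD : ∀ m, Measurable fun ω => f m (X ω) (D ω) := fun m =>
    (meas_fin2 (F := fun x k => f m x k) (fun k => hf_meas m k)).comp (hX.prodMk hD)
  -- a.e. bounds
  have bdd_mem_Ioo : ∀ (g : Ω → ℝ), (∀ᵐ ω ∂P, g ω ∈ Set.Ioo c Cbar) → AEBdd P g := fun g h =>
    ⟨|c| + |Cbar|, by filter_upwards [h] with ω hω; exact abs_le_add_of_mem hω.1.le hω.2.le⟩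
  have bdd_mem_Icc : ∀ (g : Ω → ℝ), (∀ᵐ ω ∂P, g ω ∈ Set.Icc ρlo ρhi) → AEBdd P g := fun g h =>
    ⟨|ρlo| + |ρhi|, by filter_upwards [h] with ω hω; exact abs_le_add_of_mem hω.1 hω.2⟩
  have bdd_a : ∀ dd, AEBdd P fun ω => a dd (X ω) := fun dd => bdd_mem_Ioo _ (ha_bdd dd)
  have bdd_f : ∀ m dd, AEBdd P fun ω => f m (X ω) dd := fun m dd => bdd_mem_Icc _ (hf_bdd m dd)
  have bdd_fF : ∀ m dd, AEBdd P fun ω => fF m (X ω) dd := fun m dd => bdd_mem_Icc _ (hfF_bdd m dd)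
  have bdd_u : ∀ dd m, AEBdd P fun ω => u (X ω) dd m := fun dd m => ⟨R, hu_bdd dd m⟩
  have bdd_uF : ∀ dd m, AEBdd P fun ω => uF (X ω) dd m := fun dd m => ⟨R, huF_bdd dd m⟩
  have bdd_fFM : ∀ dd, AEBdd P fun ω => fF (M ω) (X ω) dd := fun dd =>
    ⟨|ρlo| + |ρhi|, by
      filter_upwards [hfF_bdd 0 dd, hfF_bdd 1 dd] with ω h0 h1
      rcases fin2 (M ω) with h | h
      · rw [h]; exact abs_le_add_of_mem h0.1 h0.2
      · rw [h]; exact abs_le_add_of_mem h1.1 h1.2⟩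
  have bdd_uFM : AEBdd P fun ω => uF (X ω) d (M ω) :=
    ⟨R, by
      filter_upwards [huF_bdd d 0, huF_bdd d 1] with ω h0 h1
      rcases fin2 (M ω) with h | h
      · rw [h]; exact h0
      · rw [h]; exact h1⟩
  have bdd_u3 : AEBdd P fun ω => u (X ω) (D ω) (M ω) :=
    ⟨R, by
      filter_upwards [hu_bdd 0 0, hu_bdd 0 1, hu_bdd 1 0, hu_bdd 1 1] with ω h00 h01 h10 h11
      rcases fin2 (D ω) with h | h <;> rcases fin2 (M ω) with h' | h' <;> rw [h, h'] <;>
        assumption⟩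
  have bdd_uD : ∀ m, AEBdd P fun ω => u (X ω) (D ω) m := fun m =>
    ⟨R, by
      filter_upwards [hu_bdd 0 m, hu_bdd 1 m] with ω h0 h1
      rcases fin2 (D ω) with h | h <;> rw [h] <;> assumption⟩
  have bdd_fD : ∀ m, AEBdd P fun ω => f m (X ω) (D ω) := fun m =>
    ⟨|ρlo| + |ρhi|, by
      filter_upwards [hf_bdd m 0, hf_bdd m 1] with ω h0 h1
      rcases fin2 (D ω) with h | h
      · rw [h]; exact abs_le_add_of_mem h0.1 h0.2
      · rw [h]; exact abs_le_add_of_mem h1.1 h1.2⟩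
  -- denominator lower bounds
  have hlow_aF : ∀ dd, ∀ᵐ ω ∂P, c ≤ |aF dd (X ω)| := fun dd => by
    filter_upwards [haF_bdd dd] with ω h; exact h.1.le.trans (le_abs_self _)
  have hlow_fF : ∀ m dd, ∀ᵐ ω ∂P, ρlo ≤ |fF m (X ω) dd| := fun m dd => by
    filter_upwards [hfF_bdd m dd] with ω h; exact h.1.trans (le_abs_self _)
  have hlow_den : ∀ᵐ ω ∂P, c * ρlo ≤ |aF d (X ω) * fF (M ω) (X ω) d| := by
    filter_upwards [haF_bdd d, hfF_bdd 0 d, hfF_bdd 1 d] with ω h1 h2 h3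
    have hf' : ρlo ≤ fF (M ω) (X ω) d := by
      rcases fin2 (M ω) with h | h
      · rw [h]; exact h2.1
      · rw [h]; exact h3.1
    rw [abs_mul]
    exact mul_le_mul (h1.1.le.trans (le_abs_self _)) (hf'.trans (le_abs_self _)) hρ.le
      (abs_nonneg _)
  have hlow_denm : ∀ m, ∀ᵐ ω ∂P, c * ρlo ≤ |aF d (X ω) * fF m (X ω) d| := fun m => by
    filter_upwards [haF_bdd d, hfF_bdd m d] with ω h1 h2
    rw [abs_mul]
    exact mul_le_mul (h1.1.le.trans (le_abs_self _)) (h2.1.trans (le_abs_self _)) hρ.le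
      (abs_nonneg _)
  have hne_aF : ∀ dd, ∀ᵐ ω ∂P, aF dd (X ω) ≠ 0 := fun dd => by
    filter_upwards [haF_bdd dd] with ω h; exact (hc.trans h.1).ne'
  have hne_fF : ∀ m dd, ∀ᵐ ω ∂P, fF m (X ω) dd ≠ 0 := fun m dd => by
    filter_upwards [hfF_bdd m dd] with ω h; exact (hρ.trans_le h.1).ne'
  -- abbreviations
  set G : Ω → ℝ := fun ω =>
    (if D ω = d then (1:ℝ) else 0) * fF (M ω) (X ω) d' / (aF d (X ω) * fF (M ω) (X ω) d)
    with hGdef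
  set Et : Ω → ℝ := fun ω => ∑ m : Fin 2, uF (X ω) d m * fF m (X ω) d' with hEtdef
  set B : Ω → ℝ := fun ω =>
    (1 - (if D ω = d' then (1:ℝ) else 0) / aF d' (X ω)) * Et ω
    + (if D ω = d' then (1:ℝ) else 0) / aF d' (X ω) * uF (X ω) d (M ω)
    - G ω * uF (X ω) d (M ω) with hBdef
  set Φ : Fin 2 → Ω → ℝ := fun m ω =>
    (if D ω = d then (1:ℝ) else 0) * (fF m (X ω) d' / (aF d (X ω) * fF m (X ω) d))
      * (u (X ω) (D ω) m - uF (X ω) d m)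
    + (1 - (if D ω = d' then (1:ℝ) else 0) / aF d' (X ω)) * Et ω
    + (if D ω = d' then (1:ℝ) else 0) / aF d' (X ω) * uF (X ω) d m with hΦdef
  set g1 : Ω → ℝ := fun ω =>
    (∑ m : Fin 2, f m (X ω) d * (fF m (X ω) d' / fF m (X ω) d)
      * (u (X ω) d m - uF (X ω) d m)) / aF d (X ω) with hg1def
  set g2 : Ω → ℝ := fun ω =>
    (∑ m : Fin 2, uF (X ω) d m * (f m (X ω) d' - fF m (X ω) d')) / aF d' (X ω) with hg2def
  -- measurability of abbreviations
  have mG : Measurable G := by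
    rw [hGdef]
    exact ((mind D hD d).mul (mfM fF hfF_meas d')).div
      (((haF_meas d).comp hX).mul (mfM fF hfF_meas d))
  have mEt : Measurable Et := by
    rw [hEtdef]
    exact Finset.measurable_sum _ fun m _ =>
      ((huF_meas d m).comp hX).mul ((hfF_meas m d').comp hX)
  have mB : Measurable B := by
    rw [hBdef]
    exact (((measurable_const.sub ((mind D hD d').div ((haF_meas d').comp hX))).mul mEt).add
      (((mind D hD d').div ((haF_meas d').comp hX)).mul muFM)).sub (mG.mul muFM)
  have mΦ : ∀ m, Measurable (Φ m) := by
    intro m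
    rw [hΦdef]
    exact ((((mind D hD d).mul (((hfF_meas m d').comp hX).div
        (((haF_meas d).comp hX).mul ((hfF_meas m d).comp hX)))).mul
        ((muD m).sub ((huF_meas d m).comp hX))).add
      ((measurable_const.sub ((mind D hD d').div ((haF_meas d').comp hX))).mul mEt)).add
        (((mind D hD d').div ((haF_meas d').comp hX)).mul ((huF_meas d m).comp hX))
  have mg1 : Measurable g1 := by
    rw [hg1def]
    exact (Finset.measurable_sum _ fun m _ =>
      (((hf_meas m d).comp hX).mul (((hfF_meas m d').comp hX).div
        ((hfF_meas m d).comp hX))).mul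
        (((hu_meas d m).comp hX).sub ((huF_meas d m).comp hX))).div ((haF_meas d).comp hX)
  have mg2 : Measurable g2 := by
    rw [hg2def]
    exact (Finset.measurable_sum _ fun m _ => ((huF_meas d m).comp hX).mul
      (((hf_meas m d').comp hX).sub ((hfF_meas m d').comp hX))).div ((haF_meas d').comp hX)
  -- a.e. bounds for abbreviations
  have bddG : AEBdd P G := by
    rw [hGdef]
    exact AEBdd.div ((bddI D d).mul (bdd_fFM d')) hcρ hlow_den
  have bddEt : AEBdd P Et := by
    rw [hEtdef]
    exact AEBdd.finsum _ _ fun m _ => (bdd_uF d m).mul (bdd_fF m d')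
  have bddB : AEBdd P B := by
    rw [hBdef]
    exact ((((AEBdd.const 1).sub (AEBdd.div (bddI D d') hc (hlow_aF d'))).mul bddEt).add
      ((AEBdd.div (bddI D d') hc (hlow_aF d')).mul bdd_uFM)).sub (bddG.mul bdd_uFM)
  have bddΦ : ∀ m, AEBdd P (Φ m) := by
    intro m
    rw [hΦdef]
    exact ((((bddI D d).mul (AEBdd.div (bdd_fF m d') hcρ (hlow_denm m))).mul
        ((bdd_uD m).sub (bdd_uF d m))).add
      (((AEBdd.const 1).sub (AEBdd.div (bddI D d') hc (hlow_aF d'))).mul bddEt)).add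
        ((AEBdd.div (bddI D d') hc (hlow_aF d')).mul (bdd_uF d m))
  have bddg1 : AEBdd P g1 := by
    rw [hg1def]
    exact AEBdd.div (AEBdd.finsum _ _ fun m _ =>
      ((bdd_f m d).mul (AEBdd.div (bdd_fF m d') hρ (hlow_fF m d))).mul
        ((bdd_u d m).sub (bdd_uF d m))) hc (hlow_aF d)
  have bddg2 : AEBdd P g2 := by
    rw [hg2def]
    exact AEBdd.div (AEBdd.finsum _ _ fun m _ =>
      (bdd_uF d m).mul ((bdd_f m d').sub (bdd_fF m d'))) hc (hlow_aF d')
  -- strong measurability w.r.t. sub-σ-algebras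
  have smG : StronglyMeasurable[MeasurableSpace.comap (fun ω => (X ω, D ω, M ω)) inferInstance]
      G := by
    rw [hGdef]
    refine sm_comp (fun ω => (X ω, D ω, M ω)) (q := fun p : 𝓧 × Fin 2 × Fin 2 =>
      (if p.2.1 = d then (1:ℝ) else 0) * fF p.2.2 p.1 d' / (aF d p.1 * fF p.2.2 p.1 d)) ?_
    have hI : Measurable fun p : 𝓧 × Fin 2 × Fin 2 => (if p.2.1 = d then (1:ℝ) else 0) :=
      Measurable.ite ((measurable_fst.comp measurable_snd) (measurableSet_singleton d))
        measurable_const measurable_const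
    have hfF' : ∀ dd, Measurable fun p : 𝓧 × Fin 2 × Fin 2 => fF p.2.2 p.1 dd := fun dd =>
      meas_fin2 (β := Fin 2 × Fin 2) (F := fun x jk => fF jk.2 x dd) fun jk => hfF_meas jk.2 dd
    exact (hI.mul (hfF' d')).div (((haF_meas d).comp measurable_fst).mul (hfF' d))
  have smΦ : ∀ m, StronglyMeasurable[MeasurableSpace.comap (fun ω => (X ω, D ω)) inferInstance]
      (Φ m) := by
    intro m
    rw [hΦdef]
    refine sm_comp (fun ω => (X ω, D ω)) (q := fun p : 𝓧 × Fin 2 =>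
      (if p.2 = d then (1:ℝ) else 0) * (fF m p.1 d' / (aF d p.1 * fF m p.1 d))
        * (u p.1 p.2 m - uF p.1 d m)
      + (1 - (if p.2 = d' then (1:ℝ) else 0) / aF d' p.1)
        * (∑ mm : Fin 2, uF p.1 d mm * fF mm p.1 d')
      + (if p.2 = d' then (1:ℝ) else 0) / aF d' p.1 * uF p.1 d m) ?_
    have hI : ∀ k, Measurable fun p : 𝓧 × Fin 2 => (if p.2 = k then (1:ℝ) else 0) := fun k =>
      Measurable.ite (measurable_snd (measurableSet_singleton k)) measurable_const
        measurable_const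
    have hu' : Measurable fun p : 𝓧 × Fin 2 => u p.1 p.2 m :=
      meas_fin2 (F := fun x k => u x k m) fun k => hu_meas k m
    exact ((((hI d).mul (((hfF_meas m d').comp measurable_fst).div
        (((haF_meas d).comp measurable_fst).mul ((hfF_meas m d).comp measurable_fst)))).mul
        (hu'.sub ((huF_meas d m).comp measurable_fst))).add
      ((measurable_const.sub ((hI d').div ((haF_meas d').comp measurable_fst))).mul
        (Finset.measurable_sum _ fun mm _ => ((huF_meas d mm).comp measurable_fst).mul
          ((hfF_meas mm d').comp measurable_fst)))).add
        (((hI d').div ((haF_meas d').comp measurable_fst)).mul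
          ((huF_meas d m).comp measurable_fst))
  have smg1 : StronglyMeasurable[MeasurableSpace.comap X inferInstance] g1 := by
    rw [hg1def]
    refine sm_comp X (q := fun x =>
      (∑ m : Fin 2, f m x d * (fF m x d' / fF m x d) * (u x d m - uF x d m)) / aF d x) ?_
    exact (Finset.measurable_sum _ fun m _ =>
      ((hf_meas m d).mul ((hfF_meas m d').div (hfF_meas m d))).mul
        ((hu_meas d m).sub (huF_meas d m))).div (haF_meas d)
  have smg2 : StronglyMeasurable[MeasurableSpace.comap X inferInstance] g2 := by
    rw [hg2def]
    refine sm_comp X (q := fun x =>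
      (∑ m : Fin 2, uF x d m * (f m x d' - fF m x d')) / aF d' x) ?_
    exact (Finset.measurable_sum _ fun m _ => (huF_meas d m).mul
      ((hf_meas m d').sub (hfF_meas m d'))).div (haF_meas d')
  -- integrabilities
  have intGY : Integrable (fun ω => G ω * Y ω) P := by
    obtain ⟨K, hK⟩ := bddG
    exact hY.bdd_mul mG.aestronglyMeasurable (by simpa using hK)
  have intB : Integrable B P := AEBdd.integrable mB.aestronglyMeasurable bddB
  have intGu : Integrable (fun ω => G ω * u (X ω) (D ω) (M ω)) P :=
    AEBdd.integrable (mG.mul mu3).aestronglyMeasurable (bddG.mul bdd_u3)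
  have intΦI : ∀ m : Fin 2, Integrable (fun ω => Φ m ω * (if M ω = m then (1:ℝ) else 0)) P :=
    fun m => AEBdd.integrable ((mΦ m).mul (mind M hM m)).aestronglyMeasurable
      ((bddΦ m).mul (bddI M m))
  have intΦf : ∀ m : Fin 2, Integrable (fun ω => Φ m ω * f m (X ω) (D ω)) P :=
    fun m => AEBdd.integrable ((mΦ m).mul (mfD m)).aestronglyMeasurable
      ((bddΦ m).mul (bdd_fD m))
  have intg1I : Integrable (fun ω => g1 ω * (if D ω = d then (1:ℝ) else 0)) P :=
    AEBdd.integrable (mg1.mul (mind D hD d)).aestronglyMeasurable (bddg1.mul (bddI D d))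
  have intg2I : Integrable (fun ω => g2 ω * (if D ω = d' then (1:ℝ) else 0)) P :=
    AEBdd.integrable (mg2.mul (mind D hD d')).aestronglyMeasurable (bddg2.mul (bddI D d'))
  have intEt : Integrable Et P := AEBdd.integrable mEt.aestronglyMeasurable bddEt
  have intg1a : Integrable (fun ω => g1 ω * a d (X ω)) P :=
    AEBdd.integrable (mg1.mul ((ha_meas d).comp hX)).aestronglyMeasurable (bddg1.mul (bdd_a d))
  have intg2a : Integrable (fun ω => g2 ω * a d' (X ω)) P :=
    AEBdd.integrable (mg2.mul ((ha_meas d').comp hX)).aestronglyMeasurable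
      (bddg2.mul (bdd_a d'))
  -- main calculation
  calc ∫ ω, psiFun X D M Y aF fF uF d d' ω ∂P
      = ∫ ω, (G ω * Y ω + B ω) ∂P := by
        refine integral_congr_ae (Filter.Eventually.of_forall fun ω => ?_)
        simp only [psiFun, hGdef, hBdef, hEtdef]
        ring
    _ = (∫ ω, G ω * Y ω ∂P) + ∫ ω, B ω ∂P := integral_add intGY intB
    _ = (∫ ω, G ω * u (X ω) (D ω) (M ω) ∂P) + ∫ ω, B ω ∂P := by
        rw [pull_out hm3 smG bddG hY hu_eq.symm]
    _ = ∫ ω, (G ω * u (X ω) (D ω) (M ω) + B ω) ∂P := (integral_add intGu intB).symm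
    _ = ∫ ω, (∑ m : Fin 2, Φ m ω * (if M ω = m then (1:ℝ) else 0)) ∂P := by
        refine integral_congr_ae (Filter.Eventually.of_forall fun ω => ?_)
        simp only [hGdef, hBdef, hΦdef, hEtdef, Fin.sum_univ_two]
        rcases fin2 (M ω) with h | h <;> rw [h] <;>
          simp only [show ((0:Fin 2) = 0) ↔ True from by decide,
            show ((0:Fin 2) = 1) ↔ False from by decide,
            show ((1:Fin 2) = 0) ↔ False from by decide,
            show ((1:Fin 2) = 1) ↔ True from by decide, if_true, if_false,
            one_mul, zero_mul, mul_one, mul_zero, add_zero, zero_add] <;> ring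
    _ = ∑ m : Fin 2, ∫ ω, Φ m ω * (if M ω = m then (1:ℝ) else 0) ∂P :=
        integral_finset_sum _ fun m _ => intΦI m
    _ = ∑ m : Fin 2, ∫ ω, Φ m ω * f m (X ω) (D ω) ∂P := by
        refine Finset.sum_congr rfl fun m _ => ?_
        exact pull_out hm2 (smΦ m) (bddΦ m) (int_ind M hM m) (hf_eq m).symm
    _ = ∫ ω, (∑ m : Fin 2, Φ m ω * f m (X ω) (D ω)) ∂P :=
        (integral_finset_sum _ fun m _ => intΦf m).symm
    _ = ∫ ω, (g1 ω * (if D ω = d then (1:ℝ) else 0)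
          + g2 ω * (if D ω = d' then (1:ℝ) else 0) + Et ω) ∂P := by
        refine integral_congr_ae ?_
        filter_upwards [hsum, hne_aF d, hne_aF d', hne_fF 0 d, hne_fF 1 d]
          with ω hs n1 n2 n3 n4
        simp only [hΦdef, hg1def, hg2def, hEtdef, Fin.sum_univ_two]
        rcases eq_or_ne (D ω) d with h1 | h1 <;> rcases eq_or_ne (D ω) d' with h2 | h2
        · have hdd : d = d' := h1.symm.trans h2
          rw [← hdd] at *
          rw [h1] at hs ⊢
          have hf1 : f 1 (X ω) d = 1 - f 0 (X ω) d := by linarith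
          rw [hf1]
          simp only [if_pos rfl]
          field_simp
          ring
        · have hdd : ¬(d = d') := fun hh => h2 (h1.trans hh)
          rw [h1] at hs ⊢
          have hf1 : f 1 (X ω) d = 1 - f 0 (X ω) d := by linarith
          rw [hf1]
          simp only [if_pos rfl, if_neg hdd]
          field_simp
          ring
        · have hdd : ¬(d' = d) := fun hh => h1 (h2.trans hh)
          rw [h2] at hs ⊢
          have hf1 : f 1 (X ω) d' = 1 - f 0 (X ω) d' := by linarith
          rw [hf1]
          simp only [if_pos rfl, if_neg hdd]
          field_simp
          ring
        · have hf1 : f 1 (X ω) (D ω) = 1 - f 0 (X ω) (D ω) := by linarith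
          rw [hf1]
          simp only [if_neg h1, if_neg h2]
          ring
    _ = ((∫ ω, g1 ω * (if D ω = d then (1:ℝ) else 0) ∂P)
          + ∫ ω, g2 ω * (if D ω = d' then (1:ℝ) else 0) ∂P) + ∫ ω, Et ω ∂P := by
        exact (integral_add (intg1I.add intg2I) intEt).trans
          (congrArg (fun z => z + ∫ ω, Et ω ∂P) (integral_add intg1I intg2I))
    _ = ((∫ ω, g1 ω * a d (X ω) ∂P) + ∫ ω, g2 ω * a d' (X ω) ∂P) + ∫ ω, Et ω ∂P := by
        rw [pull_out hm1 smg1 bddg1 (int_ind D hD d) (ha_eq d).symm,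
          pull_out hm1 smg2 bddg2 (int_ind D hD d') (ha_eq d').symm]
    _ = ∫ ω, (g1 ω * a d (X ω) + g2 ω * a d' (X ω) + Et ω) ∂P := by
        exact ((integral_add (intg1a.add intg2a) intEt).trans
          (congrArg (fun z => z + ∫ ω, Et ω ∂P) (integral_add intg1a intg2a))).symm
    _ = ∫ ω, (a d (X ω) * ((∑ m : Fin 2, f m (X ω) d * (fF m (X ω) d' / fF m (X ω) d)
            * (u (X ω) d m - uF (X ω) d m)) / aF d (X ω))
          + a d' (X ω) * ((∑ m : Fin 2, uF (X ω) d m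
            * (f m (X ω) d' - fF m (X ω) d')) / aF d' (X ω))
          + ∑ m : Fin 2, uF (X ω) d m * fF m (X ω) d') ∂P := by
        refine integral_congr_ae (Filter.Eventually.of_forall fun ω => ?_)
        simp only [hg1def, hg2def, hEtdef]
        ring


end Key

/-- multiple robustness: if at least two of the three equalities
`ã = a`, `f̃ = f`, `μ̃ = μ` hold (for all `d, m` and almost every `x`), then the
one-step estimator is unbiased: `E[ψ̃_{d,d'}(O)] = φ(d,d')`; in particular this
holds with the true nuisance functions. -/
theorem multiply_robust
    (Mdl : MediationModel Ω 𝓧 c Cbar ρlo ρhi R)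
    (nu : Nuisance 𝓧 (Measure.map Mdl.X Mdl.P) c Cbar ρlo ρhi R) :
    (let aEq : Prop := ∀ d : Fin 2, ∀ᵐ x ∂(Measure.map Mdl.X Mdl.P), nu.a d x = Mdl.a d x
     let fEq : Prop := ∀ m d : Fin 2, ∀ᵐ x ∂(Measure.map Mdl.X Mdl.P), nu.f m x d = Mdl.f m x d
     let uEq : Prop := ∀ d m : Fin 2, ∀ᵐ x ∂(Measure.map Mdl.X Mdl.P), nu.u x d m = Mdl.u x d m
     ((aEq ∧ fEq) ∨ (aEq ∧ uEq) ∨ (fEq ∧ uEq)) →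
       ∀ d d' : Fin 2, (∫ ω, Mdl.psiT nu d d' ω ∂Mdl.P) = Mdl.phi d d')
    ∧ ∀ d d' : Fin 2, (∫ ω, Mdl.psi d d' ω ∂Mdl.P) = Mdl.phi d d' := by
  haveI := Mdl.isProb
  have hXae : AEMeasurable Mdl.X Mdl.P := Mdl.hX.aemeasurable
  -- true-nuisance a.e. refl equalities
  have hrefl : ∀ g : 𝓧 → ℝ, ∀ᵐ x ∂(Measure.map Mdl.X Mdl.P), g x = g x :=
    fun g => Filter.Eventually.of_forall fun _ => rfl
  -- apply `key` with a generic estimated triple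
  have hkey : ∀ (aF : Fin 2 → 𝓧 → ℝ) (fF : Fin 2 → 𝓧 → Fin 2 → ℝ)
      (uF : 𝓧 → Fin 2 → Fin 2 → ℝ),
      (∀ dd, Measurable (aF dd)) → (∀ m dd, Measurable fun x => fF m x dd) →
      (∀ dd m, Measurable fun x => uF x dd m) →
      (∀ dd, ∀ᵐ ω ∂Mdl.P, aF dd (Mdl.X ω) ∈ Set.Ioo c Cbar) →
      (∀ m dd, ∀ᵐ ω ∂Mdl.P, fF m (Mdl.X ω) dd ∈ Set.Icc ρlo ρhi) →
      (∀ dd m, ∀ᵐ ω ∂Mdl.P, |uF (Mdl.X ω) dd m| ≤ R) →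
      ∀ d d' : Fin 2,
      ∫ ω, psiFun Mdl.X Mdl.D Mdl.M Mdl.Y aF fF uF d d' ω ∂Mdl.P
        = ∫ ω, (Mdl.a d (Mdl.X ω) * ((∑ m : Fin 2, Mdl.f m (Mdl.X ω) d
              * (fF m (Mdl.X ω) d' / fF m (Mdl.X ω) d)
              * (Mdl.u (Mdl.X ω) d m - uF (Mdl.X ω) d m)) / aF d (Mdl.X ω))
            + Mdl.a d' (Mdl.X ω) * ((∑ m : Fin 2, uF (Mdl.X ω) d m
              * (Mdl.f m (Mdl.X ω) d' - fF m (Mdl.X ω) d')) / aF d' (Mdl.X ω))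
            + ∑ m : Fin 2, uF (Mdl.X ω) d m * fF m (Mdl.X ω) d') ∂Mdl.P := by
    intro aF fF uF h1 h2 h3 h4 h5 h6 d d'
    exact key Mdl.hc Mdl.hρ1 Mdl.hX Mdl.hD Mdl.hM Mdl.hY Mdl.a Mdl.f Mdl.u aF fF uF
      Mdl.ha_meas Mdl.hf_meas Mdl.hu_meas h1 h2 h3 Mdl.ha_eq Mdl.hf_eq Mdl.hu_eq
      Mdl.ha_bdd Mdl.hf_bdd Mdl.hu_bdd h4 h5 h6 d d'
  -- nonvanishing facts
  have hane : ∀ dd, ∀ᵐ ω ∂Mdl.P, Mdl.a dd (Mdl.X ω) ≠ 0 := fun dd => by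
    filter_upwards [Mdl.ha_bdd dd] with ω h
    have := Mdl.hc; have := h.1; intro h0; rw [h0] at this; linarith
  have hfne : ∀ m dd, ∀ᵐ ω ∂Mdl.P, Mdl.f m (Mdl.X ω) dd ≠ 0 := fun m dd => by
    filter_upwards [Mdl.hf_bdd m dd] with ω h
    have := Mdl.hρ1; have := h.1; intro h0; rw [h0] at this; linarith
  constructor
  · intro aEq fEq uEq hcase d d'
    have haB : ∀ dd, ∀ᵐ ω ∂Mdl.P, nu.a dd (Mdl.X ω) ∈ Set.Ioo c Cbar :=
      fun dd => ae_of_ae_map hXae (nu.ha_bdd dd)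
    have hfB : ∀ m dd, ∀ᵐ ω ∂Mdl.P, nu.f m (Mdl.X ω) dd ∈ Set.Icc ρlo ρhi :=
      fun m dd => ae_of_ae_map hXae (nu.hf_bdd m dd)
    have huB : ∀ dd m, ∀ᵐ ω ∂Mdl.P, |nu.u (Mdl.X ω) dd m| ≤ R :=
      fun dd m => ae_of_ae_map hXae (nu.hu_bdd dd m)
    have hk := hkey nu.a nu.f nu.u nu.ha_meas nu.hf_meas nu.hu_meas haB hfB huB d d'
    show (∫ ω, psiFun Mdl.X Mdl.D Mdl.M Mdl.Y nu.a nu.f nu.u d d' ω ∂Mdl.P) = Mdl.phi d d'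
    rw [hk, MediationModel.phi]
    apply integral_congr_ae
    rcases hcase with ⟨hA, hF⟩ | ⟨hA, hU⟩ | ⟨hF, hU⟩
    · have hAc : ∀ dd, ∀ᵐ ω ∂Mdl.P, nu.a dd (Mdl.X ω) = Mdl.a dd (Mdl.X ω) :=
        fun dd => ae_of_ae_map hXae (hA dd)
      have hFc : ∀ m dd, ∀ᵐ ω ∂Mdl.P, nu.f m (Mdl.X ω) dd = Mdl.f m (Mdl.X ω) dd :=
        fun m dd => ae_of_ae_map hXae (hF m dd)
      filter_upwards [hAc d, hAc d', hFc 0 d, hFc 1 d, hFc 0 d', hFc 1 d',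
        hane d, hfne 0 d, hfne 1 d] with ω e1 e2 e3 e4 e5 e6 n1 n2 n3
      simp only [Fin.sum_univ_two, e1, e2, e3, e4, e5, e6]
      field_simp
      ring
    · have hAc : ∀ dd, ∀ᵐ ω ∂Mdl.P, nu.a dd (Mdl.X ω) = Mdl.a dd (Mdl.X ω) :=
        fun dd => ae_of_ae_map hXae (hA dd)
      have hUc : ∀ dd m, ∀ᵐ ω ∂Mdl.P, nu.u (Mdl.X ω) dd m = Mdl.u (Mdl.X ω) dd m :=
        fun dd m => ae_of_ae_map hXae (hU dd m)
      filter_upwards [hAc d, hAc d', hUc d 0, hUc d 1, hane d'] with ω e1 e2 e3 e4 n1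
      simp only [Fin.sum_univ_two, e1, e2, e3, e4, sub_self, mul_zero, zero_add, add_zero,
        zero_div, zero_mul]
      field_simp
      ring
    · have hFc : ∀ m dd, ∀ᵐ ω ∂Mdl.P, nu.f m (Mdl.X ω) dd = Mdl.f m (Mdl.X ω) dd :=
        fun m dd => ae_of_ae_map hXae (hF m dd)
      have hUc : ∀ dd m, ∀ᵐ ω ∂Mdl.P, nu.u (Mdl.X ω) dd m = Mdl.u (Mdl.X ω) dd m :=
        fun dd m => ae_of_ae_map hXae (hU dd m)
      filter_upwards [hFc 0 d, hFc 1 d, hFc 0 d', hFc 1 d', hUc d 0, hUc d 1]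
        with ω e1 e2 e3 e4 e5 e6
      simp only [Fin.sum_univ_two, e1, e2, e3, e4, e5, e6, sub_self, mul_zero, zero_mul,
        zero_add, add_zero, zero_div]
      try ring
  · intro d d'
    have hk := hkey Mdl.a Mdl.f Mdl.u Mdl.ha_meas Mdl.hf_meas Mdl.hu_meas
      Mdl.ha_bdd Mdl.hf_bdd Mdl.hu_bdd d d'
    show (∫ ω, psiFun Mdl.X Mdl.D Mdl.M Mdl.Y Mdl.a Mdl.f Mdl.u d d' ω ∂Mdl.P) = Mdl.phi d d'
    rw [hk, MediationModel.phi]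
    apply integral_congr_ae
    filter_upwards [hane d, hfne 0 d, hfne 1 d] with ω n1 n2 n3
    simp only [Fin.sum_univ_two]
    field_simp
    try ring
end

section
/- Inverse-probability-weighting representation of the mediation functional: in the observed-data mediation model with binary treatment and binary mediator, for all d, d' ∈ {0,1}, E[ 1{D = d}·(f(M|X,d') / (a(d|X)·f(M|X,d)))·Y ] = φ(d,d'). -/
open MeasureTheory ProbabilityTheory
open scoped ENNReal

variable {Ω 𝓧 : Type*} [MeasurableSpace Ω] [MeasurableSpace 𝓧]
  {c Cbar ρlo ρhi R : ℝ}

/-- The σ-algebra generated by a map (as a non-instance definition, to avoid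
interfering with instance resolution). -/
def sigmaComap {Ω 𝓨 : Type*} [MeasurableSpace 𝓨] (T : Ω → 𝓨) : MeasurableSpace Ω :=
  MeasurableSpace.comap T inferInstance

/-- Pull-out/tower helper: for an `m`-strongly-measurable, a.e.-bounded `g` and an
integrable `f`, `∫ g f = ∫ g h` where `h` is any representative of `μ[f|m]`. -/
lemma integral_mul_eq_of_condExp {Ω : Type*} {m m0 : MeasurableSpace Ω} {μ : Measure Ω}
    [IsFiniteMeasure μ] (hm : m ≤ m0) (g f h : Ω → ℝ) (hg : StronglyMeasurable[m] g)
    (C : ℝ) (hbdd : ∀ᵐ ω ∂μ, ‖g ω‖ ≤ C) (hf : Integrable f μ)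
    (hh : h =ᵐ[μ] μ[f|m]) :
    ∫ ω, g ω * f ω ∂μ = ∫ ω, g ω * h ω ∂μ := by
  have h1 : Integrable (g * f) μ := hf.bdd_mul (hg.mono hm).aestronglyMeasurable hbdd
  have h2 : μ[g * f|m] =ᵐ[μ] g * μ[f|m] :=
    condExp_stronglyMeasurable_mul_of_bound hm hg hf C hbdd
  have h3 : ∫ ω, g ω * f ω ∂μ = ∫ ω, (μ[g * f|m]) ω ∂μ := (integral_condExp hm).symm
  rw [h3]
  refine integral_congr_ae (h2.trans ?_)
  filter_upwards [hh] with ω hω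
  simp only [Pi.mul_apply, ← hω]

/-- inverse-probability-weighting representation: for all `d, d'`,
`E[ 1{D = d} · f(M|X,d') / (a(d|X) f(M|X,d)) · Y ] = φ(d,d')`. -/
theorem ipw_representation
    (Mdl : MediationModel Ω 𝓧 c Cbar ρlo ρhi R) (d d' : Fin 2) :
    (∫ ω, (if Mdl.D ω = d then (1 : ℝ) else 0)
        * (Mdl.f (Mdl.M ω) (Mdl.X ω) d' / (Mdl.a d (Mdl.X ω) * Mdl.f (Mdl.M ω) (Mdl.X ω) d))
        * Mdl.Y ω ∂Mdl.P) = Mdl.phi d d' := by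
  classical
  haveI : IsProbabilityMeasure Mdl.P := Mdl.isProb
  -- the three sub-σ-algebras
  have hmX : sigmaComap Mdl.X ≤ ‹MeasurableSpace Ω› := measurable_iff_comap_le.mp Mdl.hX
  have hmXD : sigmaComap (fun ω => (Mdl.X ω, Mdl.D ω)) ≤ ‹MeasurableSpace Ω› :=
    measurable_iff_comap_le.mp (Mdl.hX.prodMk Mdl.hD)
  have hmXDM : sigmaComap (fun ω => (Mdl.X ω, Mdl.D ω, Mdl.M ω)) ≤ ‹MeasurableSpace Ω› :=
    measurable_iff_comap_le.mp (Mdl.hX.prodMk (Mdl.hD.prodMk Mdl.hM))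
  -- projections are measurable w.r.t. the comap σ-algebras
  have hproj1 : Measurable[(sigmaComap Mdl.X)] Mdl.X := measurable_iff_comap_le.mpr le_rfl
  have hproj2 : Measurable[(sigmaComap (fun ω => (Mdl.X ω, Mdl.D ω)))] fun ω => (Mdl.X ω, Mdl.D ω) :=
    measurable_iff_comap_le.mpr le_rfl
  have hproj3 : Measurable[(sigmaComap (fun ω => (Mdl.X ω, Mdl.D ω, Mdl.M ω)))] fun ω => (Mdl.X ω, Mdl.D ω, Mdl.M ω) :=
    measurable_iff_comap_le.mpr le_rfl
  have hX3 : Measurable[(sigmaComap (fun ω => (Mdl.X ω, Mdl.D ω, Mdl.M ω)))] Mdl.X := measurable_fst.comp hproj3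
  have hD3 : Measurable[(sigmaComap (fun ω => (Mdl.X ω, Mdl.D ω, Mdl.M ω)))] Mdl.D := (measurable_fst.comp measurable_snd).comp hproj3
  have hM3 : Measurable[(sigmaComap (fun ω => (Mdl.X ω, Mdl.D ω, Mdl.M ω)))] Mdl.M := (measurable_snd.comp measurable_snd).comp hproj3
  have hX2 : Measurable[(sigmaComap (fun ω => (Mdl.X ω, Mdl.D ω)))] Mdl.X := measurable_fst.comp hproj2
  have hD2 : Measurable[(sigmaComap (fun ω => (Mdl.X ω, Mdl.D ω)))] Mdl.D := measurable_snd.comp hproj2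
  -- constants
  have hc0 : (0:ℝ) < c := Mdl.hc
  have hρ0 : (0:ℝ) < ρlo := Mdl.hρ1
  have hρhi0 : (0:ℝ) < ρhi := lt_of_lt_of_le hρ0 Mdl.hρ2
  have hR0 : (0:ℝ) < R := Mdl.hR
  have hcρ : (0:ℝ) < c * ρlo := mul_pos hc0 hρ0
  set B : ℝ := ρhi / (c * ρlo) with hBdef
  have hB0 : 0 ≤ B := div_nonneg hρhi0.le hcρ.le
  -- master a.e. bound set
  have hbd : ∀ᵐ ω ∂Mdl.P,
      Mdl.a d (Mdl.X ω) ∈ Set.Ioo c Cbar ∧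
      (∀ m : Fin 2, Mdl.f m (Mdl.X ω) d ∈ Set.Icc ρlo ρhi) ∧
      (∀ m : Fin 2, Mdl.f m (Mdl.X ω) d' ∈ Set.Icc ρlo ρhi) ∧
      (∀ m : Fin 2, |Mdl.u (Mdl.X ω) d m| ≤ R) := by
    filter_upwards [Mdl.ha_bdd d, Mdl.hf_bdd 0 d, Mdl.hf_bdd 1 d, Mdl.hf_bdd 0 d',
      Mdl.hf_bdd 1 d', Mdl.hu_bdd d 0, Mdl.hu_bdd d 1] with ω h1 h2 h3 h4 h5 h6 h7
    exact ⟨h1, Fin.forall_fin_two.mpr ⟨h2, h3⟩, Fin.forall_fin_two.mpr ⟨h4, h5⟩,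
      Fin.forall_fin_two.mpr ⟨h6, h7⟩⟩
  -- indicator integrability
  have hindM : ∀ m : Fin 2,
      Integrable (fun ω => if Mdl.M ω = m then (1:ℝ) else 0) Mdl.P := by
    intro m
    refine Integrable.mono' (integrable_const 1)
      ((Measurable.ite (Mdl.hM (measurableSet_singleton m)) measurable_const
        measurable_const).aestronglyMeasurable) ?_
    filter_upwards with ω
    by_cases h : Mdl.M ω = m <;> simp [h]
  have hindD : Integrable (fun ω => if Mdl.D ω = d then (1:ℝ) else 0) Mdl.P := by
    refine Integrable.mono' (integrable_const 1)
      ((Measurable.ite (Mdl.hD (measurableSet_singleton d)) measurable_const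
        measurable_const).aestronglyMeasurable) ?_
    filter_upwards with ω
    by_cases h : Mdl.D ω = d <;> simp [h]
  -- the per-mediator-value chain
  have key : ∀ m : Fin 2,
      (∫ ω, ((if Mdl.M ω = m then (1:ℝ) else 0) * ((if Mdl.D ω = d then (1:ℝ) else 0)
          * (Mdl.f m (Mdl.X ω) d' / (Mdl.a d (Mdl.X ω) * Mdl.f m (Mdl.X ω) d))))
          * Mdl.Y ω ∂Mdl.P)
        = ∫ ω, ((Mdl.u (Mdl.X ω) d m * Mdl.f m (Mdl.X ω) d') / Mdl.a d (Mdl.X ω))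
            * (if Mdl.D ω = d then (1:ℝ) else 0) ∂Mdl.P := by
    intro m
    -- multiplier for step A
    set g : Ω → ℝ := fun ω => (if Mdl.M ω = m then (1:ℝ) else 0)
      * ((if Mdl.D ω = d then (1:ℝ) else 0)
        * (Mdl.f m (Mdl.X ω) d' / (Mdl.a d (Mdl.X ω) * Mdl.f m (Mdl.X ω) d))) with hgdef
    have hg_sm : StronglyMeasurable[(sigmaComap (fun ω => (Mdl.X ω, Mdl.D ω, Mdl.M ω)))] g := by
      refine Measurable.stronglyMeasurable ?_
      refine Measurable.mul ?_ (Measurable.mul ?_ ?_)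
      · exact Measurable.ite (hM3 (measurableSet_singleton m)) measurable_const
          measurable_const
      · exact Measurable.ite (hD3 (measurableSet_singleton d)) measurable_const
          measurable_const
      · exact ((Mdl.hf_meas m d').div ((Mdl.ha_meas d).mul (Mdl.hf_meas m d))).comp hX3
    have hg_bd : ∀ᵐ ω ∂Mdl.P, ‖g ω‖ ≤ B := by
      filter_upwards [hbd] with ω hω
      obtain ⟨ha, hfd, hfd', _⟩ := hω
      have hden : c * ρlo ≤ Mdl.a d (Mdl.X ω) * Mdl.f m (Mdl.X ω) d :=
        mul_le_mul ha.1.le (hfd m).1 hρ0.le (hc0.trans ha.1).le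
      have hfrac : Mdl.f m (Mdl.X ω) d' / (Mdl.a d (Mdl.X ω) * Mdl.f m (Mdl.X ω) d) ≤ B :=
        div_le_div₀ hρhi0.le (hfd' m).2 hcρ hden
      have hfrac0 : 0 ≤ Mdl.f m (Mdl.X ω) d' / (Mdl.a d (Mdl.X ω) * Mdl.f m (Mdl.X ω) d) :=
        div_nonneg (hρ0.le.trans (hfd' m).1) (hcρ.le.trans hden)
      rw [Real.norm_eq_abs]
      by_cases h1 : Mdl.M ω = m <;> by_cases h2 : Mdl.D ω = d <;>
        simp [hgdef, h1, h2, abs_of_nonneg, hfrac0, hfrac, hB0]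
    -- Step A : condition on (X, D, M)
    have stepA : (∫ ω, g ω * Mdl.Y ω ∂Mdl.P)
        = ∫ ω, g ω * Mdl.u (Mdl.X ω) (Mdl.D ω) (Mdl.M ω) ∂Mdl.P :=
      integral_mul_eq_of_condExp hmXDM g Mdl.Y _ hg_sm B hg_bd Mdl.hY Mdl.hu_eq
    -- multiplier for step B
    set q : Ω → ℝ := fun ω => (if Mdl.D ω = d then (1:ℝ) else 0)
      * (Mdl.f m (Mdl.X ω) d' / (Mdl.a d (Mdl.X ω) * Mdl.f m (Mdl.X ω) d))
      * Mdl.u (Mdl.X ω) d m with hqdef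
    have hq_sm : StronglyMeasurable[(sigmaComap (fun ω => (Mdl.X ω, Mdl.D ω)))] q := by
      refine Measurable.stronglyMeasurable ?_
      refine Measurable.mul (Measurable.mul ?_ ?_) ?_
      · exact Measurable.ite (hD2 (measurableSet_singleton d)) measurable_const
          measurable_const
      · exact ((Mdl.hf_meas m d').div ((Mdl.ha_meas d).mul (Mdl.hf_meas m d))).comp hX2
      · exact (Mdl.hu_meas d m).comp hX2
    have hq_bd : ∀ᵐ ω ∂Mdl.P, ‖q ω‖ ≤ B * R := by
      filter_upwards [hbd] with ω hω
      obtain ⟨ha, hfd, hfd', hu⟩ := hω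
      have hden : c * ρlo ≤ Mdl.a d (Mdl.X ω) * Mdl.f m (Mdl.X ω) d :=
        mul_le_mul ha.1.le (hfd m).1 hρ0.le (hc0.trans ha.1).le
      have hfrac : |Mdl.f m (Mdl.X ω) d' / (Mdl.a d (Mdl.X ω) * Mdl.f m (Mdl.X ω) d)| ≤ B := by
        rw [abs_of_nonneg (div_nonneg (hρ0.le.trans (hfd' m).1) (hcρ.le.trans hden))]
        exact div_le_div₀ hρhi0.le (hfd' m).2 hcρ hden
      rw [Real.norm_eq_abs, hqdef]
      calc |(if Mdl.D ω = d then (1:ℝ) else 0)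
            * (Mdl.f m (Mdl.X ω) d' / (Mdl.a d (Mdl.X ω) * Mdl.f m (Mdl.X ω) d))
            * Mdl.u (Mdl.X ω) d m|
          = |if Mdl.D ω = d then (1:ℝ) else 0|
            * |Mdl.f m (Mdl.X ω) d' / (Mdl.a d (Mdl.X ω) * Mdl.f m (Mdl.X ω) d)|
            * |Mdl.u (Mdl.X ω) d m| := by rw [abs_mul, abs_mul]
        _ ≤ 1 * B * R := by
            refine mul_le_mul (mul_le_mul ?_ hfrac (abs_nonneg _) ?_) (hu m)
              (abs_nonneg _) (by linarith)
            · by_cases h : Mdl.D ω = d <;> simp [h]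
            · by_cases h : Mdl.D ω = d <;> simp [h]
        _ = B * R := by ring
    -- pointwise rewrite of the step-A output
    have stepA' : (∫ ω, g ω * Mdl.u (Mdl.X ω) (Mdl.D ω) (Mdl.M ω) ∂Mdl.P)
        = ∫ ω, q ω * (if Mdl.M ω = m then (1:ℝ) else 0) ∂Mdl.P := by
      refine integral_congr_ae (Filter.Eventually.of_forall fun ω => ?_)
      by_cases h1 : Mdl.M ω = m
      · by_cases h2 : Mdl.D ω = d
        · simp [hgdef, hqdef, h1, h2]; try ring
        · simp [hgdef, hqdef, h2]
      · simp [hgdef, hqdef, h1]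
    -- Step B : condition on (X, D)
    have stepB : (∫ ω, q ω * (if Mdl.M ω = m then (1:ℝ) else 0) ∂Mdl.P)
        = ∫ ω, q ω * Mdl.f m (Mdl.X ω) (Mdl.D ω) ∂Mdl.P :=
      integral_mul_eq_of_condExp hmXD q _ _ hq_sm (B * R) hq_bd (hindM m) (Mdl.hf_eq m)
    -- Step C : a.e. cancellation of the mediator density
    have stepC : (∫ ω, q ω * Mdl.f m (Mdl.X ω) (Mdl.D ω) ∂Mdl.P)
        = ∫ ω, ((Mdl.u (Mdl.X ω) d m * Mdl.f m (Mdl.X ω) d') / Mdl.a d (Mdl.X ω))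
            * (if Mdl.D ω = d then (1:ℝ) else 0) ∂Mdl.P := by
      refine integral_congr_ae ?_
      filter_upwards [hbd] with ω hω
      obtain ⟨ha, hfd, _, _⟩ := hω
      have hfne : Mdl.f m (Mdl.X ω) d ≠ 0 := ne_of_gt (lt_of_lt_of_le hρ0 (hfd m).1)
      have hane : Mdl.a d (Mdl.X ω) ≠ 0 := ne_of_gt (hc0.trans ha.1)
      by_cases h2 : Mdl.D ω = d
      · simp only [hqdef, h2, if_pos]
        field_simp
      · simp [hqdef, h2]
    rw [stepA, stepA', stepB, stepC]
  -- decompose the original integrand over the values of M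
  have hsplit : (∫ ω, (if Mdl.D ω = d then (1 : ℝ) else 0)
        * (Mdl.f (Mdl.M ω) (Mdl.X ω) d' / (Mdl.a d (Mdl.X ω) * Mdl.f (Mdl.M ω) (Mdl.X ω) d))
        * Mdl.Y ω ∂Mdl.P)
      = ∑ m : Fin 2, ∫ ω, ((if Mdl.M ω = m then (1:ℝ) else 0)
          * ((if Mdl.D ω = d then (1:ℝ) else 0)
          * (Mdl.f m (Mdl.X ω) d' / (Mdl.a d (Mdl.X ω) * Mdl.f m (Mdl.X ω) d))))
          * Mdl.Y ω ∂Mdl.P := by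
    rw [← integral_finset_sum]
    · refine integral_congr_ae (Filter.Eventually.of_forall fun ω => ?_)
      have h2 : Mdl.M ω = 0 ∨ Mdl.M ω = 1 := by
        have : ∀ j : Fin 2, j = 0 ∨ j = 1 := by decide
        exact this _
      rcases h2 with h | h <;> simp [h, Fin.sum_univ_two] <;> try ring
    · intro m _
      -- integrable : bounded multiplier times Y
      refine Mdl.hY.bdd_mul (c := B) ?_ ?_
      · refine (Measurable.aestronglyMeasurable ?_)
        refine Measurable.mul ?_ (Measurable.mul ?_ ?_)
        · exact Measurable.ite (Mdl.hM (measurableSet_singleton m)) measurable_const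
            measurable_const
        · exact Measurable.ite (Mdl.hD (measurableSet_singleton d)) measurable_const
            measurable_const
        · exact ((Mdl.hf_meas m d').div ((Mdl.ha_meas d).mul (Mdl.hf_meas m d))).comp Mdl.hX
      · filter_upwards [hbd] with ω hω
        obtain ⟨ha, hfd, hfd', _⟩ := hω
        have hden : c * ρlo ≤ Mdl.a d (Mdl.X ω) * Mdl.f m (Mdl.X ω) d :=
          mul_le_mul ha.1.le (hfd m).1 hρ0.le (hc0.trans ha.1).le
        have hfrac : Mdl.f m (Mdl.X ω) d' / (Mdl.a d (Mdl.X ω) * Mdl.f m (Mdl.X ω) d) ≤ B :=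
          div_le_div₀ hρhi0.le (hfd' m).2 hcρ hden
        have hfrac0 : 0 ≤ Mdl.f m (Mdl.X ω) d' / (Mdl.a d (Mdl.X ω) * Mdl.f m (Mdl.X ω) d) :=
          div_nonneg (hρ0.le.trans (hfd' m).1) (hcρ.le.trans hden)
        rw [Real.norm_eq_abs]
        by_cases h1 : Mdl.M ω = m <;> by_cases h2 : Mdl.D ω = d <;>
          simp [h1, h2, abs_of_nonneg, hfrac0, hfrac, hB0]
  rw [hsplit]
  simp only [key]
  -- gather the sum back into a single integral
  have hgather : (∑ m : Fin 2, ∫ ω,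
        ((Mdl.u (Mdl.X ω) d m * Mdl.f m (Mdl.X ω) d') / Mdl.a d (Mdl.X ω))
          * (if Mdl.D ω = d then (1:ℝ) else 0) ∂Mdl.P)
      = ∫ ω, ((∑ m : Fin 2, Mdl.u (Mdl.X ω) d m * Mdl.f m (Mdl.X ω) d') / Mdl.a d (Mdl.X ω))
          * (if Mdl.D ω = d then (1:ℝ) else 0) ∂Mdl.P := by
    rw [← integral_finset_sum]
    · refine integral_congr_ae (Filter.Eventually.of_forall fun ω => ?_)
      simp [Fin.sum_univ_two]
      ring
    · intro m _
      refine (hindD).bdd_mul (c := (R * ρhi) / c) ?_ ?_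
      · refine Measurable.aestronglyMeasurable ?_
        exact (((Mdl.hu_meas d m).mul (Mdl.hf_meas m d')).div (Mdl.ha_meas d)).comp Mdl.hX
      · filter_upwards [hbd] with ω hω
        obtain ⟨ha, _, hfd', hu⟩ := hω
        have hnum : |Mdl.u (Mdl.X ω) d m * Mdl.f m (Mdl.X ω) d'| ≤ R * ρhi := by
          rw [abs_mul]
          exact mul_le_mul (hu m) (by
            rw [abs_of_nonneg (hρ0.le.trans (hfd' m).1)]; exact (hfd' m).2)
            (abs_nonneg _) hR0.le
        rw [Real.norm_eq_abs, abs_div]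
        rw [abs_of_nonneg (hc0.trans ha.1).le]
        exact div_le_div₀ (mul_nonneg hR0.le hρhi0.le) hnum hc0 ha.1.le
  rw [hgather]
  -- Step D : condition on X and cancel the propensity
  have hr_meas : Measurable fun x =>
      (∑ m : Fin 2, Mdl.u x d m * Mdl.f m x d') / Mdl.a d x := by
    exact (Finset.measurable_sum _ fun m _ => (Mdl.hu_meas d m).mul (Mdl.hf_meas m d')).div
      (Mdl.ha_meas d)
  have stepD : (∫ ω, ((∑ m : Fin 2, Mdl.u (Mdl.X ω) d m * Mdl.f m (Mdl.X ω) d')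
          / Mdl.a d (Mdl.X ω)) * (if Mdl.D ω = d then (1:ℝ) else 0) ∂Mdl.P)
      = ∫ ω, ((∑ m : Fin 2, Mdl.u (Mdl.X ω) d m * Mdl.f m (Mdl.X ω) d')
          / Mdl.a d (Mdl.X ω)) * Mdl.a d (Mdl.X ω) ∂Mdl.P := by
    refine integral_mul_eq_of_condExp hmX _ _ _ ?_ (2 * R * ρhi / c) ?_ hindD (Mdl.ha_eq d)
    · exact (hr_meas.comp hproj1).stronglyMeasurable
    · filter_upwards [hbd] with ω hω
      obtain ⟨ha, _, hfd', hu⟩ := hω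
      have hnum : |∑ m : Fin 2, Mdl.u (Mdl.X ω) d m * Mdl.f m (Mdl.X ω) d'| ≤ 2 * R * ρhi := by
        rw [Fin.sum_univ_two]
        have h0 : |Mdl.u (Mdl.X ω) d 0 * Mdl.f 0 (Mdl.X ω) d'| ≤ R * ρhi := by
          rw [abs_mul]
          refine mul_le_mul (hu 0) ?_ (abs_nonneg _) hR0.le
          rw [abs_of_nonneg (hρ0.le.trans (hfd' 0).1)]; exact (hfd' 0).2
        have h1 : |Mdl.u (Mdl.X ω) d 1 * Mdl.f 1 (Mdl.X ω) d'| ≤ R * ρhi := by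
          rw [abs_mul]
          refine mul_le_mul (hu 1) ?_ (abs_nonneg _) hR0.le
          rw [abs_of_nonneg (hρ0.le.trans (hfd' 1).1)]; exact (hfd' 1).2
        calc |Mdl.u (Mdl.X ω) d 0 * Mdl.f 0 (Mdl.X ω) d'
              + Mdl.u (Mdl.X ω) d 1 * Mdl.f 1 (Mdl.X ω) d'| ≤ _ + _ := abs_add_le _ _
          _ ≤ R * ρhi + R * ρhi := add_le_add h0 h1
          _ = 2 * R * ρhi := by ring
      rw [Real.norm_eq_abs, abs_div, abs_of_nonneg (hc0.trans ha.1).le]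
      exact div_le_div₀ (by positivity) hnum hc0 ha.1.le
  rw [stepD]
  -- cancel and conclude
  have hfinal : (∫ ω, ((∑ m : Fin 2, Mdl.u (Mdl.X ω) d m * Mdl.f m (Mdl.X ω) d')
          / Mdl.a d (Mdl.X ω)) * Mdl.a d (Mdl.X ω) ∂Mdl.P)
      = ∫ ω, (∑ m : Fin 2, Mdl.u (Mdl.X ω) d m * Mdl.f m (Mdl.X ω) d') ∂Mdl.P := by
    refine integral_congr_ae ?_
    filter_upwards [hbd] with ω hω
    exact div_mul_cancel₀ _ (ne_of_gt (hc0.trans hω.1.1))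
  rw [hfinal]
  rfl
end

section
/- Mixed representation of the mediation functional: in the observed-data mediation model with binary treatment and binary mediator, for all d, d' ∈ {0,1}, E[ (1{D = d'} / a(d'|X))·μ(X,d,M) ] = φ(d,d'). -/
open MeasureTheory ProbabilityTheory
open scoped ENNReal

variable {Ω 𝓧 : Type*} [MeasurableSpace Ω] [MeasurableSpace 𝓧]
  {c Cbar ρlo ρhi R : ℝ}

private lemma mediation_integrable_bdd {Ω : Type*} [MeasurableSpace Ω] {P : Measure Ω}
    [IsFiniteMeasure P] {g : Ω → ℝ} (hm : AEStronglyMeasurable g P) {C : ℝ}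
    (hb : ∀ᵐ ω ∂P, |g ω| ≤ C) : Integrable g P :=
  Integrable.mono' (integrable_const C) hm (by simpa [Real.norm_eq_abs] using hb)

private lemma mediation_sm_comap {Ω α : Type*} [MeasurableSpace Ω] [MeasurableSpace α]
    {p : Ω → α} {F : α → ℝ} (hF : Measurable F) :
    StronglyMeasurable[MeasurableSpace.comap p inferInstance] (fun ω => F (p ω)) := by
  have hp : Measurable[MeasurableSpace.comap p inferInstance] p :=
    fun s hs => ⟨s, hs, rfl⟩
  exact (hF.comp hp).stronglyMeasurable

private lemma mediation_integral_mul_condexp {Ω : Type*} [mΩ : MeasurableSpace Ω]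
    {P : Measure Ω} [IsFiniteMeasure P] {m : MeasurableSpace Ω} (hm : m ≤ mΩ) {g h : Ω → ℝ}
    (hg : StronglyMeasurable[m] g) (hgh : Integrable (fun ω => g ω * h ω) P)
    (hh : Integrable h P) :
    ∫ ω, g ω * h ω ∂P = ∫ ω, g ω * (P[h|m]) ω ∂P := by
  have h1 : ∫ ω, g ω * h ω ∂P = ∫ ω, (P[fun ω => g ω * h ω|m]) ω ∂P :=
    (integral_condExp hm).symm
  rw [h1]
  refine integral_congr_ae ?_
  have := condExp_mul_of_stronglyMeasurable_left hg (by simpa [Pi.mul_def] using hgh) hh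
  filter_upwards [this] with ω hω
  simpa [Pi.mul_def] using hω

/-- mixed representation: for all `d, d'`,
`E[ (1{D = d'} / a(d'|X)) · μ(X,d,M) ] = φ(d,d')`. -/
theorem mixed_representation
    (Mdl : MediationModel Ω 𝓧 c Cbar ρlo ρhi R) (d d' : Fin 2) :
    (∫ ω, (if Mdl.D ω = d' then (1 : ℝ) else 0) / Mdl.a d' (Mdl.X ω)
        * Mdl.u (Mdl.X ω) d (Mdl.M ω) ∂Mdl.P) = Mdl.phi d d' := by
  haveI := Mdl.isProb
  have hX := Mdl.hX; have hD := Mdl.hD; have hM := Mdl.hM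
  have hcpos := Mdl.hc
  -- measurability facts
  have measInd : ∀ d0 : Fin 2, Measurable (fun ω => if Mdl.D ω = d0 then (1:ℝ) else 0) := by
    intro d0
    exact Measurable.ite (hD (measurableSet_singleton d0)) measurable_const measurable_const
  have measIndM : ∀ m0 : Fin 2, Measurable (fun ω => if Mdl.M ω = m0 then (1:ℝ) else 0) := by
    intro m0
    exact Measurable.ite (hM (measurableSet_singleton m0)) measurable_const measurable_const
  have measA : Measurable (fun ω => Mdl.a d' (Mdl.X ω)) := (Mdl.ha_meas d').comp hX
  have measU : ∀ m0 : Fin 2, Measurable (fun ω => Mdl.u (Mdl.X ω) d m0) :=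
    fun m0 => (Mdl.hu_meas d m0).comp hX
  have measF : ∀ m0 : Fin 2, Measurable (fun ω => Mdl.f m0 (Mdl.X ω) d') :=
    fun m0 => (Mdl.hf_meas m0 d').comp hX
  have measFD : ∀ m0 : Fin 2, Measurable (fun ω => Mdl.f m0 (Mdl.X ω) (Mdl.D ω)) := by
    intro m0
    have : Measurable (fun p : 𝓧 × Fin 2 => Mdl.f m0 p.1 p.2) := by
      apply measurable_from_prod_countable_left
      intro d0; exact Mdl.hf_meas m0 d0
    exact this.comp (hX.prodMk hD)
  -- a.e. bounds
  have hAbd := Mdl.ha_bdd d'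
  have hAne : ∀ᵐ ω ∂Mdl.P, Mdl.a d' (Mdl.X ω) ≠ 0 := by
    filter_upwards [hAbd] with ω hω
    exact ne_of_gt (lt_trans hcpos hω.1)
  have hIndA : ∀ᵐ ω ∂Mdl.P,
      |(if Mdl.D ω = d' then (1:ℝ) else 0) / Mdl.a d' (Mdl.X ω)| ≤ 1 / c := by
    filter_upwards [hAbd] with ω hω
    have h1 : (0:ℝ) < Mdl.a d' (Mdl.X ω) := lt_trans hcpos hω.1
    have h2 : (1:ℝ) / Mdl.a d' (Mdl.X ω) ≤ 1 / c := by
      apply one_div_le_one_div_of_le hcpos (le_of_lt hω.1)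
    by_cases hd : Mdl.D ω = d'
    · rw [if_pos hd, abs_of_pos (by positivity)]
      exact h2
    · rw [if_neg hd, zero_div, abs_zero]
      exact le_of_lt (div_pos one_pos hcpos)
  have hFbd : ∀ m0 : Fin 2, ∀ᵐ ω ∂Mdl.P, |Mdl.f m0 (Mdl.X ω) d'| ≤ 1 := by
    intro m0
    filter_upwards [Mdl.hf_bdd m0 d'] with ω hω
    rw [abs_le]
    constructor
    · linarith [hω.1, le_of_lt Mdl.hρ1]
    · linarith [hω.2, le_of_lt Mdl.hρ3]
  -- per-mediator-value key identity
  have key : ∀ m0 : Fin 2,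
      (∫ ω, Mdl.u (Mdl.X ω) d m0 * ((if Mdl.D ω = d' then (1:ℝ) else 0) / Mdl.a d' (Mdl.X ω))
          * (if Mdl.M ω = m0 then (1:ℝ) else 0) ∂Mdl.P)
        = ∫ ω, Mdl.u (Mdl.X ω) d m0 * Mdl.f m0 (Mdl.X ω) d' ∂Mdl.P := by
    intro m0
    -- step B : condition on (X, D)
    set g : Ω → ℝ := fun ω =>
      Mdl.u (Mdl.X ω) d m0 * ((if Mdl.D ω = d' then (1:ℝ) else 0) / Mdl.a d' (Mdl.X ω)) with hg_def
    have hg_meas : Measurable g :=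
      (measU m0).mul ((measInd d').div measA)
    have hg_bdd : ∀ᵐ ω ∂Mdl.P, |g ω| ≤ R * (1 / c) := by
      filter_upwards [Mdl.hu_bdd d m0, hIndA] with ω h1 h2
      rw [hg_def, abs_mul]
      exact mul_le_mul h1 h2 (abs_nonneg _) (le_of_lt Mdl.hR)
    have hg_sm : StronglyMeasurable[MeasurableSpace.comap
        (fun ω => (Mdl.X ω, Mdl.D ω)) inferInstance] g := by
      have hF : Measurable (fun p : 𝓧 × Fin 2 =>
          Mdl.u p.1 d m0 * ((if p.2 = d' then (1:ℝ) else 0) / Mdl.a d' p.1)) := by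
        apply Measurable.mul
        · exact (Mdl.hu_meas d m0).comp measurable_fst
        · apply Measurable.div
          · exact Measurable.ite (measurable_snd (measurableSet_singleton d'))
              measurable_const measurable_const
          · exact (Mdl.ha_meas d').comp measurable_fst
      exact mediation_sm_comap hF
    have hmXD : MeasurableSpace.comap (fun ω => (Mdl.X ω, Mdl.D ω)) inferInstance ≤ _ :=
      measurable_iff_comap_le.mp (hX.prodMk hD)
    have hInt1 : Integrable (fun ω => g ω * (if Mdl.M ω = m0 then (1:ℝ) else 0)) Mdl.P := by
      apply mediation_integrable_bdd (hg_meas.mul (measIndM m0)).aestronglyMeasurable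
        (C := R * (1/c))
      filter_upwards [hg_bdd] with ω h1
      rw [Pi.mul_apply, abs_mul]
      calc |g ω| * |if Mdl.M ω = m0 then (1:ℝ) else 0| ≤ |g ω| * 1 := by
            apply mul_le_mul_of_nonneg_left _ (abs_nonneg _)
            by_cases h : Mdl.M ω = m0 <;> simp [h]
        _ ≤ R * (1/c) := by rwa [mul_one]
    have hInt2 : Integrable (fun ω => if Mdl.M ω = m0 then (1:ℝ) else 0) Mdl.P := by
      apply mediation_integrable_bdd (measIndM m0).aestronglyMeasurable (C := 1)
      filter_upwards with ω
      by_cases h : Mdl.M ω = m0 <;> simp [h]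
    have stepB := mediation_integral_mul_condexp hmXD hg_sm hInt1 hInt2
    have stepB' : (∫ ω, g ω * (if Mdl.M ω = m0 then (1:ℝ) else 0) ∂Mdl.P)
        = ∫ ω, g ω * Mdl.f m0 (Mdl.X ω) (Mdl.D ω) ∂Mdl.P := by
      rw [stepB]
      refine integral_congr_ae ?_
      filter_upwards [(Mdl.hf_eq m0).symm] with ω hω
      rw [hω]
    -- rewrite using the indicator to replace D by d'
    have stepB'' : (∫ ω, g ω * Mdl.f m0 (Mdl.X ω) (Mdl.D ω) ∂Mdl.P)
        = ∫ ω, (Mdl.u (Mdl.X ω) d m0 * Mdl.f m0 (Mdl.X ω) d' / Mdl.a d' (Mdl.X ω))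
            * (if Mdl.D ω = d' then (1:ℝ) else 0) ∂Mdl.P := by
      refine integral_congr_ae (Filter.Eventually.of_forall fun ω => ?_)
      rw [hg_def]
      by_cases h : Mdl.D ω = d'
      · simp only [h, if_pos rfl]
        ring
      · simp [h]
    -- step C : condition on X
    set g2 : Ω → ℝ := fun ω =>
      Mdl.u (Mdl.X ω) d m0 * Mdl.f m0 (Mdl.X ω) d' / Mdl.a d' (Mdl.X ω) with hg2_def
    have hg2_meas : Measurable g2 := ((measU m0).mul (measF m0)).div measA
    have hg2_sm : StronglyMeasurable[MeasurableSpace.comap Mdl.X inferInstance] g2 := by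
      have hF : Measurable (fun x : 𝓧 => Mdl.u x d m0 * Mdl.f m0 x d' / Mdl.a d' x) :=
        ((Mdl.hu_meas d m0).mul (Mdl.hf_meas m0 d')).div (Mdl.ha_meas d')
      exact mediation_sm_comap hF
    have hmX : MeasurableSpace.comap Mdl.X inferInstance ≤ _ :=
      measurable_iff_comap_le.mp hX
    have hg2_bdd : ∀ᵐ ω ∂Mdl.P, |g2 ω| ≤ R * 1 * (1 / c) := by
      filter_upwards [Mdl.hu_bdd d m0, hFbd m0, hAbd] with ω h1 h2 h3
      rw [hg2_def, abs_div, abs_mul]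
      have ha0 : (0:ℝ) < Mdl.a d' (Mdl.X ω) := lt_trans hcpos h3.1
      rw [div_le_iff₀ (abs_pos.mpr (ne_of_gt ha0))]
      have : R * 1 * (1/c) * |Mdl.a d' (Mdl.X ω)| = (R * 1) * (|Mdl.a d' (Mdl.X ω)| / c) := by
        ring
      rw [this]
      have h4 : (1:ℝ) ≤ |Mdl.a d' (Mdl.X ω)| / c := by
        rw [le_div_iff₀ hcpos, one_mul, abs_of_pos ha0]
        exact le_of_lt h3.1
      calc |Mdl.u (Mdl.X ω) d m0| * |Mdl.f m0 (Mdl.X ω) d'| ≤ R * 1 :=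
            mul_le_mul h1 h2 (abs_nonneg _) (le_of_lt Mdl.hR)
        _ ≤ R * 1 * (|Mdl.a d' (Mdl.X ω)| / c) := le_mul_of_one_le_right (by nlinarith [le_of_lt Mdl.hR]) h4
    have hInt3 : Integrable (fun ω => g2 ω * (if Mdl.D ω = d' then (1:ℝ) else 0)) Mdl.P := by
      apply mediation_integrable_bdd (hg2_meas.mul (measInd d')).aestronglyMeasurable
        (C := R * 1 * (1/c))
      filter_upwards [hg2_bdd] with ω h1
      rw [Pi.mul_apply, abs_mul]
      calc |g2 ω| * |if Mdl.D ω = d' then (1:ℝ) else 0| ≤ |g2 ω| * 1 := by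
            apply mul_le_mul_of_nonneg_left _ (abs_nonneg _)
            by_cases h : Mdl.D ω = d' <;> simp [h]
        _ ≤ R * 1 * (1/c) := by rwa [mul_one]
    have hInt4 : Integrable (fun ω => if Mdl.D ω = d' then (1:ℝ) else 0) Mdl.P := by
      apply mediation_integrable_bdd (measInd d').aestronglyMeasurable (C := 1)
      filter_upwards with ω
      by_cases h : Mdl.D ω = d' <;> simp [h]
    have stepC := mediation_integral_mul_condexp hmX hg2_sm hInt3 hInt4
    have stepC' : (∫ ω, g2 ω * (if Mdl.D ω = d' then (1:ℝ) else 0) ∂Mdl.P)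
        = ∫ ω, g2 ω * Mdl.a d' (Mdl.X ω) ∂Mdl.P := by
      rw [stepC]
      refine integral_congr_ae ?_
      filter_upwards [(Mdl.ha_eq d').symm] with ω hω
      rw [hω]
    have stepC'' : (∫ ω, g2 ω * Mdl.a d' (Mdl.X ω) ∂Mdl.P)
        = ∫ ω, Mdl.u (Mdl.X ω) d m0 * Mdl.f m0 (Mdl.X ω) d' ∂Mdl.P := by
      refine integral_congr_ae ?_
      filter_upwards [hAne] with ω hω
      rw [hg2_def]
      field_simp
    calc (∫ ω, g ω * (if Mdl.M ω = m0 then (1:ℝ) else 0) ∂Mdl.P)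
        = ∫ ω, (Mdl.u (Mdl.X ω) d m0 * Mdl.f m0 (Mdl.X ω) d' / Mdl.a d' (Mdl.X ω))
            * (if Mdl.D ω = d' then (1:ℝ) else 0) ∂Mdl.P := stepB'.trans stepB''
      _ = ∫ ω, Mdl.u (Mdl.X ω) d m0 * Mdl.f m0 (Mdl.X ω) d' ∂Mdl.P := stepC'.trans stepC''
  -- integrability of the per-m summands
  have hIntTerm : ∀ m0 : Fin 2, Integrable (fun ω =>
      Mdl.u (Mdl.X ω) d m0 * ((if Mdl.D ω = d' then (1:ℝ) else 0) / Mdl.a d' (Mdl.X ω))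
        * (if Mdl.M ω = m0 then (1:ℝ) else 0)) Mdl.P := by
    intro m0
    apply mediation_integrable_bdd
      (((measU m0).mul ((measInd d').div measA)).mul (measIndM m0)).aestronglyMeasurable
      (C := R * (1/c))
    filter_upwards [Mdl.hu_bdd d m0, hIndA] with ω h1 h2
    simp only [Pi.mul_apply, Pi.div_apply]
    rw [abs_mul, abs_mul]
    calc |Mdl.u (Mdl.X ω) d m0| * |(if Mdl.D ω = d' then (1:ℝ) else 0) / Mdl.a d' (Mdl.X ω)|
          * |if Mdl.M ω = m0 then (1:ℝ) else 0|
        ≤ (R * (1/c)) * 1 := by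
          apply mul_le_mul _ _ (abs_nonneg _) (mul_nonneg (le_of_lt Mdl.hR) (by positivity))
          · exact mul_le_mul h1 h2 (abs_nonneg _) (le_of_lt Mdl.hR)
          · by_cases h : Mdl.M ω = m0 <;> simp [h]
      _ = R * (1/c) := mul_one _
  -- split LHS as a sum over m
  have split : (∫ ω, (if Mdl.D ω = d' then (1:ℝ) else 0) / Mdl.a d' (Mdl.X ω)
        * Mdl.u (Mdl.X ω) d (Mdl.M ω) ∂Mdl.P)
      = ∑ m0 : Fin 2, ∫ ω, Mdl.u (Mdl.X ω) d m0
          * ((if Mdl.D ω = d' then (1:ℝ) else 0) / Mdl.a d' (Mdl.X ω))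
          * (if Mdl.M ω = m0 then (1:ℝ) else 0) ∂Mdl.P := by
    refine (integral_congr_ae (Filter.Eventually.of_forall fun ω => ?_)).trans
      (integral_finset_sum _ (fun m0 _ => hIntTerm m0))
    have h2 : Mdl.M ω = 0 ∨ Mdl.M ω = 1 := by
      have : ∀ j : Fin 2, j = 0 ∨ j = 1 := by decide
      exact this _
    rcases h2 with h | h <;> simp [Fin.sum_univ_two, h] <;> ring
  rw [split]
  have : ∀ m0 ∈ (Finset.univ : Finset (Fin 2)),
      (∫ ω, Mdl.u (Mdl.X ω) d m0 * ((if Mdl.D ω = d' then (1:ℝ) else 0) / Mdl.a d' (Mdl.X ω))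
        * (if Mdl.M ω = m0 then (1:ℝ) else 0) ∂Mdl.P)
      = ∫ ω, Mdl.u (Mdl.X ω) d m0 * Mdl.f m0 (Mdl.X ω) d' ∂Mdl.P := fun m0 _ => key m0
  rw [Finset.sum_congr rfl this, MediationModel.phi]
  refine (integral_finset_sum _ (fun m0 _ => ?_)).symm
  apply mediation_integrable_bdd ((measU m0).mul (measF m0)).aestronglyMeasurable (C := R * 1)
  filter_upwards [Mdl.hu_bdd d m0, hFbd m0] with ω h1 h2
  simp only [Pi.mul_apply]
  rw [abs_mul]
  exact mul_le_mul h1 h2 (abs_nonneg _) (le_of_lt Mdl.hR)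
end

section
/- Identification of the natural mediated mean: in the potential-outcomes mediation model with binary treatment and binary mediator, under consistency, the four ignorability conditions, and positivity, for all d, d' ∈ {0,1} we have E[Y(d, M(d'))] = E[ Σ_{m∈{0,1}} μ(X,d,m) f(m|X,d') ] = φ(d,d'). -/
open MeasureTheory ProbabilityTheory
open scoped ENNReal

/-- Potential-outcomes mediation model with binary treatment and binary mediator:
observed data `(X, D, M, Y)`, potential mediators `Mpot d`, potential outcomes
`Ypot d m`, consistency, the four ignorability conditions, and positivity.
`a d x = P(D = d | X = x)`, `f m x d = P(M = m | X = x, D = d)`,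
`u x d m = E[Y | X = x, D = d, M = m]`. -/
structure PotentialOutcomeModel (Ω 𝓧 : Type) [MeasurableSpace Ω] [StandardBorelSpace Ω]
    [MeasurableSpace 𝓧] (c Cbar ρlo ρhi : ℝ) where
  P : Measure Ω
  isProb : IsProbabilityMeasure P
  X : Ω → 𝓧
  D : Ω → Fin 2
  M : Ω → Fin 2
  Y : Ω → ℝ
  Mpot : Fin 2 → Ω → Fin 2
  Ypot : Fin 2 → Fin 2 → Ω → ℝ
  hX : Measurable X
  hD : Measurable D
  hM : Measurable M
  hY : Integrable Y P
  hMpot : ∀ d, Measurable (Mpot d)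
  hYpot_meas : ∀ d m, Measurable (Ypot d m)
  hYpot_int : ∀ d m, Integrable (Ypot d m) P
  hc : 0 < c
  hcC : c ≤ Cbar
  hC : Cbar < 1
  hρ1 : 0 < ρlo
  hρ2 : ρlo ≤ ρhi
  hρ3 : ρhi < 1
  /-- consistency for the mediator : `M = M(D)` a.s. -/
  hconsM : ∀ᵐ ω ∂P, M ω = Mpot (D ω) ω
  /-- consistency for the outcome : `Y = Y(D, M)` a.s. -/
  hconsY : ∀ᵐ ω ∂P, Y ω = Ypot (D ω) (M ω) ω
  /-- no unmeasured treatment-outcome confounding : `Y(d,m) ⫫ D | X`. -/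
  hYD : ∀ d m : Fin 2, haveI := isProb;
    CondIndepFun (MeasurableSpace.comap X inferInstance) hX.comap_le (Ypot d m) D P
  /-- no unmeasured mediator-outcome confounding : `Y(d,m) ⫫ M | (X, D)`. -/
  hYM : ∀ d m : Fin 2, haveI := isProb;
    CondIndepFun (MeasurableSpace.comap (fun ω => (X ω, D ω)) inferInstance)
      (Measurable.comap_le (hX.prodMk hD)) (Ypot d m) M P
  /-- no unmeasured treatment-mediator confounding : `M(d) ⫫ D | X`. -/
  hMD : ∀ d : Fin 2, haveI := isProb;
    CondIndepFun (MeasurableSpace.comap X inferInstance) hX.comap_le (Mpot d) D P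
  /-- cross-world condition : `Y(d,m) ⫫ M(d') | X`. -/
  hcross : ∀ d d' m : Fin 2, haveI := isProb;
    CondIndepFun (MeasurableSpace.comap X inferInstance) hX.comap_le (Ypot d m) (Mpot d') P
  a : Fin 2 → 𝓧 → ℝ
  f : Fin 2 → 𝓧 → Fin 2 → ℝ
  u : 𝓧 → Fin 2 → Fin 2 → ℝ
  ha_meas : ∀ d, Measurable (a d)
  hf_meas : ∀ m d, Measurable fun x => f m x d
  hu_meas : ∀ d m, Measurable fun x => u x d m
  ha_eq : ∀ d, (fun ω => a d (X ω)) =ᵐ[P]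
    P[(fun ω => if D ω = d then (1 : ℝ) else 0) | MeasurableSpace.comap X inferInstance]
  hf_eq : ∀ m, (fun ω => f m (X ω) (D ω)) =ᵐ[P]
    P[(fun ω => if M ω = m then (1 : ℝ) else 0) |
      MeasurableSpace.comap (fun ω => (X ω, D ω)) inferInstance]
  hu_eq : (fun ω => u (X ω) (D ω) (M ω)) =ᵐ[P]
    P[Y | MeasurableSpace.comap (fun ω => (X ω, D ω, M ω)) inferInstance]
  /-- positivity of the propensity score. -/
  ha_bdd : ∀ d, ∀ᵐ ω ∂P, a d (X ω) ∈ Set.Ioo c Cbar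
  /-- positivity of the mediator density. -/
  hf_bdd : ∀ m d, ∀ᵐ ω ∂P, f m (X ω) d ∈ Set.Icc ρlo ρhi

lemma integral_mul_eq_zero_of_forall_preimage {Ω : Type} [MeasurableSpace Ω] {μ : Measure Ω}
    [IsProbabilityMeasure μ] {F W : Ω → ℝ} (hF : Measurable F) (hFi : Integrable F μ)
    (hW : Measurable W) {C : ℝ} (hWb : ∀ᵐ ω ∂μ, |W ω| ≤ C)
    (h0 : ∀ A : Set ℝ, MeasurableSet A → ∫ ω in F ⁻¹' A, W ω ∂μ = 0) :
    ∫ ω, F ω * W ω ∂μ = 0 := by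
  have hWi : Integrable W μ := by
    refine Integrable.mono' (integrable_const C) hW.aestronglyMeasurable ?_
    filter_upwards [hWb] with ω h using by simpa [Real.norm_eq_abs] using h
  set Wp : Ω → ℝ := fun ω => max (W ω) 0 with hWp_def
  set Wn : Ω → ℝ := fun ω => max (-W ω) 0 with hWn_def
  have hWp : Measurable Wp := hW.max measurable_const
  have hWn : Measurable Wn := hW.neg.max measurable_const
  have hWpi : Integrable Wp μ := hWi.pos_part
  have hWni : Integrable Wn μ := hWi.neg.pos_part
  have hsub : ∀ ω, W ω = Wp ω - Wn ω := fun ω =>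
    (max_zero_sub_max_neg_zero_eq_self (W ω)).symm
  -- the two measures
  set νp : Measure ℝ := (μ.withDensity fun ω => ENNReal.ofReal (Wp ω)).map F with hνp_def
  set νn : Measure ℝ := (μ.withDensity fun ω => ENNReal.ofReal (Wn ω)).map F with hνn_def
  have hkey : ∀ A : Set ℝ, MeasurableSet A →
      ∫ ω in F ⁻¹' A, Wp ω ∂μ = ∫ ω in F ⁻¹' A, Wn ω ∂μ := by
    intro A hA
    have h1 : ∫ ω in F ⁻¹' A, (Wp ω - Wn ω) ∂μ = 0 := by
      rw [← h0 A hA]; exact integral_congr_ae (by filter_upwards with ω using (hsub ω).symm)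
    rw [integral_sub hWpi.integrableOn hWni.integrableOn] at h1
    linarith
  have hν : νp = νn := by
    refine Measure.ext fun A hA => ?_
    rw [hνp_def, hνn_def, Measure.map_apply hF hA, Measure.map_apply hF hA,
      withDensity_apply _ (hF hA), withDensity_apply _ (hF hA),
      ← ofReal_integral_eq_lintegral_ofReal hWpi.integrableOn
        (Filter.Eventually.of_forall fun ω => le_max_right _ _),
      ← ofReal_integral_eq_lintegral_ofReal hWni.integrableOn
        (Filter.Eventually.of_forall fun ω => le_max_right _ _),
      hkey A hA]
  have hmap : ∀ (V : Ω → ℝ), Measurable V → (∀ ω, 0 ≤ V ω) →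
      ∫ x, x ∂((μ.withDensity fun ω => ENNReal.ofReal (V ω)).map F)
        = ∫ ω, F ω * V ω ∂μ := by
    intro V hV hV0
    have him := integral_map (μ := μ.withDensity fun ω => ENNReal.ofReal (V ω))
      hF.aemeasurable (aestronglyMeasurable_id (α := ℝ))
    simp only [id_eq] at him
    rw [him]
    have : (fun ω => ENNReal.ofReal (V ω)) = fun ω => ((V ω).toNNReal : ℝ≥0∞) := rfl
    rw [this, integral_withDensity_eq_integral_smul (hV.real_toNNReal)]
    refine integral_congr_ae (Filter.Eventually.of_forall fun ω => ?_)
    simp only [NNReal.smul_def, smul_eq_mul, Real.coe_toNNReal _ (hV0 ω), id]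
    ring
  have hFWp : Integrable (fun ω => F ω * Wp ω) μ := by
    refine hFi.bdd_mul (c := max C 0) hWp.aestronglyMeasurable ?_ |>.congr
      (Filter.Eventually.of_forall fun ω => mul_comm _ _)
    filter_upwards [hWb] with ω h
    simp only [Real.norm_eq_abs, hWp_def]
    rw [abs_of_nonneg (le_max_right _ _)]
    exact max_le_max ((le_abs_self _).trans h) le_rfl
  have hFWn : Integrable (fun ω => F ω * Wn ω) μ := by
    refine hFi.bdd_mul (c := max C 0) hWn.aestronglyMeasurable ?_ |>.congr
      (Filter.Eventually.of_forall fun ω => mul_comm _ _)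
    filter_upwards [hWb] with ω h
    simp only [Real.norm_eq_abs, hWn_def]
    rw [abs_of_nonneg (le_max_right _ _)]
    exact max_le_max ((neg_le_abs _).trans h) le_rfl
  have h1 : ∫ ω, F ω * W ω ∂μ = ∫ ω, F ω * Wp ω ∂μ - ∫ ω, F ω * Wn ω ∂μ := by
    rw [← integral_sub hFWp hFWn]
    refine integral_congr_ae (Filter.Eventually.of_forall fun ω => ?_)
    show F ω * W ω = F ω * Wp ω - F ω * Wn ω
    rw [hsub ω]; ring
  rw [h1, ← hmap Wp hWp (fun ω => le_max_right _ _), ← hmap Wn hWn (fun ω => le_max_right _ _),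
    ← hνp_def, ← hνn_def, hν, sub_self]

set_option maxHeartbeats 1000000 in
lemma condexp_mul_indicator_of_condIndepFun {Ω : Type} {m' : MeasurableSpace Ω}
    [mΩ : MeasurableSpace Ω] [StandardBorelSpace Ω] {μ : Measure Ω} [IsProbabilityMeasure μ]
    (hm' : m' ≤ mΩ)
    {F : Ω → ℝ} {G : Ω → Fin 2} (hF : Measurable F) (hFi : Integrable F μ) (hG : Measurable G)
    (hind : CondIndepFun m' hm' F G μ) (g : Fin 2) :
    μ[(G ⁻¹' {g}).indicator F|m'] =ᵐ[μ]
      fun ω => (μ[F|m']) ω * (μ[(G ⁻¹' {g}).indicator (fun _ => (1:ℝ))|m']) ω := by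
  set t : Set Ω := G ⁻¹' {g} with ht_def
  have ht : MeasurableSet[mΩ] t := hG (measurableSet_singleton g)
  set It : Ω → ℝ := t.indicator (fun _ => (1:ℝ)) with hIt_def
  have hIt_meas : Measurable[mΩ] It := measurable_const.indicator ht
  have hIt_int : Integrable It μ := (integrable_const (1:ℝ)).indicator ht
  have hIt_bdd : ∀ ω, ‖It ω‖ ≤ 1 := by
    intro ω; rw [hIt_def]; by_cases h : ω ∈ t <;> simp [Set.indicator_apply, h]
  have hEIt0 : 0 ≤ᵐ[μ] μ[It|m'] :=
    condExp_nonneg (Filter.Eventually.of_forall fun ω => Set.indicator_nonneg (by simp) ω)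
  have hEIt1 : μ[It|m'] ≤ᵐ[μ] fun _ => (1:ℝ) := by
    have h := condExp_mono (m := m') hIt_int (integrable_const (1:ℝ))
      (Filter.Eventually.of_forall fun ω => (le_abs_self _).trans (hIt_bdd ω))
    rwa [condExp_const hm' (1:ℝ)] at h
  have hEIt_meas : Measurable[mΩ] (μ[It|m']) := (stronglyMeasurable_condExp.mono hm').measurable
  have hEIt_bdd : ∀ᵐ ω ∂μ, ‖(μ[It|m']) ω‖ ≤ 1 := by
    filter_upwards [hEIt0, hEIt1] with ω h0 h1
    rw [Real.norm_eq_abs, abs_of_nonneg h0]; exact h1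
  have hkey : ∀ A : Set ℝ, MeasurableSet A →
      (μ⟦F ⁻¹' A ∩ t|m'⟧) =ᵐ[μ] fun ω => (μ⟦F ⁻¹' A|m'⟧) ω * (μ⟦t|m'⟧) ω :=
    fun A hA => ((condIndepFun_iff_condExp_inter_preimage_eq_mul hF hG).mp hind) A {g} hA
      (measurableSet_singleton g)
  have hpull : ∀ (h φ : Ω → ℝ), StronglyMeasurable[m'] h → (∀ᵐ ω ∂μ, ‖h ω‖ ≤ 1) →
      Integrable φ μ → ∫ ω, h ω * φ ω ∂μ = ∫ ω, h ω * (μ[φ|m']) ω ∂μ := by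
    intro h φ hh hhb hφ
    have hmul : Integrable (fun ω => h ω * φ ω) μ :=
      hφ.bdd_mul ((hh.mono hm').aestronglyMeasurable) hhb
    have hpo := condExp_mul_of_stronglyMeasurable_left hh (by exact hmul) hφ
    calc ∫ ω, h ω * φ ω ∂μ = ∫ ω, (μ[(fun ω => h ω * φ ω)|m']) ω ∂μ :=
          (integral_condExp hm').symm
    _ = ∫ ω, h ω * (μ[φ|m']) ω ∂μ := integral_congr_ae hpo
  refine (ae_eq_condExp_of_forall_setIntegral_eq hm' (hFi.indicator ht) ?_ ?_ ?_).symm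
  · intro s _ _
    exact (integrable_condExp.bdd_mul
      (stronglyMeasurable_condExp.mono hm').aestronglyMeasurable hEIt_bdd |>.congr
      (Filter.Eventually.of_forall fun ω => mul_comm _ _)).integrableOn
  · intro s hs _
    have hsΩ : MeasurableSet[mΩ] s := hm' s hs
    set Is : Ω → ℝ := s.indicator (fun _ => (1:ℝ)) with hIs_def
    have hIs_sm : StronglyMeasurable[m'] Is := stronglyMeasurable_const.indicator hs
    have hIs_meas : Measurable[mΩ] Is := measurable_const.indicator hsΩ
    have hIs_bdd : ∀ ω, ‖Is ω‖ ≤ 1 := by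
      intro ω; rw [hIs_def]; by_cases h : ω ∈ s <;> simp [Set.indicator_apply, h]
    have hind_mul : ∀ (φ : Ω → ℝ) (ω : Ω), Is ω * φ ω = s.indicator φ ω := by
      intro φ ω; rw [hIs_def]; by_cases h : ω ∈ s <;> simp [Set.indicator_apply, h]
    -- h₁ := Is * μ[It|m']
    set h₁ : Ω → ℝ := fun ω => Is ω * (μ[It|m']) ω with hh₁_def
    have hh₁_sm : StronglyMeasurable[m'] h₁ := hIs_sm.mul stronglyMeasurable_condExp
    have hh₁_bdd : ∀ᵐ ω ∂μ, ‖h₁ ω‖ ≤ 1 := by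
      filter_upwards [hEIt_bdd] with ω h
      rw [hh₁_def]
      calc ‖Is ω * (μ[It|m']) ω‖ = ‖Is ω‖ * ‖(μ[It|m']) ω‖ := norm_mul _ _
      _ ≤ 1 * 1 := mul_le_mul (hIs_bdd ω) h (norm_nonneg _) zero_le_one
      _ = 1 := one_mul 1
    set W : Ω → ℝ := fun ω => Is ω * (It ω - (μ[It|m']) ω) with hW_def
    have hW_meas : Measurable[mΩ] W := hIs_meas.mul (hIt_meas.sub hEIt_meas)
    have hW_bdd : ∀ᵐ ω ∂μ, |W ω| ≤ 2 := by
      filter_upwards [hEIt_bdd] with ω h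
      rw [hW_def]
      calc |Is ω * (It ω - (μ[It|m']) ω)| = ‖Is ω‖ * |It ω - (μ[It|m']) ω| := by
            rw [abs_mul]; rfl
      _ ≤ 1 * (|It ω| + |(μ[It|m']) ω|) :=
            mul_le_mul (hIs_bdd ω) (abs_sub _ _) (abs_nonneg _) zero_le_one
      _ ≤ 1 * (1 + 1) :=
            mul_le_mul le_rfl (add_le_add (hIt_bdd ω) h) (by positivity) zero_le_one
      _ = 2 := by norm_num
    have h0 : ∀ A : Set ℝ, MeasurableSet A → ∫ ω in F ⁻¹' A, W ω ∂μ = 0 := by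
      intro A hA
      have hAΩ : MeasurableSet[mΩ] (F ⁻¹' A) := hF hA
      set J : Ω → ℝ := (F ⁻¹' A).indicator (fun _ => (1:ℝ)) with hJ_def
      have hJ_int : Integrable J μ := (integrable_const (1:ℝ)).indicator hAΩ
      have hJ_bdd : ∀ ω, ‖J ω‖ ≤ 1 := by
        intro ω; rw [hJ_def]; by_cases h : ω ∈ F ⁻¹' A <;> simp [Set.indicator_apply, h]
      set K : Ω → ℝ := (F ⁻¹' A ∩ t).indicator (fun _ => (1:ℝ)) with hK_def
      have hK_int : Integrable K μ := (integrable_const (1:ℝ)).indicator (hAΩ.inter ht)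
      have hJIt : ∀ ω, J ω * It ω = K ω := by
        intro ω
        rw [hJ_def, hIt_def, hK_def]
        by_cases h1 : ω ∈ F ⁻¹' A <;> by_cases h2 : ω ∈ t <;>
          simp [Set.indicator_apply, h1, h2]
      have hWsplit : ∀ ω, J ω * W ω = Is ω * K ω - h₁ ω * J ω := by
        intro ω
        rw [hW_def, hh₁_def, ← hJIt ω]; ring
      have hint1 : Integrable (fun ω => Is ω * K ω) μ :=
        hK_int.bdd_mul ((hIs_sm.mono hm').aestronglyMeasurable)
          (Filter.Eventually.of_forall hIs_bdd)
      have hint2 : Integrable (fun ω => h₁ ω * J ω) μ :=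
        hJ_int.bdd_mul ((hh₁_sm.mono hm').aestronglyMeasurable) hh₁_bdd
      have e1 : ∫ ω in F ⁻¹' A, W ω ∂μ = ∫ ω, J ω * W ω ∂μ := by
        rw [← integral_indicator hAΩ]
        refine integral_congr_ae (Filter.Eventually.of_forall fun ω => ?_)
        rw [hJ_def]; by_cases h : ω ∈ F ⁻¹' A <;> simp [Set.indicator_apply, h]
      have e2 : ∫ ω, J ω * W ω ∂μ = ∫ ω, Is ω * K ω ∂μ - ∫ ω, h₁ ω * J ω ∂μ := by
        rw [← integral_sub hint1 hint2]
        exact integral_congr_ae (Filter.Eventually.of_forall fun ω => hWsplit ω)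
      have e3 : ∫ ω, Is ω * K ω ∂μ = ∫ ω, h₁ ω * (μ[J|m']) ω ∂μ := by
        rw [hpull Is K hIs_sm (Filter.Eventually.of_forall hIs_bdd) hK_int]
        have : (μ[K|m']) =ᵐ[μ] fun ω => (μ[J|m']) ω * (μ[It|m']) ω := hkey A hA
        calc ∫ ω, Is ω * (μ[K|m']) ω ∂μ
            = ∫ ω, Is ω * ((μ[J|m']) ω * (μ[It|m']) ω) ∂μ := by
              refine integral_congr_ae ?_
              filter_upwards [this] with ω h using by rw [h]
        _ = ∫ ω, h₁ ω * (μ[J|m']) ω ∂μ := by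
              refine integral_congr_ae (Filter.Eventually.of_forall fun ω => ?_)
              rw [hh₁_def]; ring
      have e4 : ∫ ω, h₁ ω * J ω ∂μ = ∫ ω, h₁ ω * (μ[J|m']) ω ∂μ :=
        hpull h₁ J hh₁_sm hh₁_bdd hJ_int
      rw [e1, e2, e3, e4, sub_self]
    have hz := integral_mul_eq_zero_of_forall_preimage hF hFi hW_meas hW_bdd h0
    -- now conclude the set integral equality
    have hintl : Integrable (fun ω => Is ω * (It ω * F ω)) μ :=
      (hFi.bdd_mul hIt_meas.aestronglyMeasurable
        (Filter.Eventually.of_forall hIt_bdd)).bdd_mul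
        ((hIs_sm.mono hm').aestronglyMeasurable) (Filter.Eventually.of_forall hIs_bdd)
    have hintr : Integrable (fun ω => h₁ ω * F ω) μ :=
      hFi.bdd_mul ((hh₁_sm.mono hm').aestronglyMeasurable) hh₁_bdd
    have hz' : ∫ ω, Is ω * (It ω * F ω) ∂μ = ∫ ω, h₁ ω * F ω ∂μ := by
      have : ∫ ω, (fun ω => Is ω * (It ω * F ω)) ω - (fun ω => h₁ ω * F ω) ω ∂μ = 0 := by
        rw [← hz]
        refine integral_congr_ae (Filter.Eventually.of_forall fun ω => ?_)
        show Is ω * (It ω * F ω) - h₁ ω * F ω = F ω * W ω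
        rw [hW_def, hh₁_def]; ring
      rw [integral_sub hintl hintr] at this
      linarith
    calc ∫ ω in s, (μ[F|m']) ω * (μ[It|m']) ω ∂μ
        = ∫ ω, Is ω * ((μ[F|m']) ω * (μ[It|m']) ω) ∂μ := by
          rw [← integral_indicator hsΩ]
          exact integral_congr_ae (Filter.Eventually.of_forall fun ω => (hind_mul _ ω).symm)
    _ = ∫ ω, h₁ ω * (μ[F|m']) ω ∂μ := by
          refine integral_congr_ae (Filter.Eventually.of_forall fun ω => ?_)
          rw [hh₁_def]; ring
    _ = ∫ ω, h₁ ω * F ω ∂μ := (hpull h₁ F hh₁_sm hh₁_bdd hFi).symm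
    _ = ∫ ω, Is ω * (It ω * F ω) ∂μ := hz'.symm
    _ = ∫ ω in s, t.indicator F ω ∂μ := by
          rw [← integral_indicator hsΩ]
          refine integral_congr_ae (Filter.Eventually.of_forall fun ω => ?_)
          rw [hIt_def]
          by_cases h1 : ω ∈ s <;> by_cases h2 : ω ∈ t <;>
            simp [hind_mul, Set.indicator_apply, h1, h2]
  · exact (stronglyMeasurable_condExp.mul stronglyMeasurable_condExp).aestronglyMeasurable

lemma condexp_mul_ite_of_condIndepFun {Ω : Type} {m' : MeasurableSpace Ω}
    [mΩ : MeasurableSpace Ω] [StandardBorelSpace Ω] {μ : Measure Ω} [IsProbabilityMeasure μ]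
    (hm' : m' ≤ mΩ)
    {F : Ω → ℝ} {G : Ω → Fin 2} (hF : Measurable F) (hFi : Integrable F μ) (hG : Measurable G)
    (hind : CondIndepFun m' hm' F G μ) (g : Fin 2) :
    μ[(fun ω => F ω * (if G ω = g then (1:ℝ) else 0))|m'] =ᵐ[μ]
      fun ω => (μ[F|m']) ω * (μ[(fun ω => if G ω = g then (1:ℝ) else 0)|m']) ω := by
  have h1 : (fun ω => F ω * (if G ω = g then (1:ℝ) else 0)) = (G ⁻¹' {g}).indicator F := by
    funext ω; by_cases h : G ω = g <;> simp [Set.indicator_apply, h]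
  have h2 : (fun ω => if G ω = g then (1:ℝ) else 0)
      = (G ⁻¹' {g}).indicator (fun _ => (1:ℝ)) := by
    funext ω; by_cases h : G ω = g <;> simp [Set.indicator_apply, h]
  rw [h1, h2]
  exact condexp_mul_indicator_of_condIndepFun hm' hF hFi hG hind g

lemma ae_cancel_right {α : Type} [MeasurableSpace α] {μ : Measure α} {h g a : α → ℝ}
    (hne : ∀ᵐ ω ∂μ, a ω ≠ 0)
    (hae : (fun ω => h ω * a ω) =ᵐ[μ] fun ω => g ω * a ω) : h =ᵐ[μ] g := by
  filter_upwards [hne, hae] with ω h1 h2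
  exact mul_right_cancel₀ h1 h2

lemma sm_comp_s5 {α β : Type} [mβ : MeasurableSpace β] (X : α → β) {v : β → ℝ}
    (hv : Measurable v) :
    StronglyMeasurable[MeasurableSpace.comap X mβ] (fun ω => v (X ω)) :=
  Measurable.stronglyMeasurable (hv.comp (Measurable.of_comap_le le_rfl))

lemma measurable_ite_fin2 (g : Fin 2) : Measurable (fun k : Fin 2 => if k = g then (1:ℝ) else 0) :=
  measurable_of_countable _

lemma condexp_pullout {Ω : Type} {m' : MeasurableSpace Ω} [mΩ : MeasurableSpace Ω]
    {μ : Measure Ω} {h f : Ω → ℝ} (hsm : StronglyMeasurable[m'] h)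
    (hint : Integrable (fun ω => h ω * f ω) μ) (hf : Integrable f μ) :
    μ[(fun ω => h ω * f ω)|m'] =ᵐ[μ] fun ω => h ω * (μ[f|m']) ω := by
  have := condExp_mul_of_stronglyMeasurable_left hsm (by exact hint) hf
  exact this

lemma int_ite {Ω : Type} [MeasurableSpace Ω] {μ : Measure Ω} [IsProbabilityMeasure μ]
    {G : Ω → Fin 2} (hG : Measurable G) (g : Fin 2) :
    Integrable (fun ω => if G ω = g then (1:ℝ) else 0) μ := by
  refine Integrable.mono' (integrable_const 1)
    (((measurable_ite_fin2 g).comp hG).aestronglyMeasurable)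
    (Filter.Eventually.of_forall fun ω => ?_)
  by_cases h : G ω = g <;> simp [h]

namespace PotentialOutcomeModel

variable {Ω 𝓧 : Type} [MeasurableSpace Ω] [StandardBorelSpace Ω] [MeasurableSpace 𝓧]
  {c Cbar ρlo ρhi : ℝ} (Mdl : PotentialOutcomeModel Ω 𝓧 c Cbar ρlo ρhi)

lemma le_XD : MeasurableSpace.comap Mdl.X inferInstance ≤
    MeasurableSpace.comap (fun ω => (Mdl.X ω, Mdl.D ω)) inferInstance := by
  have h := MeasurableSpace.comap_mono (g := fun ω => (Mdl.X ω, Mdl.D ω))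
    (measurable_fst : Measurable (Prod.fst : 𝓧 × Fin 2 → 𝓧)).comap_le
  rw [MeasurableSpace.comap_comp] at h
  exact h

lemma le_XDM : MeasurableSpace.comap (fun ω => (Mdl.X ω, Mdl.D ω)) inferInstance ≤
    MeasurableSpace.comap (fun ω => (Mdl.X ω, Mdl.D ω, Mdl.M ω)) inferInstance := by
  have hproj : Measurable (fun q : 𝓧 × Fin 2 × Fin 2 => (q.1, q.2.1)) :=
    measurable_fst.prodMk (measurable_fst.comp measurable_snd)
  have h := MeasurableSpace.comap_mono (g := fun ω => (Mdl.X ω, Mdl.D ω, Mdl.M ω)) hproj.comap_le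
  rw [MeasurableSpace.comap_comp] at h
  exact h


/-- conditional expectation of the joint indicator of `(D,M)` given `X`. -/
lemma stepDM (d m : Fin 2) :
    Mdl.P[(fun ω => (if Mdl.D ω = d then (1:ℝ) else 0) * (if Mdl.M ω = m then (1:ℝ) else 0))|
        MeasurableSpace.comap Mdl.X inferInstance]
      =ᵐ[Mdl.P] fun ω => Mdl.f m (Mdl.X ω) d * Mdl.a d (Mdl.X ω) := by
  haveI := Mdl.isProb
  have hmX : MeasurableSpace.comap Mdl.X inferInstance ≤ _ := Mdl.hX.comap_le
  have hmXD : MeasurableSpace.comap (fun ω => (Mdl.X ω, Mdl.D ω)) inferInstance ≤ _ :=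
    (Mdl.hX.prodMk Mdl.hD).comap_le
  have hle1 := Mdl.le_XD
  have hID'_int := int_ite (μ := Mdl.P) Mdl.hD d
  have hIMm_int := int_ite (μ := Mdl.P) Mdl.hM m
  have hfX_meas : Measurable (fun ω => Mdl.f m (Mdl.X ω) d) := (Mdl.hf_meas m d).comp Mdl.hX
  have hfX_bdd : ∀ᵐ ω ∂Mdl.P, ‖Mdl.f m (Mdl.X ω) d‖ ≤ ρhi := by
    filter_upwards [Mdl.hf_bdd m d] with ω h
    rw [Real.norm_eq_abs, abs_of_nonneg (le_trans Mdl.hρ1.le h.1)]; exact h.2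
  have hsmID' : StronglyMeasurable[MeasurableSpace.comap (fun ω => (Mdl.X ω, Mdl.D ω))
      inferInstance] (fun ω => if Mdl.D ω = d then (1:ℝ) else 0) := by
    have := sm_comp_s5 (fun ω => (Mdl.X ω, Mdl.D ω))
      (v := fun p : 𝓧 × Fin 2 => if p.2 = d then (1:ℝ) else 0)
      ((measurable_ite_fin2 d).comp measurable_snd)
    exact this
  have hintDM : Integrable (fun ω => (if Mdl.D ω = d then (1:ℝ) else 0) *
      (if Mdl.M ω = m then (1:ℝ) else 0)) Mdl.P := by
    refine hIMm_int.bdd_mul (c := 1) (((measurable_ite_fin2 d).comp Mdl.hD).aestronglyMeasurable)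
      (Filter.Eventually.of_forall fun ω => ?_)
    by_cases h : Mdl.D ω = d <;> simp [h]
  have w3 := condexp_pullout (μ := Mdl.P) hsmID' hintDM hIMm_int
  have w4 := (Mdl.hf_eq m).symm
  have w5 : (fun ω => (if Mdl.D ω = d then (1:ℝ) else 0) *
        (Mdl.P[(fun ω => if Mdl.M ω = m then (1:ℝ) else 0)|
          MeasurableSpace.comap (fun ω => (Mdl.X ω, Mdl.D ω)) inferInstance]) ω) =ᵐ[Mdl.P]
      fun ω => Mdl.f m (Mdl.X ω) d * (if Mdl.D ω = d then (1:ℝ) else 0) := by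
    filter_upwards [w4] with ω h4
    rw [h4]
    by_cases h : Mdl.D ω = d
    · rw [h]; ring
    · rw [if_neg h]; ring
  have hintfID' : Integrable (fun ω => Mdl.f m (Mdl.X ω) d *
      (if Mdl.D ω = d then (1:ℝ) else 0)) Mdl.P :=
    hID'_int.bdd_mul hfX_meas.aestronglyMeasurable hfX_bdd
  have w6 := condexp_pullout (μ := Mdl.P) (sm_comp_s5 Mdl.X (Mdl.hf_meas m d)) hintfID' hID'_int
  have w7 := (Mdl.ha_eq d).symm
  refine ((condExp_condExp_of_le hle1 hmXD).symm).trans ?_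
  refine (condExp_congr_ae (w3.trans w5)).trans ?_
  refine w6.trans ?_
  filter_upwards [w7] with ω h7
  rw [h7]

/-- Step A : identification of the potential-mediator distribution. -/
lemma stepA (m d' : Fin 2) :
    Mdl.P[(fun ω => if Mdl.Mpot d' ω = m then (1:ℝ) else 0)|
        MeasurableSpace.comap Mdl.X inferInstance]
      =ᵐ[Mdl.P] fun ω => Mdl.f m (Mdl.X ω) d' := by
  haveI := Mdl.isProb
  have hmX : MeasurableSpace.comap Mdl.X inferInstance ≤ _ := Mdl.hX.comap_le
  have hmXD : MeasurableSpace.comap (fun ω => (Mdl.X ω, Mdl.D ω)) inferInstance ≤ _ :=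
    (Mdl.hX.prodMk Mdl.hD).comap_le
  have hle1 := Mdl.le_XD
  -- basic integrability and measurability
  have hIM'_meas : Measurable (fun ω => if Mdl.Mpot d' ω = m then (1:ℝ) else 0) :=
    (measurable_ite_fin2 m).comp (Mdl.hMpot d')
  have hIM'_int := int_ite (μ := Mdl.P) (Mdl.hMpot d') m
  have hID'_int := int_ite (μ := Mdl.P) Mdl.hD d'
  have hIMm_int := int_ite (μ := Mdl.P) Mdl.hM m
  have hfX_meas : Measurable (fun ω => Mdl.f m (Mdl.X ω) d') := (Mdl.hf_meas m d').comp Mdl.hX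
  have hfX_bdd : ∀ᵐ ω ∂Mdl.P, ‖Mdl.f m (Mdl.X ω) d'‖ ≤ ρhi := by
    filter_upwards [Mdl.hf_bdd m d'] with ω h
    rw [Real.norm_eq_abs, abs_of_nonneg (le_trans Mdl.hρ1.le h.1)]; exact h.2
  -- conditional independence for the indicator of the potential mediator and D
  have hciA : CondIndepFun (MeasurableSpace.comap Mdl.X inferInstance) Mdl.hX.comap_le
      (fun ω => if Mdl.Mpot d' ω = m then (1:ℝ) else 0) Mdl.D Mdl.P := by
    have := (Mdl.hMD d').comp (measurable_ite_fin2 m) measurable_id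
    exact this
  -- way 1 : independence product formula
  have way1 := condexp_mul_ite_of_condIndepFun hmX hIM'_meas hIM'_int Mdl.hD hciA d'
  -- way 2 : tower computation
  have w0 : (fun ω => (if Mdl.Mpot d' ω = m then (1:ℝ) else 0) *
        (if Mdl.D ω = d' then (1:ℝ) else 0)) =ᵐ[Mdl.P]
      fun ω => (if Mdl.D ω = d' then (1:ℝ) else 0) * (if Mdl.M ω = m then (1:ℝ) else 0) := by
    filter_upwards [Mdl.hconsM] with ω hω
    by_cases h : Mdl.D ω = d'
    · have e : Mdl.Mpot d' ω = Mdl.M ω := by rw [hω, h]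
      rw [e]; ring
    · rw [if_neg h]; ring
  have t2 : Mdl.P[(fun ω => (if Mdl.Mpot d' ω = m then (1:ℝ) else 0) *
        (if Mdl.D ω = d' then (1:ℝ) else 0))|MeasurableSpace.comap Mdl.X inferInstance]
      =ᵐ[Mdl.P] fun ω => Mdl.f m (Mdl.X ω) d' * Mdl.a d' (Mdl.X ω) :=
    (condExp_congr_ae w0).trans (Mdl.stepDM d' m)
  have w7 := (Mdl.ha_eq d').symm
  -- combine and cancel
  have key : (fun ω => (Mdl.P[(fun ω => if Mdl.Mpot d' ω = m then (1:ℝ) else 0)|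
          MeasurableSpace.comap Mdl.X inferInstance]) ω * Mdl.a d' (Mdl.X ω)) =ᵐ[Mdl.P]
      fun ω => Mdl.f m (Mdl.X ω) d' * Mdl.a d' (Mdl.X ω) := by
    have h1 := way1.symm.trans t2
    have h2 := Mdl.ha_eq d'
    filter_upwards [h1, h2] with ω e1 e2
    rw [← e1, e2]
  refine ae_cancel_right ?_ key
  filter_upwards [Mdl.ha_bdd d'] with ω h
  exact ne_of_gt (lt_trans Mdl.hc h.1)

/-- integrability of `u(X, d, m)`. -/
lemma u_int (d m : Fin 2) : Integrable (fun ω => Mdl.u (Mdl.X ω) d m) Mdl.P := by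
  haveI := Mdl.isProb
  have huXDM : Integrable (fun ω => Mdl.u (Mdl.X ω) (Mdl.D ω) (Mdl.M ω)) Mdl.P :=
    integrable_condExp.congr Mdl.hu_eq.symm
  have hA_meas : Measurable (fun ω => (if Mdl.D ω = d then (1:ℝ) else 0) *
      (if Mdl.M ω = m then (1:ℝ) else 0)) :=
    (((measurable_ite_fin2 d).comp Mdl.hD)).mul ((measurable_ite_fin2 m).comp Mdl.hM)
  have hA_bdd : ∀ᵐ ω ∂Mdl.P, ‖(if Mdl.D ω = d then (1:ℝ) else 0) *
      (if Mdl.M ω = m then (1:ℝ) else 0)‖ ≤ 1 := by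
    refine Filter.Eventually.of_forall fun ω => ?_
    by_cases h1 : Mdl.D ω = d <;> by_cases h2 : Mdl.M ω = m <;> simp [h1, h2]
  have hA_int : Integrable (fun ω => (if Mdl.D ω = d then (1:ℝ) else 0) *
      (if Mdl.M ω = m then (1:ℝ) else 0)) Mdl.P := by
    refine Integrable.mono' (integrable_const 1) hA_meas.aestronglyMeasurable hA_bdd
  have hvA_int : Integrable (fun ω => |Mdl.u (Mdl.X ω) d m| *
      ((if Mdl.D ω = d then (1:ℝ) else 0) * (if Mdl.M ω = m then (1:ℝ) else 0))) Mdl.P := by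
    have h1 : Integrable (fun ω => ((if Mdl.D ω = d then (1:ℝ) else 0) *
        (if Mdl.M ω = m then (1:ℝ) else 0)) * |Mdl.u (Mdl.X ω) (Mdl.D ω) (Mdl.M ω)|) Mdl.P :=
      huXDM.abs.bdd_mul hA_meas.aestronglyMeasurable hA_bdd
    refine h1.congr (Filter.Eventually.of_forall fun ω => ?_)
    dsimp only
    by_cases h1 : Mdl.D ω = d
    · by_cases h2 : Mdl.M ω = m
      · rw [h1, h2]; ring
      · rw [if_neg h2]; ring
    · rw [if_neg h1]; ring
  have hpull := condexp_pullout (μ := Mdl.P) (m' := MeasurableSpace.comap Mdl.X inferInstance)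
    (sm_comp_s5 Mdl.X (Mdl.hu_meas d m).abs) hvA_int hA_int
  have hDM := Mdl.stepDM d m
  have hg_int : Integrable (fun ω => |Mdl.u (Mdl.X ω) d m| *
      (Mdl.f m (Mdl.X ω) d * Mdl.a d (Mdl.X ω))) Mdl.P := by
    refine integrable_condExp.congr (hpull.trans ?_)
    filter_upwards [hDM] with ω h
    rw [h]
  refine Integrable.mono' (hg_int.const_mul ((ρlo * c)⁻¹))
    ((Mdl.hu_meas d m).comp Mdl.hX).aestronglyMeasurable ?_
  filter_upwards [Mdl.hf_bdd m d, Mdl.ha_bdd d] with ω hf ha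
  have hρc : 0 < ρlo * c := mul_pos Mdl.hρ1 Mdl.hc
  have h1 : ρlo * c ≤ Mdl.f m (Mdl.X ω) d * Mdl.a d (Mdl.X ω) :=
    mul_le_mul hf.1 ha.1.le Mdl.hc.le (le_trans Mdl.hρ1.le hf.1)
  rw [Real.norm_eq_abs]
  calc |Mdl.u (Mdl.X ω) d m| = (ρlo * c)⁻¹ * ((ρlo * c) * |Mdl.u (Mdl.X ω) d m|) := by
        rw [← mul_assoc, inv_mul_cancel₀ hρc.ne', one_mul]
  _ ≤ (ρlo * c)⁻¹ * (|Mdl.u (Mdl.X ω) d m| * (Mdl.f m (Mdl.X ω) d * Mdl.a d (Mdl.X ω))) := by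
        refine mul_le_mul_of_nonneg_left ?_ (by positivity)
        rw [mul_comm (ρlo * c)]
        exact mul_le_mul_of_nonneg_left h1 (abs_nonneg _)

/-- Step B : identification of the conditional mean of the potential outcome. -/
lemma stepB (d m : Fin 2) :
    Mdl.P[Mdl.Ypot d m|MeasurableSpace.comap Mdl.X inferInstance]
      =ᵐ[Mdl.P] fun ω => Mdl.u (Mdl.X ω) d m := by
  haveI := Mdl.isProb
  have hmX : MeasurableSpace.comap Mdl.X inferInstance ≤ _ := Mdl.hX.comap_le
  have hmXD : MeasurableSpace.comap (fun ω => (Mdl.X ω, Mdl.D ω)) inferInstance ≤ _ :=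
    (Mdl.hX.prodMk Mdl.hD).comap_le
  have hmXDM : MeasurableSpace.comap (fun ω => (Mdl.X ω, Mdl.D ω, Mdl.M ω)) inferInstance ≤ _ :=
    (Mdl.hX.prodMk (Mdl.hD.prodMk Mdl.hM)).comap_le
  have hle1 := Mdl.le_XD
  have hle2 := Mdl.le_XDM
  have hID_int := int_ite (μ := Mdl.P) Mdl.hD d
  have hIM_int := int_ite (μ := Mdl.P) Mdl.hM m
  have hID_meas : Measurable (fun ω => if Mdl.D ω = d then (1:ℝ) else 0) :=
    (measurable_ite_fin2 d).comp Mdl.hD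
  have hIM_meas : Measurable (fun ω => if Mdl.M ω = m then (1:ℝ) else 0) :=
    (measurable_ite_fin2 m).comp Mdl.hM
  have hID_bdd : ∀ᵐ ω ∂Mdl.P, ‖(if Mdl.D ω = d then (1:ℝ) else 0)‖ ≤ 1 :=
    Filter.Eventually.of_forall fun ω => by by_cases h : Mdl.D ω = d <;> simp [h]
  have hIM_bdd : ∀ᵐ ω ∂Mdl.P, ‖(if Mdl.M ω = m then (1:ℝ) else 0)‖ ≤ 1 :=
    Filter.Eventually.of_forall fun ω => by by_cases h : Mdl.M ω = m <;> simp [h]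
  have hsmID : StronglyMeasurable[MeasurableSpace.comap (fun ω => (Mdl.X ω, Mdl.D ω))
      inferInstance] (fun ω => if Mdl.D ω = d then (1:ℝ) else 0) := by
    have := sm_comp_s5 (fun ω => (Mdl.X ω, Mdl.D ω))
      (v := fun p : 𝓧 × Fin 2 => if p.2 = d then (1:ℝ) else 0)
      ((measurable_ite_fin2 d).comp measurable_snd)
    exact this
  have hsmIDIM : StronglyMeasurable[MeasurableSpace.comap (fun ω => (Mdl.X ω, Mdl.D ω, Mdl.M ω))
      inferInstance] (fun ω => (if Mdl.D ω = d then (1:ℝ) else 0) *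
        (if Mdl.M ω = m then (1:ℝ) else 0)) := by
    have := sm_comp_s5 (fun ω => (Mdl.X ω, Mdl.D ω, Mdl.M ω))
      (v := fun p : 𝓧 × Fin 2 × Fin 2 => (if p.2.1 = d then (1:ℝ) else 0) *
        (if p.2.2 = m then (1:ℝ) else 0))
      ((((measurable_ite_fin2 d).comp (measurable_fst.comp measurable_snd))).mul
        ((measurable_ite_fin2 m).comp (measurable_snd.comp measurable_snd)))
    exact this
  have hsmuX : StronglyMeasurable[MeasurableSpace.comap Mdl.X inferInstance]
      (fun ω => Mdl.u (Mdl.X ω) d m) := sm_comp_s5 Mdl.X (Mdl.hu_meas d m)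
  have huXDM : Integrable (fun ω => Mdl.u (Mdl.X ω) (Mdl.D ω) (Mdl.M ω)) Mdl.P :=
    integrable_condExp.congr Mdl.hu_eq.symm
  have hu_int := Mdl.u_int d m
  have hYpot_int := Mdl.hYpot_int d m
  have hYpot_meas := Mdl.hYpot_meas d m
  -- a.e. lower bound for f m (X ω) (D ω)
  have hfD_bdd : ∀ᵐ ω ∂Mdl.P, ρlo ≤ Mdl.f m (Mdl.X ω) (Mdl.D ω) := by
    filter_upwards [Mdl.hf_bdd m 0, Mdl.hf_bdd m 1] with ω h0 h1
    have : Mdl.D ω = 0 ∨ Mdl.D ω = 1 := by omega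
    rcases this with h | h <;> rw [h]
    exacts [h0.1, h1.1]
  ------------------------------------------------------------------
  -- Stage 1
  ------------------------------------------------------------------
  have b1 := condexp_mul_ite_of_condIndepFun hmXD hYpot_meas hYpot_int Mdl.hM (Mdl.hYM d m) m
  have b2 := (Mdl.hf_eq m).symm
  have hintYpotIM : Integrable (fun ω => Mdl.Ypot d m ω * (if Mdl.M ω = m then (1:ℝ) else 0))
      Mdl.P := by
    refine (hYpot_int.bdd_mul hIM_meas.aestronglyMeasurable hIM_bdd).congr
      (Filter.Eventually.of_forall fun ω => mul_comm _ _)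
  have hintIDYpotIM : Integrable (fun ω => (if Mdl.D ω = d then (1:ℝ) else 0) *
      (Mdl.Ypot d m ω * (if Mdl.M ω = m then (1:ℝ) else 0))) Mdl.P :=
    hintYpotIM.bdd_mul hID_meas.aestronglyMeasurable hID_bdd
  have b3 := condexp_pullout (μ := Mdl.P) hsmID hintIDYpotIM hintYpotIM
  have hintIDIMY : Integrable (fun ω => ((if Mdl.D ω = d then (1:ℝ) else 0) *
      (if Mdl.M ω = m then (1:ℝ) else 0)) * Mdl.Y ω) Mdl.P := by
    refine Mdl.hY.bdd_mul (c := 1) ?_ ?_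
    · exact (hID_meas.mul hIM_meas).aestronglyMeasurable
    · filter_upwards [hID_bdd, hIM_bdd] with ω g1 g2
      calc ‖(if Mdl.D ω = d then (1:ℝ) else 0) * (if Mdl.M ω = m then (1:ℝ) else 0)‖
          = ‖(if Mdl.D ω = d then (1:ℝ) else 0)‖ * ‖(if Mdl.M ω = m then (1:ℝ) else 0)‖ :=
            norm_mul _ _
      _ ≤ 1 * 1 := mul_le_mul g1 g2 (norm_nonneg _) zero_le_one
      _ = 1 := one_mul 1
  have b4 : (fun ω => (if Mdl.D ω = d then (1:ℝ) else 0) *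
        (Mdl.Ypot d m ω * (if Mdl.M ω = m then (1:ℝ) else 0))) =ᵐ[Mdl.P]
      fun ω => ((if Mdl.D ω = d then (1:ℝ) else 0) *
        (if Mdl.M ω = m then (1:ℝ) else 0)) * Mdl.Y ω := by
    filter_upwards [Mdl.hconsY] with ω hω
    by_cases h1 : Mdl.D ω = d
    · by_cases h2 : Mdl.M ω = m
      · rw [hω, h1, h2]; ring
      · rw [if_neg h2]; ring
    · rw [if_neg h1]; ring
  have b5 := (condExp_condExp_of_le hle2 hmXDM (μ := Mdl.P)
    (f := fun ω => ((if Mdl.D ω = d then (1:ℝ) else 0) *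
      (if Mdl.M ω = m then (1:ℝ) else 0)) * Mdl.Y ω)).symm
  have b6 := condexp_pullout (μ := Mdl.P) hsmIDIM hintIDIMY Mdl.hY
  have b7 : (fun ω => ((if Mdl.D ω = d then (1:ℝ) else 0) * (if Mdl.M ω = m then (1:ℝ) else 0)) *
        (Mdl.P[Mdl.Y|MeasurableSpace.comap (fun ω => (Mdl.X ω, Mdl.D ω, Mdl.M ω))
          inferInstance]) ω) =ᵐ[Mdl.P]
      fun ω => ((if Mdl.D ω = d then (1:ℝ) else 0) * Mdl.u (Mdl.X ω) d m) *
        (if Mdl.M ω = m then (1:ℝ) else 0) := by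
    filter_upwards [Mdl.hu_eq.symm] with ω hω
    rw [hω]
    by_cases h1 : Mdl.D ω = d
    · by_cases h2 : Mdl.M ω = m
      · rw [h1, h2]; ring
      · rw [if_neg h2]; ring
    · rw [if_neg h1]; ring
  have hsmIDu : StronglyMeasurable[MeasurableSpace.comap (fun ω => (Mdl.X ω, Mdl.D ω))
      inferInstance] (fun ω => (if Mdl.D ω = d then (1:ℝ) else 0) * Mdl.u (Mdl.X ω) d m) :=
    hsmID.mul (hsmuX.mono hle1)
  have hintIDuIM : Integrable (fun ω => ((if Mdl.D ω = d then (1:ℝ) else 0) *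
      Mdl.u (Mdl.X ω) d m) * (if Mdl.M ω = m then (1:ℝ) else 0)) Mdl.P := by
    have base : Integrable (fun ω => ((if Mdl.D ω = d then (1:ℝ) else 0) *
        (if Mdl.M ω = m then (1:ℝ) else 0)) * Mdl.u (Mdl.X ω) (Mdl.D ω) (Mdl.M ω)) Mdl.P := by
      refine huXDM.bdd_mul (c := 1) (hID_meas.mul hIM_meas).aestronglyMeasurable ?_
      filter_upwards [hID_bdd, hIM_bdd] with ω g1 g2
      calc ‖(if Mdl.D ω = d then (1:ℝ) else 0) * (if Mdl.M ω = m then (1:ℝ) else 0)‖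
          = ‖(if Mdl.D ω = d then (1:ℝ) else 0)‖ * ‖(if Mdl.M ω = m then (1:ℝ) else 0)‖ :=
            norm_mul _ _
      _ ≤ 1 * 1 := mul_le_mul g1 g2 (norm_nonneg _) zero_le_one
      _ = 1 := one_mul 1
    refine base.congr (Filter.Eventually.of_forall fun ω => ?_)
    dsimp only
    by_cases h1 : Mdl.D ω = d
    · by_cases h2 : Mdl.M ω = m
      · rw [h1, h2]; ring
      · rw [if_neg h2]; ring
    · rw [if_neg h1]; ring
  have b8 := condexp_pullout (μ := Mdl.P) hsmIDu hintIDuIM hIM_int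
  -- stage-1 conclusion with cancellation of f m (X ω) (D ω)
  have stage1 : (fun ω => (if Mdl.D ω = d then (1:ℝ) else 0) *
        (Mdl.P[Mdl.Ypot d m|MeasurableSpace.comap (fun ω => (Mdl.X ω, Mdl.D ω))
          inferInstance]) ω) =ᵐ[Mdl.P]
      fun ω => (if Mdl.D ω = d then (1:ℝ) else 0) * Mdl.u (Mdl.X ω) d m := by
    have lhs_chain : (fun ω => ((if Mdl.D ω = d then (1:ℝ) else 0) *
          (Mdl.P[Mdl.Ypot d m|MeasurableSpace.comap (fun ω => (Mdl.X ω, Mdl.D ω))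
            inferInstance]) ω) * Mdl.f m (Mdl.X ω) (Mdl.D ω)) =ᵐ[Mdl.P]
        fun ω => ((if Mdl.D ω = d then (1:ℝ) else 0) * Mdl.u (Mdl.X ω) d m) *
          Mdl.f m (Mdl.X ω) (Mdl.D ω) := by
      -- left side equals ID * condexp(Ypot * IM) via b1, b2
      have l1 : (fun ω => (if Mdl.D ω = d then (1:ℝ) else 0) *
            (Mdl.P[(fun ω => Mdl.Ypot d m ω * (if Mdl.M ω = m then (1:ℝ) else 0))|
              MeasurableSpace.comap (fun ω => (Mdl.X ω, Mdl.D ω)) inferInstance]) ω) =ᵐ[Mdl.P]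
          fun ω => ((if Mdl.D ω = d then (1:ℝ) else 0) *
            (Mdl.P[Mdl.Ypot d m|MeasurableSpace.comap (fun ω => (Mdl.X ω, Mdl.D ω))
              inferInstance]) ω) * Mdl.f m (Mdl.X ω) (Mdl.D ω) := by
        filter_upwards [b1, b2] with ω e1 e2
        rw [e1, e2]; ring
      -- right side : ID * condexp(Ypot * IM) = (ID * u) * f via b3..b8
      have r1 : (fun ω => (if Mdl.D ω = d then (1:ℝ) else 0) *
            (Mdl.P[(fun ω => Mdl.Ypot d m ω * (if Mdl.M ω = m then (1:ℝ) else 0))|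
              MeasurableSpace.comap (fun ω => (Mdl.X ω, Mdl.D ω)) inferInstance]) ω) =ᵐ[Mdl.P]
          fun ω => ((if Mdl.D ω = d then (1:ℝ) else 0) * Mdl.u (Mdl.X ω) d m) *
            Mdl.f m (Mdl.X ω) (Mdl.D ω) := by
        refine (b3.symm).trans ?_
        refine (condExp_congr_ae b4).trans ?_
        refine b5.trans ?_
        refine (condExp_congr_ae (b6.trans b7)).trans ?_
        refine b8.trans ?_
        filter_upwards [b2] with ω e2
        rw [e2]
      exact (l1.symm).trans r1
    have hfne : ∀ᵐ ω ∂Mdl.P, Mdl.f m (Mdl.X ω) (Mdl.D ω) ≠ 0 := by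
      filter_upwards [hfD_bdd] with ω h
      exact ne_of_gt (lt_of_lt_of_le Mdl.hρ1 h)
    exact ae_cancel_right hfne lhs_chain
  ------------------------------------------------------------------
  -- Stage 2
  ------------------------------------------------------------------
  have c1 := condexp_mul_ite_of_condIndepFun hmX hYpot_meas hYpot_int Mdl.hD (Mdl.hYD d m) d
  have hintYpotID : Integrable (fun ω => Mdl.Ypot d m ω * (if Mdl.D ω = d then (1:ℝ) else 0))
      Mdl.P :=
    (hYpot_int.bdd_mul hID_meas.aestronglyMeasurable hID_bdd).congr
      (Filter.Eventually.of_forall fun ω => mul_comm _ _)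
  have hintIDYpot : Integrable (fun ω => (if Mdl.D ω = d then (1:ℝ) else 0) * Mdl.Ypot d m ω)
      Mdl.P := hYpot_int.bdd_mul hID_meas.aestronglyMeasurable hID_bdd
  have c2 := (condExp_condExp_of_le hle1 hmXD (μ := Mdl.P)
    (f := fun ω => Mdl.Ypot d m ω * (if Mdl.D ω = d then (1:ℝ) else 0))).symm
  have c3inner : Mdl.P[(fun ω => Mdl.Ypot d m ω * (if Mdl.D ω = d then (1:ℝ) else 0))|
        MeasurableSpace.comap (fun ω => (Mdl.X ω, Mdl.D ω)) inferInstance] =ᵐ[Mdl.P]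
      fun ω => Mdl.u (Mdl.X ω) d m * (if Mdl.D ω = d then (1:ℝ) else 0) := by
    refine (condExp_congr_ae (Filter.Eventually.of_forall fun ω => mul_comm _ _)).trans ?_
    refine (condexp_pullout (μ := Mdl.P) hsmID hintIDYpot hYpot_int).trans ?_
    filter_upwards [stage1] with ω e
    rw [e]; ring
  have hintuID : Integrable (fun ω => Mdl.u (Mdl.X ω) d m * (if Mdl.D ω = d then (1:ℝ) else 0))
      Mdl.P :=
    (hu_int.bdd_mul hID_meas.aestronglyMeasurable hID_bdd).congr
      (Filter.Eventually.of_forall fun ω => mul_comm _ _)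
  have c4 := condexp_pullout (μ := Mdl.P) hsmuX hintuID hID_int
  have c5 := (Mdl.ha_eq d).symm
  -- combine
  have key : (fun ω => (Mdl.P[Mdl.Ypot d m|MeasurableSpace.comap Mdl.X inferInstance]) ω *
        Mdl.a d (Mdl.X ω)) =ᵐ[Mdl.P]
      fun ω => Mdl.u (Mdl.X ω) d m * Mdl.a d (Mdl.X ω) := by
    have t1 : Mdl.P[(fun ω => Mdl.Ypot d m ω * (if Mdl.D ω = d then (1:ℝ) else 0))|
          MeasurableSpace.comap Mdl.X inferInstance] =ᵐ[Mdl.P]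
        fun ω => Mdl.u (Mdl.X ω) d m * Mdl.a d (Mdl.X ω) := by
      refine c2.trans ?_
      refine (condExp_congr_ae c3inner).trans ?_
      refine c4.trans ?_
      filter_upwards [c5] with ω e
      rw [e]
    have t2 := (c1.symm).trans t1
    filter_upwards [t2, Mdl.ha_eq d] with ω e1 e2
    rw [← e1, e2]
  refine ae_cancel_right ?_ key
  filter_upwards [Mdl.ha_bdd d] with ω h
  exact ne_of_gt (lt_trans Mdl.hc h.1)

end PotentialOutcomeModel

/-- identification of the natural mediated mean: under consistency,
ignorability, and positivity, `E[Y(d, M(d'))] = E[Σ_m μ(X,d,m) f(m|X,d')] = φ(d,d')`. -/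
theorem identification_mediated_mean {Ω 𝓧 : Type} [MeasurableSpace Ω] [StandardBorelSpace Ω]
    [MeasurableSpace 𝓧] {c Cbar ρlo ρhi : ℝ}
    (Mdl : PotentialOutcomeModel Ω 𝓧 c Cbar ρlo ρhi) (d d' : Fin 2) :
    (∫ ω, Mdl.Ypot d (Mdl.Mpot d' ω) ω ∂Mdl.P) =
      ∫ ω, (∑ m : Fin 2, Mdl.u (Mdl.X ω) d m * Mdl.f m (Mdl.X ω) d') ∂Mdl.P := by
  haveI := Mdl.isProb
  have hmX : MeasurableSpace.comap Mdl.X inferInstance ≤ _ := Mdl.hX.comap_le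
  have hI_meas : ∀ m : Fin 2, Measurable (fun ω => if Mdl.Mpot d' ω = m then (1:ℝ) else 0) :=
    fun m => (measurable_ite_fin2 m).comp (Mdl.hMpot d')
  have hI_bdd : ∀ m : Fin 2, ∀ᵐ ω ∂Mdl.P, ‖(if Mdl.Mpot d' ω = m then (1:ℝ) else 0)‖ ≤ 1 :=
    fun m => Filter.Eventually.of_forall fun ω => by by_cases h : Mdl.Mpot d' ω = m <;> simp [h]
  have int_m : ∀ m : Fin 2, Integrable (fun ω => Mdl.Ypot d m ω *
      (if Mdl.Mpot d' ω = m then (1:ℝ) else 0)) Mdl.P := fun m =>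
    ((Mdl.hYpot_int d m).bdd_mul (hI_meas m).aestronglyMeasurable (hI_bdd m)).congr
      (Filter.Eventually.of_forall fun ω => mul_comm _ _)
  have int_uf : ∀ m : Fin 2, Integrable (fun ω => Mdl.u (Mdl.X ω) d m *
      Mdl.f m (Mdl.X ω) d') Mdl.P := by
    intro m
    have hfb : ∀ᵐ ω ∂Mdl.P, ‖Mdl.f m (Mdl.X ω) d'‖ ≤ ρhi := by
      filter_upwards [Mdl.hf_bdd m d'] with ω h
      rw [Real.norm_eq_abs, abs_of_nonneg (le_trans Mdl.hρ1.le h.1)]; exact h.2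
    exact ((Mdl.u_int d m).bdd_mul ((Mdl.hf_meas m d').comp Mdl.hX).aestronglyMeasurable
      hfb).congr (Filter.Eventually.of_forall fun ω => mul_comm _ _)
  have keym : ∀ m : Fin 2, ∫ ω, Mdl.Ypot d m ω * (if Mdl.Mpot d' ω = m then (1:ℝ) else 0) ∂Mdl.P
      = ∫ ω, Mdl.u (Mdl.X ω) d m * Mdl.f m (Mdl.X ω) d' ∂Mdl.P := by
    intro m
    rw [← integral_condExp hmX (f := fun ω => Mdl.Ypot d m ω *
      (if Mdl.Mpot d' ω = m then (1:ℝ) else 0))]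
    refine integral_congr_ae ?_
    have h1 := condexp_mul_ite_of_condIndepFun hmX (Mdl.hYpot_meas d m) (Mdl.hYpot_int d m)
      (Mdl.hMpot d') (Mdl.hcross d d' m) m
    refine h1.trans ?_
    filter_upwards [Mdl.stepB d m, Mdl.stepA m d'] with ω e1 e2
    rw [e1, e2]
  have lhs : ∫ ω, Mdl.Ypot d (Mdl.Mpot d' ω) ω ∂Mdl.P =
      ∑ m : Fin 2, ∫ ω, Mdl.Ypot d m ω * (if Mdl.Mpot d' ω = m then (1:ℝ) else 0) ∂Mdl.P := by
    rw [← integral_finset_sum Finset.univ (fun m _ => int_m m)]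
    refine integral_congr_ae (Filter.Eventually.of_forall fun ω => ?_)
    have h2 : Mdl.Mpot d' ω = 0 ∨ Mdl.Mpot d' ω = 1 := by omega
    rcases h2 with h | h <;> simp [Fin.sum_univ_two, h]
  have rhs : ∫ ω, (∑ m : Fin 2, Mdl.u (Mdl.X ω) d m * Mdl.f m (Mdl.X ω) d') ∂Mdl.P =
      ∑ m : Fin 2, ∫ ω, Mdl.u (Mdl.X ω) d m * Mdl.f m (Mdl.X ω) d' ∂Mdl.P :=
    integral_finset_sum Finset.univ (fun m _ => int_uf m)
  rw [lhs, rhs]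
  exact Finset.sum_congr rfl fun m _ => keym m
end
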